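/- arXiv:2012.10363 — 9 statements merged into one kernel-verified Lean document; each statement's English description precedes it below -/
import Mathlib

section
/- Let b, m, s be integers with b ≥ s ≥ 1 and m ≥ 1, and let P be a (0,m,s)-net in base b with n = b^m points. Let J ⊆ {1,…,s} be nonempty and let k, d ∈ ℕ^s satisfy m ≥ |k| + |d|_J + 2|J|, where |k| := Σ_{j=1}^s k_j and |d|_J := Σ_{j∈J} d_j. Then for every point u_i of P, the weighted sum of counting numbers relative to u_i satisfies tilde-m_b(k,d,J;P) ≤ (b^m/(b^m−1)) · (2^{|J|} − b^{|k|+|d|_J+2|J|−m})/2^{|J|} ≤ 1. -/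
open Finset
open scoped Classical

/-- `γ_b(x,y)`: the exact number of initial common base-`b` digits of `x, y ∈ [0,1)`,
i.e. the unique `i ≥ 0` with `⌊b^i x⌋ = ⌊b^i y⌋` but `⌊b^{i+1} x⌋ ≠ ⌊b^{i+1} y⌋`
when `x ≠ y`, and `∞` when `x = y`. -/
noncomputable def gammaB (b : ℕ) (x y : ℝ) : ℕ∞ :=
  if x = y then ⊤
  else ((sInf {i : ℕ | ⌊(b : ℝ) ^ i * x⌋ = ⌊(b : ℝ) ^ i * y⌋ ∧
      ⌊(b : ℝ) ^ (i + 1) * x⌋ ≠ ⌊(b : ℝ) ^ (i + 1) * y⌋} : ℕ) : ℕ∞)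

/-- A `(0,m,s)`-net in base `b`: `n = b^m` points of `[0,1)^s` such that every elementary
interval `∏_j [a_j b^{−k_j}, (a_j+1) b^{−k_j})` with `Σ_j k_j = m` and `0 ≤ a_j < b^{k_j}`
contains exactly one point. -/
def IsNet (b m s : ℕ) (P : Fin (b ^ m) → Fin s → ℝ) : Prop :=
  (∀ i j, P i j ∈ Set.Ico (0 : ℝ) 1) ∧
  ∀ k a : Fin s → ℕ, (∑ j, k j) = m → (∀ j, a j < b ^ k j) →
    ∃! i : Fin (b ^ m), ∀ j, P i j ∈
      Set.Ico ((a j : ℝ) * (b : ℝ) ^ (-(k j : ℤ))) (((a j : ℝ) + 1) * (b : ℝ) ^ (-(k j : ℤ)))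

/-- The counting number `m_b(k,d,c,J,I;P)` relative to the point `u_i`: the number of
indices `ℓ ≠ i` with `γ_b(u_{i,j},u_{ℓ,j}) ≥ k_j+d_j+c` for `j ∈ I`,
`γ_b(u_{i,j},u_{ℓ,j}) ≥ k_j` for `j ∈ Jᶜ`, and `γ_b(u_{i,j},u_{ℓ,j}) = d_j` for `j ∈ J ∩ Iᶜ`. -/
noncomputable def countNum (b : ℕ) {n s : ℕ} (P : Fin n → Fin s → ℝ) (i : Fin n)
    (k d : Fin s → ℕ) (c : ℕ) (J I : Finset (Fin s)) : ℕ :=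
  (Finset.univ.filter fun l : Fin n => l ≠ i ∧
    (∀ j ∈ I, ((k j + d j + c : ℕ) : ℕ∞) ≤ gammaB b (P i j) (P l j)) ∧
    (∀ j ∉ J, ((k j : ℕ) : ℕ∞) ≤ gammaB b (P i j) (P l j)) ∧
    (∀ j ∈ J \ I, gammaB b (P i j) (P l j) = ((d j : ℕ) : ℕ∞))).card

/-- The weighted sum of counting numbers
`m̃_b(k,d,J;P) = 2^{−|J|} Σ_{I ⊆ J} b^{|k|_{I*}+|d|_J+|J|+|I|} (b−1)^{|I|−|J|}
  m_b(k,d,2,J,I;P)/(n−1)`, with `I* = I ∪ Jᶜ`, relative to `u_i`. -/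
noncomputable def mTilde (b : ℕ) {n s : ℕ} (P : Fin n → Fin s → ℝ) (i : Fin n)
    (k d : Fin s → ℕ) (J : Finset (Fin s)) : ℝ :=
  (2 : ℝ) ^ (-(J.card : ℤ)) * ∑ I ∈ J.powerset,
    (b : ℝ) ^ ((∑ j ∈ I ∪ Jᶜ, k j) + (∑ j ∈ J, d j) + J.card + I.card) *
    ((b : ℝ) - 1) ^ ((I.card : ℤ) - (J.card : ℤ)) *
    ((countNum b P i k d 2 J I : ℝ) / ((n : ℝ) - 1))

/-- floor division for reals -/
lemma floor_div_nat_real (a : ℝ) (n : ℕ) (hn : 0 < n) : ⌊a / n⌋ = ⌊a⌋ / n := by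
  have hn' : (0:ℝ) < n := by exact_mod_cast hn
  have hnz : (0:ℤ) < (n:ℤ) := by exact_mod_cast hn
  set q := ⌊a⌋ / (n:ℤ) with hq
  set r := ⌊a⌋ % (n:ℤ) with hr
  have hdm : (n:ℤ) * q + r = ⌊a⌋ := Int.mul_ediv_add_emod ⌊a⌋ n
  have hr0 : 0 ≤ r := Int.emod_nonneg _ (by omega)
  have hrn : r < n := Int.emod_lt_of_pos _ hnz
  rw [Int.floor_eq_iff]
  constructor
  · rw [le_div_iff₀ hn']
    have h1 : ((n:ℤ) * q : ℝ) ≤ ⌊a⌋ := by exact_mod_cast (by omega : (n:ℤ)*q ≤ ⌊a⌋)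
    have := Int.floor_le a
    push_cast at h1 ⊢
    nlinarith
  · rw [div_lt_iff₀ hn']
    have h2 : ⌊a⌋ + 1 ≤ (n:ℤ)*q + n := by omega
    have h1 : (⌊a⌋ : ℝ) + 1 ≤ ((n:ℤ) * (q+1) : ℝ) := by
      exact_mod_cast (by linarith [h2] : ⌊a⌋ + 1 ≤ (n:ℤ)*(q+1))
    have := Int.lt_floor_add_one a
    push_cast at h1 ⊢
    nlinarith

lemma floor_pow_div {b : ℕ} (hb : 1 ≤ b) (x : ℝ) (i j : ℕ) :
    ⌊(b:ℝ) ^ i * x⌋ = ⌊(b:ℝ) ^ (i + j) * x⌋ / (b ^ j : ℕ) := by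
  have hbj : 0 < b ^ j := Nat.pow_pos hb
  have : (b:ℝ) ^ i * x = ((b:ℝ) ^ (i+j) * x) / ((b ^ j : ℕ) : ℝ) := by
    have hbj' : ((b ^ j : ℕ) : ℝ) ≠ 0 := by positivity
    field_simp
    push_cast
    ring
  rw [this, floor_div_nat_real _ _ hbj]

lemma floor_pow_agree {b : ℕ} (hb : 1 ≤ b) {x y : ℝ} {i j : ℕ}
    (h : ⌊(b:ℝ) ^ (i + j) * x⌋ = ⌊(b:ℝ) ^ (i + j) * y⌋) :
    ⌊(b:ℝ) ^ i * x⌋ = ⌊(b:ℝ) ^ i * y⌋ := by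
  rw [floor_pow_div hb x i j, floor_pow_div hb y i j, h]

lemma gamma_le_iff {b : ℕ} (hb : 2 ≤ b) {x y : ℝ} (hx : x ∈ Set.Ico (0:ℝ) 1)
    (hy : y ∈ Set.Ico (0:ℝ) 1) (t : ℕ) :
    ((t:ℕ∞) ≤ gammaB b x y) ↔ ⌊(b:ℝ) ^ t * x⌋ = ⌊(b:ℝ) ^ t * y⌋ := by
  by_cases hxy : x = y
  · simp [gammaB, hxy]
  have hb1 : 1 ≤ b := by omega
  set A : ℕ → Prop := fun i => ⌊(b:ℝ) ^ i * x⌋ = ⌊(b:ℝ) ^ i * y⌋ with hA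
  have hA0 : A 0 := by
    simp only [hA, pow_zero, one_mul]
    rw [Int.floor_eq_zero_iff.2 (by simpa using hx), Int.floor_eq_zero_iff.2 (by simpa using hy)]
  have hAmono : ∀ {i i'}, i ≤ i' → A i' → A i := by
    intro i i' hii h
    obtain ⟨j, rfl⟩ := Nat.exists_eq_add_of_le hii
    exact floor_pow_agree hb1 h
  have hex : ∃ i, ¬ A i := by
    have hxy' : x - y ≠ 0 := sub_ne_zero.2 hxy
    have habs : 0 < |x - y| := abs_pos.2 hxy'
    obtain ⟨i, hi⟩ := pow_unbounded_of_one_lt (1 / |x - y|) (by exact_mod_cast hb : (1:ℝ) < b)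
    refine ⟨i, fun h => ?_⟩
    have h1 : |(b:ℝ)^i * x - (b:ℝ)^i * y| < 1 := by
      rw [hA] at h
      have := Int.abs_sub_lt_one_of_floor_eq_floor h
      exact this
    rw [← mul_sub, abs_mul, abs_of_pos (by positivity : (0:ℝ) < (b:ℝ)^i)] at h1
    rw [div_lt_iff₀ habs] at hi
    nlinarith
  set B : Set ℕ := {i | ¬ A i} with hB
  have hBne : B.Nonempty := hex
  set g := sInf B with hg
  have hgB : ¬ A g := Nat.sInf_mem hBne
  have hg1 : 1 ≤ g := by
    rcases Nat.eq_zero_or_pos g with h | h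
    · exact absurd (h ▸ hA0) hgB
    · exact h
  have hiff : ∀ i, A i ↔ i < g := by
    intro i
    constructor
    · intro h
      by_contra hlt
      push_neg at hlt
      exact hgB (hAmono hlt h)
    · intro h
      by_contra hni
      have h2 : sInf B ≤ i := Nat.sInf_le hni
      omega
  have hS : {i : ℕ | ⌊(b : ℝ) ^ i * x⌋ = ⌊(b : ℝ) ^ i * y⌋ ∧
      ⌊(b : ℝ) ^ (i + 1) * x⌋ ≠ ⌊(b : ℝ) ^ (i + 1) * y⌋} = {g - 1} := by
    ext i
    simp only [Set.mem_setOf_eq, Set.mem_singleton_iff]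
    constructor
    · rintro ⟨h1, h2⟩
      have := (hiff i).1 h1
      have h3 : ¬ (i + 1 < g) := fun hc => h2 ((hiff (i+1)).2 hc)
      omega
    · rintro rfl
      refine ⟨(hiff _).2 (by omega), fun hc => ?_⟩
      have := (hiff (g - 1 + 1)).1 hc
      omega
  rw [gammaB, if_neg hxy, hS, csInf_singleton, Nat.cast_le]
  rw [show (⌊(b:ℝ)^t * x⌋ = ⌊(b:ℝ)^t * y⌋) ↔ A t from Iff.rfl, hiff t]
  omega

lemma mem_Ico_iff_floor {b : ℕ} (hb : 1 ≤ b) (x : ℝ) (t a : ℕ) :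
    x ∈ Set.Ico ((a:ℝ) * (b:ℝ) ^ (-(t:ℤ))) (((a:ℝ) + 1) * (b:ℝ) ^ (-(t:ℤ))) ↔
      ⌊(b:ℝ) ^ t * x⌋ = (a : ℤ) := by
  have hc : (0:ℝ) < (b:ℝ) ^ t := by positivity
  have hz : (b:ℝ) ^ (-(t:ℤ)) = ((b:ℝ) ^ t)⁻¹ := by
    rw [zpow_neg, zpow_natCast]
  rw [hz, Set.mem_Ico, Int.floor_eq_iff]
  constructor
  · rintro ⟨h1, h2⟩
    constructor
    · push_cast
      calc (a:ℝ) = (a:ℝ) * ((b:ℝ)^t)⁻¹ * (b:ℝ)^t := by field_simp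
        _ ≤ x * (b:ℝ)^t := by exact mul_le_mul_of_nonneg_right h1 (le_of_lt hc)
        _ = (b:ℝ)^t * x := mul_comm _ _
    · push_cast
      calc (b:ℝ)^t * x = x * (b:ℝ)^t := mul_comm _ _
        _ < ((a:ℝ)+1) * ((b:ℝ)^t)⁻¹ * (b:ℝ)^t := by exact mul_lt_mul_of_pos_right h2 hc
        _ = (a:ℝ) + 1 := by field_simp
  · rintro ⟨h1, h2⟩
    push_cast at h1 h2
    constructor
    · rw [mul_inv_le_iff₀ hc]
      linarith [h1]
    · rw [show ((a:ℝ)+1) * ((b:ℝ)^t)⁻¹ = ((a:ℝ)+1)/((b:ℝ)^t) by ring, lt_div_iff₀ hc]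
      linarith [h2]

lemma net_count {b m s : ℕ} (hb : 2 ≤ b) (hs : 1 ≤ s)
    {P : Fin (b ^ m) → Fin s → ℝ} (hP : IsNet b m s P) (i : Fin (b ^ m))
    (t : Fin s → ℕ) (ht : ∑ j, t j ≤ m) :
    (univ.filter fun l : Fin (b ^ m) =>
        ∀ j, ⌊(b:ℝ) ^ (t j) * P l j⌋ = ⌊(b:ℝ) ^ (t j) * P i j⌋).card = b ^ (m - ∑ j, t j) := by
  have hb1 : 1 ≤ b := by omega
  set m' := m - ∑ j, t j with hm'
  set n : ℕ := b ^ m' with hn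
  have hnpos : 0 < n := Nat.pow_pos hb1
  set j0 : Fin s := ⟨0, hs⟩ with hj0
  -- digits of the reference point
  set a : Fin s → ℕ := fun j => (⌊(b:ℝ) ^ (t j) * P i j⌋).toNat with ha
  have haZ : ∀ j, (a j : ℤ) = ⌊(b:ℝ) ^ (t j) * P i j⌋ := by
    intro j
    have h0 : (0:ℤ) ≤ ⌊(b:ℝ) ^ (t j) * P i j⌋ := by
      apply Int.floor_nonneg.2
      have := (hP.1 i j).1
      positivity
    simp [ha, Int.toNat_of_nonneg h0]
  have halt : ∀ j, a j < b ^ t j := by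
    intro j
    have h1 : ⌊(b:ℝ) ^ (t j) * P i j⌋ < (b ^ t j : ℤ) := by
      apply Int.floor_lt.2
      push_cast
      have h2 := (hP.1 i j).2
      have h3 : (0:ℝ) < (b:ℝ) ^ t j := by positivity
      nlinarith
    have h2 : (a j : ℤ) < (b:ℤ) ^ t j := haZ j ▸ h1
    exact_mod_cast h2
  -- refined resolution vector
  set k' : Fin s → ℕ := Function.update t j0 (t j0 + m') with hk'
  have hk'sum : ∑ j, k' j = m := by
    rw [hk', Finset.sum_update_of_mem (Finset.mem_univ j0)]
    have h := Finset.sum_eq_sum_sdiff_singleton_add (Finset.mem_univ j0) t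
    omega
  -- general floor level-change facts, for z ∈ [0,1)
  have key1 : ∀ z : ℝ, 0 ≤ z → ⌊(b:ℝ) ^ (t j0) * z⌋ = (a j0 : ℤ) →
      (a j0 : ℤ) * n ≤ ⌊(b:ℝ) ^ (t j0 + m') * z⌋ ∧
      ⌊(b:ℝ) ^ (t j0 + m') * z⌋ < ((a j0 : ℤ) + 1) * n := by
    intro z hz hfl
    have hdiv : (a j0 : ℤ) = ⌊(b:ℝ) ^ (t j0 + m') * z⌋ / (n : ℤ) := by
      rw [← hfl, floor_pow_div hb1 z (t j0) m']
      try norm_cast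
    have hnZ : (0:ℤ) < (n:ℤ) := by exact_mod_cast hnpos
    constructor
    · exact (Int.le_ediv_iff_mul_le hnZ).1 hdiv.le
    · exact (Int.ediv_lt_iff_lt_mul hnZ).1 (by omega)
  have key2 : ∀ (z : ℝ) (r : ℕ), r < n →
      ⌊(b:ℝ) ^ (t j0 + m') * z⌋ = (a j0 : ℤ) * n + r →
      ⌊(b:ℝ) ^ (t j0) * z⌋ = (a j0 : ℤ) := by
    intro z r hr hfl
    have hnZ : (0:ℤ) < (n:ℤ) := by exact_mod_cast hnpos
    have h0 : ((a j0 : ℤ) * n + r) / (n:ℤ) = a j0 := by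
      rw [add_comm, Int.add_mul_ediv_right _ _ (by omega : (n:ℤ) ≠ 0)]
      have : (r:ℤ) / (n:ℤ) = 0 := Int.ediv_eq_zero_of_lt (by omega) (by exact_mod_cast hr)
      omega
    rw [floor_pow_div hb1 z (t j0) m', hfl]
    exact_mod_cast h0
  -- the refined digit vectors
  set ar : ℕ → Fin s → ℕ := fun r => Function.update a j0 (a j0 * n + r) with har
  have harlt : ∀ r, r < n → ∀ j, ar r j < b ^ k' j := by
    intro r hr j
    by_cases hj : j = j0
    · simp only [har, hk', hj, Function.update_self]
      have h1 : a j0 + 1 ≤ b ^ t j0 := halt j0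
      calc a j0 * n + r < a j0 * n + n := by omega
        _ = (a j0 + 1) * n := by ring
        _ ≤ b ^ t j0 * n := Nat.mul_le_mul_right n h1
        _ = b ^ (t j0 + m') := by rw [hn, pow_add]
    · simp only [har, hk', Function.update_of_ne hj]
      exact halt j
  -- predicate describing membership in the refined interval
  have hmem_iff : ∀ (r : ℕ) (l : Fin (b ^ m)),
      (∀ j, P l j ∈ Set.Ico ((ar r j : ℝ) * (b:ℝ) ^ (-(k' j : ℤ)))
        (((ar r j : ℝ) + 1) * (b:ℝ) ^ (-(k' j : ℤ)))) ↔
      (∀ j, ⌊(b:ℝ) ^ (k' j) * P l j⌋ = (ar r j : ℤ)) := by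
    intro r l
    exact forall_congr' fun j => mem_Ico_iff_floor hb1 (P l j) (k' j) (ar r j)
  -- refined-floor predicate vs coarse filter
  have hQtoC : ∀ (r : ℕ), r < n → ∀ l : Fin (b ^ m),
      (∀ j, ⌊(b:ℝ) ^ (k' j) * P l j⌋ = (ar r j : ℤ)) →
      (∀ j, ⌊(b:ℝ) ^ (t j) * P l j⌋ = ⌊(b:ℝ) ^ (t j) * P i j⌋) ∧
        ⌊(b:ℝ) ^ (t j0 + m') * P l j0⌋ = (a j0 : ℤ) * n + r := by
    intro r hr l hQ
    have hj0fl : ⌊(b:ℝ) ^ (t j0 + m') * P l j0⌋ = (a j0 : ℤ) * n + r := by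
      have := hQ j0
      simp only [har, hk', Function.update_self] at this
      rw [this]; push_cast; ring
    refine ⟨fun j => ?_, hj0fl⟩
    by_cases hj : j = j0
    · rw [hj, key2 (P l j0) r hr hj0fl, haZ j0]
    · have := hQ j
      simp only [har, hk', Function.update_of_ne hj] at this
      rw [this, haZ j]
  have hCtoQ : ∀ l : Fin (b ^ m),
      (∀ j, ⌊(b:ℝ) ^ (t j) * P l j⌋ = ⌊(b:ℝ) ^ (t j) * P i j⌋) →
      ∃ r : ℕ, r < n ∧ ⌊(b:ℝ) ^ (t j0 + m') * P l j0⌋ = (a j0 : ℤ) * n + r ∧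
        (∀ j, ⌊(b:ℝ) ^ (k' j) * P l j⌋ = (ar r j : ℤ)) := by
    intro l hC
    have hz : (0:ℝ) ≤ P l j0 := (hP.1 l j0).1
    have hfl0 : ⌊(b:ℝ) ^ (t j0) * P l j0⌋ = (a j0 : ℤ) := by rw [hC j0, haZ j0]
    obtain ⟨h1, h2⟩ := key1 (P l j0) hz hfl0
    set q := ⌊(b:ℝ) ^ (t j0 + m') * P l j0⌋ with hqdef
    have hnZ : (0:ℤ) < (n:ℤ) := by exact_mod_cast hnpos
    have hp : ((a j0:ℤ)+1) * (n:ℤ) = (a j0:ℤ) * n + n := by ring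
    refine ⟨(q - (a j0 : ℤ) * n).toNat, ?_, ?_, ?_⟩
    · omega
    · omega
    · intro j
      by_cases hj : j = j0
      · subst hj
        simp only [har, hk', Function.update_self]
        push_cast
        omega
      · simp only [har, hk', Function.update_of_ne hj]
        rw [hC j, haZ j]
  -- now the bijection
  rw [← Finset.card_range n]
  apply Finset.card_bij
    (i := fun l _ => (⌊(b:ℝ) ^ (t j0 + m') * P l j0⌋ - (a j0 : ℤ) * n).toNat)
  · intro l hl
    simp only [Finset.mem_filter, Finset.mem_univ, true_and] at hl
    obtain ⟨r, hr, hfl, _⟩ := hCtoQ l hl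
    rw [Finset.mem_range]
    omega
  · intro l1 hl1 l2 hl2 heq
    simp only [Finset.mem_filter, Finset.mem_univ, true_and] at hl1 hl2
    obtain ⟨r1, hr1, hfl1, hQ1⟩ := hCtoQ l1 hl1
    obtain ⟨r2, hr2, hfl2, hQ2⟩ := hCtoQ l2 hl2
    have hr12 : r1 = r2 := by omega
    subst hr12
    obtain ⟨w, -, hw⟩ := hP.2 k' (ar r1) hk'sum (harlt r1 hr1)
    have e1 := hw l1 ((hmem_iff r1 l1).2 hQ1)
    have e2 := hw l2 ((hmem_iff r1 l2).2 hQ2)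
    rw [e1, e2]
  · intro r hr
    rw [Finset.mem_range] at hr
    obtain ⟨w, hwmem, -⟩ := hP.2 k' (ar r) hk'sum (harlt r hr)
    have hQ := (hmem_iff r w).1 hwmem
    obtain ⟨hC, hfl⟩ := hQtoC r hr w hQ
    refine ⟨w, by simp only [Finset.mem_filter, Finset.mem_univ, true_and]; exact hC, ?_⟩
    rw [hfl]
    omega

lemma enat_split (g : ℕ∞) (t : ℕ) :
    ((t:ℕ∞) ≤ g) ↔ (g = (t:ℕ∞) ∨ (((t+1:ℕ)):ℕ∞) ≤ g) := by
  induction g using ENat.recTopCoe with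
  | top => simp
  | coe n =>
    rw [Nat.cast_le, Nat.cast_le, Nat.cast_inj]
    omega

lemma gammaB_self (b : ℕ) (x : ℝ) : gammaB b x x = ⊤ := by simp [gammaB]

lemma N_card {b m s : ℕ} (hb : 2 ≤ b) (hs : 1 ≤ s) {P : Fin (b ^ m) → Fin s → ℝ}
    (hP : IsNet b m s P) (i : Fin (b ^ m)) :
    ∀ (E : Finset (Fin s)) (t : Fin s → ℕ), (∑ j, t j) + E.card ≤ m →
    ((univ.filter fun l : Fin (b ^ m) => l ≠ i ∧
        (∀ j ∉ E, ((t j : ℕ):ℕ∞) ≤ gammaB b (P i j) (P l j)) ∧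
        (∀ j ∈ E, gammaB b (P i j) (P l j) = ((t j : ℕ):ℕ∞))).card : ℤ)
      = (b:ℤ) ^ (m - (∑ j, t j) - E.card) * ((b:ℤ) - 1) ^ E.card
        - (if E = ∅ then 1 else 0) := by
  intro E
  induction E using Finset.induction_on with
  | empty =>
    intro t ht
    simp only [Finset.card_empty, Nat.add_zero] at ht
    have hD : ∀ l : Fin (b ^ m),
        ((∀ j ∉ (∅ : Finset (Fin s)), ((t j : ℕ):ℕ∞) ≤ gammaB b (P i j) (P l j)) ∧
         (∀ j ∈ (∅ : Finset (Fin s)), gammaB b (P i j) (P l j) = ((t j : ℕ):ℕ∞))) ↔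
        (∀ j, ⌊(b:ℝ) ^ (t j) * P l j⌋ = ⌊(b:ℝ) ^ (t j) * P i j⌋) := by
      intro l
      simp only [Finset.notMem_empty]
      constructor
      · rintro ⟨h1, -⟩ j
        exact ((gamma_le_iff hb (hP.1 i j) (hP.1 l j) (t j)).1 (h1 j (by simp))).symm
      · intro h
        exact ⟨fun j _ => (gamma_le_iff hb (hP.1 i j) (hP.1 l j) (t j)).2 (h j).symm,
          fun j hj => absurd hj (by simp)⟩
    have heq : (univ.filter fun l : Fin (b ^ m) => l ≠ i ∧
        (∀ j ∉ (∅ : Finset (Fin s)), ((t j : ℕ):ℕ∞) ≤ gammaB b (P i j) (P l j)) ∧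
        (∀ j ∈ (∅ : Finset (Fin s)), gammaB b (P i j) (P l j) = ((t j : ℕ):ℕ∞)))
        = (univ.filter fun l : Fin (b ^ m) =>
            ∀ j, ⌊(b:ℝ) ^ (t j) * P l j⌋ = ⌊(b:ℝ) ^ (t j) * P i j⌋).erase i := by
      ext l
      simp only [Finset.mem_filter, Finset.mem_erase, Finset.mem_univ, true_and]
      rw [hD l]
    rw [heq, Finset.card_erase_of_mem (by simp [Finset.mem_filter]), net_count hb hs hP i t ht]
    have hbm : 1 ≤ b ^ (m - ∑ j, t j) := Nat.one_le_pow _ _ (by omega)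
    simp only [Finset.card_empty, Nat.sub_zero, pow_zero, mul_one, if_pos rfl]
    push_cast [hbm]
    push_cast
    rfl
  | @insert j0 E hj0E ih =>
    intro t ht
    rw [Finset.card_insert_of_notMem hj0E] at ht
    set t' := Function.update t j0 (t j0 + 1) with ht'
    have hsum' : ∑ j, t' j = (∑ j, t j) + 1 := by
      rw [ht', Finset.sum_update_of_mem (Finset.mem_univ j0)]
      have h := Finset.sum_eq_sum_sdiff_singleton_add (Finset.mem_univ j0) t
      omega
    have hsplit : (univ.filter fun l : Fin (b ^ m) => l ≠ i ∧
          (∀ j ∉ E, ((t j : ℕ):ℕ∞) ≤ gammaB b (P i j) (P l j)) ∧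
          (∀ j ∈ E, gammaB b (P i j) (P l j) = ((t j : ℕ):ℕ∞)))
        = (univ.filter fun l : Fin (b ^ m) => l ≠ i ∧
            (∀ j ∉ insert j0 E, ((t j : ℕ):ℕ∞) ≤ gammaB b (P i j) (P l j)) ∧
            (∀ j ∈ insert j0 E, gammaB b (P i j) (P l j) = ((t j : ℕ):ℕ∞)))
          ∪ (univ.filter fun l : Fin (b ^ m) => l ≠ i ∧
            (∀ j ∉ E, ((t' j : ℕ):ℕ∞) ≤ gammaB b (P i j) (P l j)) ∧
            (∀ j ∈ E, gammaB b (P i j) (P l j) = ((t' j : ℕ):ℕ∞))) := by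
      ext l
      simp only [Finset.mem_filter, Finset.mem_union, Finset.mem_univ, true_and,
        Finset.mem_insert]
      constructor
      · rintro ⟨hne, h1, h2⟩
        rcases (enat_split (gammaB b (P i j0) (P l j0)) (t j0)).1 (h1 j0 hj0E) with h | h
        · left
          refine ⟨hne, fun j hj => h1 j (fun hjE => hj (Or.inr hjE)), fun j hj => ?_⟩
          rcases hj with rfl | hj
          · exact h
          · exact h2 j hj
        · right
          refine ⟨hne, fun j hj => ?_, fun j hj => ?_⟩
          · by_cases hjj : j = j0
            · subst hjj
              rwa [ht', Function.update_self]
            · rw [ht', Function.update_of_ne hjj]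
              exact h1 j hj
          · have hjj : j ≠ j0 := fun hc => hj0E (hc ▸ hj)
            rw [ht', Function.update_of_ne hjj]
            exact h2 j hj
      · rintro (⟨hne, h1, h2⟩ | ⟨hne, h1, h2⟩)
        · refine ⟨hne, fun j hj => ?_, fun j hj => h2 j (Or.inr hj)⟩
          by_cases hjj : j = j0
          · subst hjj
            exact le_of_eq (h2 j (Or.inl rfl)).symm
          · exact h1 j (by simp [hjj, hj])
        · refine ⟨hne, fun j hj => ?_, fun j hj => ?_⟩
          · by_cases hjj : j = j0
            · subst hjj
              refine le_trans ?_ (h1 j hj)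
              have h3 : t' j = t j + 1 := by rw [ht', Function.update_self]
              rw [h3]
              exact Nat.cast_le.2 (Nat.le_succ (t j))
            · have := h1 j hj
              rwa [ht', Function.update_of_ne hjj] at this
          · have hjj : j ≠ j0 := fun hc => hj0E (hc ▸ hj)
            have := h2 j hj
            rwa [ht', Function.update_of_ne hjj] at this
    have hdisj : Disjoint
        (univ.filter fun l : Fin (b ^ m) => l ≠ i ∧
            (∀ j ∉ insert j0 E, ((t j : ℕ):ℕ∞) ≤ gammaB b (P i j) (P l j)) ∧
            (∀ j ∈ insert j0 E, gammaB b (P i j) (P l j) = ((t j : ℕ):ℕ∞)))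
        (univ.filter fun l : Fin (b ^ m) => l ≠ i ∧
            (∀ j ∉ E, ((t' j : ℕ):ℕ∞) ≤ gammaB b (P i j) (P l j)) ∧
            (∀ j ∈ E, gammaB b (P i j) (P l j) = ((t' j : ℕ):ℕ∞))) := by
      rw [Finset.disjoint_left]
      intro l hlA hlB
      simp only [Finset.mem_filter, Finset.mem_univ, true_and] at hlA hlB
      have hA := hlA.2.2 j0 (Finset.mem_insert_self j0 E)
      have hB := hlB.2.1 j0 hj0E
      rw [hA, ht', Function.update_self] at hB
      have : t j0 + 1 ≤ t j0 := by exact_mod_cast hB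
      omega
    have hCsum : (univ.filter fun l : Fin (b ^ m) => l ≠ i ∧
          (∀ j ∉ E, ((t j : ℕ):ℕ∞) ≤ gammaB b (P i j) (P l j)) ∧
          (∀ j ∈ E, gammaB b (P i j) (P l j) = ((t j : ℕ):ℕ∞))).card
        = (univ.filter fun l : Fin (b ^ m) => l ≠ i ∧
            (∀ j ∉ insert j0 E, ((t j : ℕ):ℕ∞) ≤ gammaB b (P i j) (P l j)) ∧
            (∀ j ∈ insert j0 E, gammaB b (P i j) (P l j) = ((t j : ℕ):ℕ∞))).card
          + (univ.filter fun l : Fin (b ^ m) => l ≠ i ∧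
            (∀ j ∉ E, ((t' j : ℕ):ℕ∞) ≤ gammaB b (P i j) (P l j)) ∧
            (∀ j ∈ E, gammaB b (P i j) (P l j) = ((t' j : ℕ):ℕ∞))).card := by
      rw [hsplit, Finset.card_union_of_disjoint hdisj]
    have e1 := ih t (by omega)
    have e2 := ih t' (by rw [hsum']; omega)
    rw [hsum'] at e2
    rw [if_neg (Finset.insert_ne_empty j0 E), Finset.card_insert_of_notMem hj0E]
    set S := ∑ j, t j with hS
    have hM : m - S - E.card = (m - S - (E.card + 1)) + 1 := by omega
    have hM2 : m - (S + 1) - E.card = m - S - (E.card + 1) := by omega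
    rw [hM, pow_succ] at e1
    rw [hM2] at e2
    rw [pow_succ]
    have hAC : ((univ.filter fun l : Fin (b ^ m) => l ≠ i ∧
            (∀ j ∉ insert j0 E, ((t j : ℕ):ℕ∞) ≤ gammaB b (P i j) (P l j)) ∧
            (∀ j ∈ insert j0 E, gammaB b (P i j) (P l j) = ((t j : ℕ):ℕ∞))).card : ℤ)
        = ((univ.filter fun l : Fin (b ^ m) => l ≠ i ∧
          (∀ j ∉ E, ((t j : ℕ):ℕ∞) ≤ gammaB b (P i j) (P l j)) ∧
          (∀ j ∈ E, gammaB b (P i j) (P l j) = ((t j : ℕ):ℕ∞))).card : ℤ)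
          - ((univ.filter fun l : Fin (b ^ m) => l ≠ i ∧
            (∀ j ∉ E, ((t' j : ℕ):ℕ∞) ≤ gammaB b (P i j) (P l j)) ∧
            (∀ j ∈ E, gammaB b (P i j) (P l j) = ((t' j : ℕ):ℕ∞))).card : ℤ) := by
      rw [hCsum]
      push_cast
      ring
    rw [hAC, e1, e2]
    ring

/-- Evaluation of the counting number for a net. -/
lemma countNum_eval {b m s : ℕ} (hb : 2 ≤ b) (hs : 1 ≤ s) {P : Fin (b ^ m) → Fin s → ℝ}
    (hP : IsNet b m s P) (i : Fin (b ^ m)) (k d : Fin s → ℕ) (J I : Finset (Fin s))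
    (hIJ : I ⊆ J)
    (hsum : (∑ j ∈ I ∪ Jᶜ, k j) + (∑ j ∈ J, d j) + I.card + J.card ≤ m) :
    (countNum b P i k d 2 J I : ℤ)
      = (b:ℤ) ^ (m - ((∑ j ∈ I ∪ Jᶜ, k j) + (∑ j ∈ J, d j) + I.card + J.card))
          * ((b:ℤ) - 1) ^ (J.card - I.card)
        - (if I = J then 1 else 0) := by
  classical
  set t : Fin s → ℕ := fun j => if j ∈ I then k j + d j + 2 else if j ∈ J then d j else k j
    with htdef
  have hdisjI : Disjoint I Jᶜ := Disjoint.mono_left hIJ disjoint_compl_right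
  have hT : ∑ j, t j = (∑ j ∈ I ∪ Jᶜ, k j) + (∑ j ∈ J, d j) + 2 * I.card := by
    have h1 : ∑ j, t j = ∑ j ∈ J, t j + ∑ j ∈ Jᶜ, t j :=
      (Finset.sum_add_sum_compl J t).symm
    have h2 : ∑ j ∈ J, t j = ∑ j ∈ J \ I, t j + ∑ j ∈ I, t j :=
      (Finset.sum_sdiff hIJ).symm
    have h3 : ∑ j ∈ I, t j = ∑ j ∈ I, k j + ∑ j ∈ I, d j + 2 * I.card := by
      rw [htdef]
      rw [Finset.sum_congr rfl (fun j hj => if_pos hj)]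
      rw [Finset.sum_add_distrib, Finset.sum_add_distrib, Finset.sum_const, smul_eq_mul]
      ring
    have h4 : ∑ j ∈ J \ I, t j = ∑ j ∈ J \ I, d j := by
      apply Finset.sum_congr rfl
      intro j hj
      rw [Finset.mem_sdiff] at hj
      rw [htdef]
      simp only [if_neg hj.2, if_pos hj.1]
    have h5 : ∑ j ∈ Jᶜ, t j = ∑ j ∈ Jᶜ, k j := by
      apply Finset.sum_congr rfl
      intro j hj
      rw [Finset.mem_compl] at hj
      rw [htdef]
      simp only [if_neg (fun hc => hj (hIJ hc)), if_neg hj]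
    have h6 : ∑ j ∈ I ∪ Jᶜ, k j = ∑ j ∈ I, k j + ∑ j ∈ Jᶜ, k j :=
      Finset.sum_union hdisjI
    have h7 : ∑ j ∈ J, d j = ∑ j ∈ J \ I, d j + ∑ j ∈ I, d j :=
      (Finset.sum_sdiff hIJ).symm
    omega
  have hE : (J \ I).card = J.card - I.card := Finset.card_sdiff_of_subset hIJ
  have hcard : (∑ j, t j) + (J \ I).card ≤ m := by
    have := Finset.card_le_card hIJ
    omega
  have hfeq : countNum b P i k d 2 J I
      = (univ.filter fun l : Fin (b ^ m) => l ≠ i ∧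
        (∀ j ∉ J \ I, ((t j : ℕ):ℕ∞) ≤ gammaB b (P i j) (P l j)) ∧
        (∀ j ∈ J \ I, gammaB b (P i j) (P l j) = ((t j : ℕ):ℕ∞))).card := by
    rw [countNum]
    congr 1
    apply Finset.filter_congr
    intro l _
    constructor
    · rintro ⟨hne, h1, h2, h3⟩
      refine ⟨hne, fun j hj => ?_, fun j hj => ?_⟩
      · rw [Finset.mem_sdiff] at hj
        push_neg at hj
        by_cases hjI : j ∈ I
        · rw [htdef]; simp only [if_pos hjI]
          exact h1 j hjI
        · have hjJ : j ∉ J := fun hc => hjI (hj hc)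
          rw [htdef]; simp only [if_neg hjI, if_neg hjJ]
          exact h2 j hjJ
      · have hj' := hj
        rw [Finset.mem_sdiff] at hj'
        rw [htdef]; simp only [if_neg hj'.2, if_pos hj'.1]
        exact h3 j hj
    · rintro ⟨hne, h1, h2⟩
      refine ⟨hne, fun j hj => ?_, fun j hj => ?_, fun j hj => ?_⟩
      · have hjn : j ∉ J \ I := fun hc => (Finset.mem_sdiff.1 hc).2 hj
        have h0 : t j = k j + d j + 2 := by
          simp only [htdef]; rw [if_pos hj]
        exact h0 ▸ h1 j hjn
      · have hjn : j ∉ J \ I := fun hc => hj (Finset.mem_sdiff.1 hc).1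
        have hjI : j ∉ I := fun hc => hj (hIJ hc)
        have h0 : t j = k j := by
          simp only [htdef]; rw [if_neg hjI, if_neg hj]
        exact h0 ▸ h1 j hjn
      · have hj' := hj
        rw [Finset.mem_sdiff] at hj'
        have h0 : t j = d j := by
          simp only [htdef]; rw [if_neg hj'.2, if_pos hj'.1]
        exact h0 ▸ h2 j hj
  rw [hfeq, N_card hb hs hP i (J \ I) t hcard, hT, hE]
  have hempty : (J \ I = ∅) ↔ (I = J) := by
    rw [Finset.sdiff_eq_empty_iff_subset]
    constructor
    · intro h; exact Finset.Subset.antisymm hIJ h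
    · intro h; rw [h]
  have hexp : m - ((∑ j ∈ I ∪ Jᶜ, k j) + (∑ j ∈ J, d j) + 2 * I.card) - (J.card - I.card)
      = m - ((∑ j ∈ I ∪ Jᶜ, k j) + (∑ j ∈ J, d j) + I.card + J.card) := by
    have := Finset.card_le_card hIJ
    omega
  rw [hexp]
  congr 1
  simp only [hempty]

/-- For a `(0,m,s)`-net `P` in base `b ≥ s ≥ 1` with `m ≥ 1`, a nonempty `J ⊆ {1,…,s}`
and `k, d ∈ ℕ^s` with `m ≥ |k| + |d|_J + 2|J|`, the weighted sum relative to any point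
satisfies `m̃_b(k,d,J;P) ≤ (b^m/(b^m−1))·(2^{|J|} − b^{|k|+|d|_J+2|J|−m})/2^{|J|} ≤ 1`. -/
theorem claim_mTilde_easy_case (b m s : ℕ) (hs : 1 ≤ s) (hbs : s ≤ b) (hm : 1 ≤ m)
    (P : Fin (b ^ m) → Fin s → ℝ) (hP : IsNet b m s P)
    (J : Finset (Fin s)) (hJ : J.Nonempty) (k d : Fin s → ℕ)
    (hmkd : (∑ j, k j) + (∑ j ∈ J, d j) + 2 * J.card ≤ m) :
    ∀ i : Fin (b ^ m),
      mTilde b P i k d J ≤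
        ((b : ℝ) ^ m / ((b : ℝ) ^ m - 1)) *
          (((2 : ℝ) ^ J.card -
            (b : ℝ) ^ (((∑ j, (k j : ℤ)) + (∑ j ∈ J, (d j : ℤ)) + 2 * (J.card : ℤ)) - (m : ℤ))) /
            (2 : ℝ) ^ J.card) ∧
      ((b : ℝ) ^ m / ((b : ℝ) ^ m - 1)) *
          (((2 : ℝ) ^ J.card -
            (b : ℝ) ^ (((∑ j, (k j : ℤ)) + (∑ j ∈ J, (d j : ℤ)) + 2 * (J.card : ℤ)) - (m : ℤ))) /
            (2 : ℝ) ^ J.card) ≤ 1 := by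
  intro i
  by_cases hb2 : 2 ≤ b
  swap
  · -- degenerate case b = 1
    have hb1 : b = 1 := by omega
    subst hb1
    have hone : (1:ℕ) ^ m = 1 := one_pow m
    have hall : ∀ l : Fin (1 ^ m), l = i := by
      intro l
      have h1 := l.isLt
      have h2 := i.isLt
      exact Fin.ext (by omega)
    have hcn : ∀ I : Finset (Fin s), countNum 1 P i k d 2 J I = 0 := by
      intro I
      rw [countNum, Finset.card_eq_zero, Finset.filter_eq_empty_iff]
      intro l _
      simp [hall l]
    have hmt : mTilde 1 P i k d J = 0 := by
      rw [mTilde]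
      rw [Finset.sum_eq_zero, mul_zero]
      intro I _
      rw [hcn I]
      simp
    rw [hmt]
    norm_num
  · -- main case b ≥ 2
    classical
    set c := J.card with hc
    set K := (∑ j, k j) + (∑ j ∈ J, d j) + 2 * c with hK
    have hKm : K ≤ m := hmkd
    have hb0 : (0:ℝ) < (b:ℝ) := by positivity
    have hbne : (b:ℝ) ≠ 0 := ne_of_gt hb0
    have hbm1R : (1:ℝ) ≤ (b:ℝ) - 1 := by
      have : (2:ℝ) ≤ (b:ℝ) := by exact_mod_cast hb2
      linarith
    set X := (b:ℝ) ^ m with hX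
    have hX1 : (1:ℝ) < X := by
      apply one_lt_pow₀
      · exact_mod_cast (by omega : 1 < b)
      · omega
    have hXne : X - 1 ≠ 0 := by linarith
    have hcast : ((b ^ m : ℕ) : ℝ) = X := by push_cast; rfl
    -- per-term evaluation
    have hterm : ∀ I ∈ J.powerset,
        (b : ℝ) ^ ((∑ j ∈ I ∪ Jᶜ, k j) + (∑ j ∈ J, d j) + J.card + I.card) *
          ((b : ℝ) - 1) ^ ((I.card : ℤ) - (J.card : ℤ)) *
          ((countNum b P i k d 2 J I : ℝ) / (((b ^ m : ℕ) : ℝ) - 1))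
        = X / (X - 1) - (if I = J then ((b:ℝ) ^ K / (X - 1)) else 0) := by
      intro I hI
      have hIJ : I ⊆ J := Finset.mem_powerset.1 hI
      have hic : I.card ≤ c := Finset.card_le_card hIJ
      set A := (∑ j ∈ I ∪ Jᶜ, k j) + (∑ j ∈ J, d j) with hA
      have hAk : (∑ j ∈ I ∪ Jᶜ, k j) ≤ ∑ j, k j :=
        Finset.sum_le_sum_of_subset (Finset.subset_univ _)
      have hAbound : A + I.card + c ≤ m := by omega
      have hcnt := countNum_eval hb2 hs hP i k d J I hIJ (by omega)
      have hcntR : (countNum b P i k d 2 J I : ℝ)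
          = (b:ℝ) ^ (m - (A + I.card + c)) * ((b:ℝ) - 1) ^ (c - I.card)
            - (if I = J then 1 else 0) := by
        have h0 := congrArg (fun z : ℤ => (z : ℝ)) hcnt
        push_cast at h0
        rw [h0]
      have hw : ((b:ℝ) - 1) ^ ((I.card : ℤ) - (J.card : ℤ))
          = (((b:ℝ) - 1) ^ (c - I.card))⁻¹ := by
        have he : (I.card : ℤ) - (J.card : ℤ) = -((c - I.card : ℕ) : ℤ) := by
          push_cast [hc]; omega
        rw [he, zpow_neg, zpow_natCast]
      have hwne : ((b:ℝ) - 1) ^ (c - I.card) ≠ 0 := by positivity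
      have hexp1 : (∑ j ∈ I ∪ Jᶜ, k j) + (∑ j ∈ J, d j) + J.card + I.card
          = A + c + I.card := by rw [hA, hc]
      rw [hcntR, hw, hcast, hexp1]
      by_cases hIJeq : I = J
      · have hicc : I.card = c := by rw [hIJeq]
        have hAval : A = (∑ j, k j) + (∑ j ∈ J, d j) := by
          rw [hA, hIJeq, Finset.union_compl]
        rw [if_pos hIJeq, if_pos hIJeq, hicc, Nat.sub_self, pow_zero, inv_one, mul_one,
          mul_one]
        have h4 : A + c + c = K := by rw [hAval, hK]; ring
        have h4' : m - (A + c + c) = m - K := by rw [h4]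
        rw [h4]
        have h5 : (b:ℝ)^K * (b:ℝ)^(m-K) = X := by
          rw [← pow_add, hX]; congr 1; omega
        field_simp
        linear_combination h5
      · rw [if_neg hIJeq, if_neg hIJeq, sub_zero, sub_zero]
        have hpow : (b:ℝ) ^ (A + c + I.card) * (b:ℝ) ^ (m - (A + I.card + c)) = X := by
          rw [← pow_add, hX]; congr 1; omega
        have hre : (b:ℝ) ^ (A + c + I.card) * (((b:ℝ) - 1) ^ (c - I.card))⁻¹ *
            ((b:ℝ) ^ (m - (A + I.card + c)) * ((b:ℝ) - 1) ^ (c - I.card) / (X - 1))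
            = ((b:ℝ) ^ (A + c + I.card) * (b:ℝ) ^ (m - (A + I.card + c))) *
              ((((b:ℝ) - 1) ^ (c - I.card))⁻¹ * ((b:ℝ) - 1) ^ (c - I.card)) / (X - 1) := by
          ring
        rw [hre, inv_mul_cancel₀ hwne, mul_one, hpow]
    rw [mTilde, Finset.sum_congr rfl hterm]
    rw [Finset.sum_sub_distrib, Finset.sum_const, Finset.card_powerset,
      Finset.sum_ite_eq' J.powerset J (fun _ => (b:ℝ) ^ K / (X - 1)),
      if_pos (Finset.mem_powerset_self J)]
    have hKz : ((∑ j, (k j : ℤ)) + (∑ j ∈ J, (d j : ℤ)) + 2 * (J.card : ℤ)) - (m : ℤ)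
        = (K : ℤ) - (m : ℤ) := by
      rw [hK, hc]
      push_cast
      ring
    rw [hKz]
    have hzpow : (b:ℝ) ^ ((K:ℤ) - (m:ℤ)) = (b:ℝ) ^ K / X := by
      rw [zpow_sub₀ hbne, zpow_natCast, zpow_natCast, hX]
    rw [hzpow]
    have h2c : (0:ℝ) < 2 ^ c := by positivity
    have h2cz : (2:ℝ) ^ (-(J.card : ℤ)) = ((2:ℝ) ^ c)⁻¹ := by
      rw [← hc, zpow_neg, zpow_natCast]
    have hbK : (2:ℝ) ^ c ≤ (b:ℝ) ^ K := by
      calc (2:ℝ) ^ c ≤ (2:ℝ) ^ K := by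
            apply pow_le_pow_right₀ (by norm_num)
            omega
        _ ≤ (b:ℝ) ^ K := by
            apply pow_le_pow_left₀ (by norm_num)
            exact_mod_cast hb2
    have hXpos : (0:ℝ) < X := by linarith
    constructor
    · apply le_of_eq
      rw [h2cz]
      rw [← hc]
      field_simp
      have h1X : X - 1 ≠ 0 := hXne
      rw [nsmul_eq_mul] at *
      push_cast
      field_simp
    · rw [div_mul_div_comm, div_le_one (mul_pos (by linarith : (0:ℝ) < X - 1) h2c)]
      have hexp : X * ((2:ℝ)^c - (b:ℝ)^K / X) = X * 2^c - (b:ℝ)^K := by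
        field_simp
      rw [← hc] at *
      nlinarith [hbK, hexp]
end

section
/- Let b, s be integers with b ≥ s ≥ 1, let J ⊆ {1,…,s} be nonempty, and let m ∈ ℕ and k ∈ ℕ^s satisfy |J| ≤ m < |k| + 2|J|, where |k| := Σ_{j=1}^s k_j. Then G(m,s,J,k,0) ≤ 2^{|J|} − 1, where 0 denotes the zero vector in ℕ^s. -/
set_option maxHeartbeats 1600000


open Finset
open scoped Classical

/-- `h_{j,i}(ℓ) = (b^{j+i−ℓ}/(b−1)^{j−i})·C(j−i−1, ℓ−2i)`, for integers `0 ≤ i < j`, `ℓ ∈ ℤ`. -/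
noncomputable def hFun (b j i : ℕ) (l : ℤ) : ℝ :=
  ((b : ℝ) ^ ((j : ℤ) + (i : ℤ) - l) / ((b : ℝ) - 1) ^ (j - i)) *
    (Nat.choose (j - i - 1) (l - 2 * (i : ℤ)).toNat : ℝ)

/-- `g_{j,i}(ℓ)`: `0` if `ℓ ≤ 2i`; `(b/(b−1))^{j−i−1}` if `ℓ = 2i+1`;
`1 + h_{j,i}(ℓ)` if `2i+1 < ℓ < j+i` and `ℓ` is odd; `1` otherwise
(i.e. if `ℓ ≥ i+j`, or `ℓ > 2i` and `ℓ` is even). -/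
noncomputable def gFun (b j i : ℕ) (l : ℤ) : ℝ :=
  if l ≤ 2 * (i : ℤ) then 0
  else if l = 2 * (i : ℤ) + 1 then ((b : ℝ) / ((b : ℝ) - 1)) ^ (j - i - 1)
  else if Odd l ∧ l < (j : ℤ) + (i : ℤ) then 1 + hFun b j i l
  else 1

/-- `G(m,s,J,k,d) := Σ_{I ⊊ J} g_{|J|,|I|}(m − |k|_{I*} − |d|_J)`, where `I* = I ∪ Jᶜ`. -/
noncomputable def GFun (b s : ℕ) (J : Finset (Fin s)) (m : ℕ) (k d : Fin s → ℕ) : ℝ :=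
  ∑ I ∈ J.powerset.filter (· ≠ J),
    gFun b J.card I.card
      ((m : ℤ) - ∑ j ∈ I ∪ Jᶜ, (k j : ℤ) - ∑ j ∈ J, (d j : ℤ))

lemma nat_desc_le (m : ℕ) : ∀ c : ℕ, 1 ≤ c →
    Nat.descFactorial m (2*c - 1) ≤ m^(c-1) * Nat.descFactorial (m+1) c := by
  intro c
  induction c with
  | zero => omega
  | succ c ih =>
    intro _
    rcases Nat.eq_or_lt_of_le (Nat.one_le_iff_ne_zero.mpr (Nat.succ_ne_zero c)) with h | h
    · -- c+1 = 1
      have : c = 0 := by omega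
      subst this
      simp [Nat.descFactorial]
    · have hc : 1 ≤ c := by omega
      have h1 : 2*(c+1) - 1 = (2*c - 1) + 1 + 1 := by omega
      rw [h1, Nat.descFactorial_succ, Nat.descFactorial_succ]
      have h2 : Nat.descFactorial (m+1) (c+1) = (m+1-c) * Nat.descFactorial (m+1) c :=
        Nat.descFactorial_succ _ _
      have ihc := ih hc
      calc (m - (2*c - 1 + 1)) * ((m - (2*c-1)) * Nat.descFactorial m (2*c-1))
          ≤ (m - (2*c - 1 + 1)) * ((m - (2*c-1)) * (m^(c-1) * Nat.descFactorial (m+1) c)) := by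
            exact Nat.mul_le_mul_left _ (Nat.mul_le_mul_left _ ihc)
        _ ≤ m^(c+1-1) * Nat.descFactorial (m+1) (c+1) := by
            rw [h2]
            have e1 : c+1-1 = (c-1)+1 := by omega
            rw [e1, pow_succ]
            have : m - (2*c-1+1) ≤ m+1-c := by omega
            have h3 : m - (2*c-1) ≤ m := by omega
            calc (m - (2*c - 1 + 1)) * ((m - (2*c-1)) * (m^(c-1) * Nat.descFactorial (m+1) c))
                ≤ (m+1-c) * (m * (m^(c-1) * Nat.descFactorial (m+1) c)) := by
                  exact Nat.mul_le_mul this (Nat.mul_le_mul h3 (le_refl _))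
              _ = m ^ (c - 1) * m * ((m + 1 - c) * Nat.descFactorial (m + 1) c) := by ring



lemma nat_fact_ge : ∀ c : ℕ, 2 ≤ c → 3*c*8^(c-2) ≤ Nat.factorial (2*c-1) := by
  intro c
  induction c with
  | zero => omega
  | succ c ih =>
    intro h
    rcases Nat.lt_or_ge c 2 with h2 | h2
    · have : c = 1 := by omega
      subst this
      decide
    · have ihc := ih h2
      have e1 : 2*(c+1) - 1 = (2*c-1) + 1 + 1 := by omega
      rw [e1, Nat.factorial_succ, Nat.factorial_succ]
      have e2 : c+1-2 = (c-2)+1 := by omega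
      rw [e2, pow_succ]
      have h1 : 3*(c+1) ≤ 2*(3*c) := by omega
      have e3 : 2*c-1+1 = 2*c := by omega
      have e4 : 16 ≤ (2*c-1+1+1) * (2*c-1+1) := by
        rw [e3]
        calc 16 ≤ 5*4 := by norm_num
          _ ≤ (2*c+1)*(2*c) := Nat.mul_le_mul (by omega) (by omega)
      calc 3*(c+1)*(8^(c-2)*8) ≤ 2*(3*c)*(8^(c-2)*8) := Nat.mul_le_mul_right _ h1
        _ = 16 * (3*c*8^(c-2)) := by ring
        _ ≤ 16 * Nat.factorial (2*c-1) := Nat.mul_le_mul_left _ ihc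
        _ ≤ ((2*c-1+1+1) * ((2*c-1+1) * Nat.factorial (2*c-1))) := by
            calc 16 * Nat.factorial (2*c-1) ≤ ((2*c-1+1+1) * (2*c-1+1)) * Nat.factorial (2*c-1) :=
                  Nat.mul_le_mul_right _ e4
              _ = (2*c-1+1+1) * ((2*c-1+1) * Nat.factorial (2*c-1)) := by ring

lemma one_sub_mul_exp_le (s : ℝ) : (1 - s) * Real.exp s ≤ 1 := by
  have h := Real.add_one_le_exp (-s)
  have hp := Real.exp_pos s
  have h2 : Real.exp (-s) * Real.exp s = 1 := by
    rw [← Real.exp_add]; simp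
  nlinarith [h, hp, h2]

lemma pow_bound (x : ℝ) (hx : 0 ≤ x) : ∀ m : ℕ,
    (1+x)^(m+2) ≤ 1 + (m+2)*x + ((m+2).choose 2) * x^2 * (1+x)^m := by
  intro m
  induction m with
  | zero => norm_num; nlinarith
  | succ m ih =>
    have h1 : (1+x)^(m+1+2) = (1+x) * (1+x)^(m+2) := by ring
    have hx1 : (0:ℝ) ≤ 1 + x := by linarith
    have h2 : (1+x)^(m+2) ≥ 0 := pow_nonneg hx1 _
    have hch : ((m+3).choose 2 : ℝ) = ((m+2).choose 2 : ℝ) + (m+2) := by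
      have : (m+3).choose 2 = (m+2).choose 1 + (m+2).choose 2 := Nat.choose_succ_succ' (m+2) 1
      rw [this]; push_cast [Nat.choose_one_right]; ring
    have hpm : (1+x)^m ≤ (1+x)^(m+1) := by
      apply pow_le_pow_right₀ (by linarith) (by omega)
    have h1p : (1:ℝ) ≤ (1+x)^(m+1) := one_le_pow₀ (by linarith)
    have hc2 : (0:ℝ) ≤ ((m+2).choose 2 : ℝ) := by positivity
    have key : (1+x)^(m+1+2) ≤ 1 + ((m:ℝ)+3)*x + (((m+3).choose 2 : ℝ)) * x^2 * (1+x)^(m+1) := by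
      calc (1+x)^(m+1+2) = (1+x) * (1+x)^(m+2) := h1
       _ ≤ (1+x) * (1 + (m+2)*x + ((m+2).choose 2) * x^2 * (1+x)^m) := by
           apply mul_le_mul_of_nonneg_left ih hx1
       _ = 1 + (m+3)*x + x^2*((m+2) + ((m+2).choose 2) * (1+x)^m * (1+x)) := by push_cast; ring
       _ ≤ 1 + (m+3)*x + x^2*(((m+2) + ((m+2).choose 2)) * (1+x)^(m+1)) := by
           have e5 : ((m+2).choose 2 : ℝ) * (1+x)^m * (1+x) = ((m+2).choose 2 : ℝ) * (1+x)^(m+1) := by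
             rw [pow_succ]; ring
           rw [e5, add_mul]
           have e6 : ((m+2):ℝ) ≤ ((m+2):ℝ) * (1+x)^(m+1) := by nlinarith [h1p]
           nlinarith [sq_nonneg x, e6, sq_nonneg (x*(1+x))]
       _ = 1 + ((m:ℝ)+3)*x + (((m+3).choose 2:ℝ)) * x^2 * (1+x)^(m+1) := by rw [hch]; ring
    have e7 : ((m+1+2).choose 2) = ((m+3).choose 2) := by norm_num
    rw [e7]
    push_cast
    push_cast at key
    linarith


lemma geom_sum_eighth : ∀ n : ℕ, ∑ i ∈ range n, ((1:ℝ)/8)^i ≤ 8/7 := by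
  intro n
  induction n with
  | zero => norm_num
  | succ n ih =>
    rw [geom_sum_succ]
    linarith

lemma geom_eighth (u : ℕ) : ∑ c ∈ Icc 2 u, ((1:ℝ)/8)^(c-2) ≤ 8/7 := by
  have h : ∑ c ∈ Icc 2 u, ((1:ℝ)/8)^(c-2) = ∑ i ∈ range (u-1), ((1:ℝ)/8)^i := by
    apply Finset.sum_nbij' (fun c => c - 2) (fun i => i + 2)
    · intro a ha; simp only [mem_Icc] at ha; simp only [mem_range]; omega
    · intro a ha; simp only [mem_range] at ha; simp only [mem_Icc]; omega
    · intro a ha; simp only [mem_Icc] at ha; omega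
    · intro a ha; simp only [mem_range] at ha; omega
    · intro a ha; rfl
  rw [h]
  exact geom_sum_eighth _

lemma one_add_pow_le_exp (x : ℝ) (hx : 0 ≤ x) (k : ℕ) : (1+x)^k ≤ Real.exp (k*x) := by
  have h1 : (1+x) ≤ Real.exp x := by have := Real.add_one_le_exp x; linarith
  calc (1+x)^k ≤ (Real.exp x)^k := pow_le_pow_left₀ (by linarith) h1 k
    _ = Real.exp (k*x) := by rw [← Real.exp_nat_mul]

lemma load_core (u n : ℕ) (x : ℝ) (hu : 1 ≤ u) (hn : 2 ≤ n) (hx0 : 0 < x)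
    (hx1 : ((u:ℝ) + n - 2) * x ≤ 1) :
    (u:ℝ) * ((1+x)^(n-1) - 1) / n
      + ∑ c ∈ Icc 2 u, (u.choose c : ℝ) * ((n+c-2).choose (2*c-1) : ℝ) * x^(2*c-1) * (1+x)^(n-c)
          / ((n+c-1).choose c : ℝ) ≤ 1 := by
  have hA1 : (u:ℝ) * x ≤ 1 := by
    have h2n : (2:ℝ) ≤ (n:ℝ) := by exact_mod_cast hn
    nlinarith [mul_nonneg (by linarith : (0:ℝ) ≤ (n:ℝ)-2) hx0.le]
  have hx1' : x ≤ 1 := by nlinarith [(by exact_mod_cast hu : (1:ℝ) ≤ u), (by exact_mod_cast hn : (2:ℝ) ≤ n), hx0.le]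
  have hu0 : (0:ℝ) < u := by exact_mod_cast hu
  have h1x : (0:ℝ) ≤ 1 + x := by linarith
  rcases Nat.lt_or_ge n 3 with hn2 | hn3
  · -- n = 2
    have hn2' : n = 2 := by omega
    subst hn2'
    have hz : ∀ c ∈ Icc 2 u, (u.choose c : ℝ) * ((2+c-2).choose (2*c-1) : ℝ) * x^(2*c-1) * (1+x)^(2-c)
          / ((2+c-1).choose c : ℝ) = 0 := by
      intro c hc
      simp only [mem_Icc] at hc
      have : (2+c-2).choose (2*c-1) = 0 := by
        apply Nat.choose_eq_zero_of_lt; omega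
      rw [this]; simp
    rw [sum_congr rfl hz]
    simp only [sum_const_zero, add_zero]
    norm_num
    nlinarith [hu0]
  rcases Nat.lt_or_ge n 4 with hn3' | hn4
  · -- n = 3
    have hn3'' : n = 3 := by omega
    subst hn3''
    have hAx : (u:ℝ)*x + x ≤ 1 := by push_cast at hx1; linarith
    have hsum : ∑ c ∈ Icc 2 u, (u.choose c : ℝ) * ((3+c-2).choose (2*c-1) : ℝ) * x^(2*c-1) * (1+x)^(3-c)
          / ((3+c-1).choose c : ℝ) ≤ x/6 := by
      have hb : ∀ c ∈ Icc 2 u, (u.choose c : ℝ) * ((3+c-2).choose (2*c-1) : ℝ) * x^(2*c-1) * (1+x)^(3-c)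
          / ((3+c-1).choose c : ℝ) ≤ if c = 2 then x/6 else 0 := by
        intro c hc
        simp only [mem_Icc] at hc
        rcases eq_or_ne c 2 with h2 | h2
        · subst h2
          simp only [if_pos rfl]
          norm_num
          -- (u.choose 2) * (3.choose 3) * x^3 * (1+x) / (4.choose 2) ≤ x/6
          have hc2 : 2 * u.choose 2 ≤ u^2 := by
            have := Nat.descFactorial_le_pow u 2
            rw [Nat.descFactorial_eq_factorial_mul_choose] at this
            simpa [Nat.factorial] using this
          have hc2' : (u.choose 2 : ℝ) ≤ (u:ℝ)^2/2 := by
            have : (2 * u.choose 2 : ℝ) ≤ (u:ℝ)^2 := by exact_mod_cast hc2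
            linarith
          have e2 : (Nat.choose 4 2 : ℝ) = 6 := by norm_num [Nat.choose]
          rw [e2]
          rw [div_le_iff₀ (by norm_num : (0:ℝ) < 6)]
          have hA2 : ((u:ℝ)*x)^2 ≤ 1 := by nlinarith [hA1, mul_pos hu0 hx0]
          have this2 : (u.choose 2 : ℝ) * x^3 * (1+x) ≤ ((u:ℝ)^2/2) * x^3 * (1+x) := by
            have hx3 : (0:ℝ) ≤ x^3 * (1+x) := by positivity
            nlinarith [mul_le_mul_of_nonneg_right hc2' hx3]
          calc (u.choose 2 : ℝ) * x^3 * (1+x) ≤ ((u:ℝ)^2/2) * x^3 * (1+x) := this2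
            _ = ((u:ℝ)*x)^2 * (x*(1+x))/2 := by ring
            _ ≤ 1 * (x*2)/2 := by
                have h1 : (0:ℝ) ≤ x*(1+x) := by positivity
                have h2 : x*(1+x) ≤ x*2 := by nlinarith
                nlinarith [hA2, mul_le_mul_of_nonneg_left h2 (le_of_lt hx0)]
            _ = x/6*6 := by ring
        · simp only [if_neg h2]
          have : (3+c-2).choose (2*c-1) = 0 := by
            apply Nat.choose_eq_zero_of_lt; omega
          rw [this]; simp
      calc _ ≤ ∑ c ∈ Icc 2 u, (if c = 2 then x/6 else 0) := sum_le_sum hb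
        _ ≤ x/6 := by
            rw [Finset.sum_ite_eq' (Icc 2 u) 2 (fun _ => x/6)]
            split_ifs
            · exact le_refl _
            · positivity
    have hT1 : (u:ℝ) * ((1+x)^(3-1) - 1) / (3:ℕ) ≤ ((u:ℝ)*x)*(2+x)/3 := by
      norm_num
      nlinarith [hu0, hx0]
    have : ((u:ℝ)*x)*(2+x)/3 + x/6 ≤ 1 := by nlinarith [hAx, hx0, hx1']
    linarith [hsum, hT1]
  -- main case n ≥ 4
  set A : ℝ := (u:ℝ) * x with hA
  set s : ℝ := ((n:ℝ) - 2) * x with hs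
  have hn4R : (4:ℝ) ≤ (n:ℝ) := by exact_mod_cast hn4
  have hs0 : 0 ≤ s := by
    apply mul_nonneg _ hx0.le
    linarith
  have hsx : 2*x ≤ s := by
    have : (2:ℝ) ≤ (n:ℝ) - 2 := by linarith
    nlinarith [hx0]
  have hAs : A + s ≤ 1 := by
    rw [hA, hs]; nlinarith [hx1]
  have hA0 : 0 < A := mul_pos hu0 hx0
  have hAle : A ≤ 1 := by linarith
  set E : ℝ := Real.exp s with hE
  have hE1 : 1 ≤ E := by
    rw [hE]; calc (1:ℝ) = Real.exp 0 := by simp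
      _ ≤ Real.exp s := Real.exp_le_exp.mpr hs0
  have hE0 : 0 < E := Real.exp_pos s
  -- T1 bound
  have hpow13 : (1+x)^(n-3) ≤ E := by
    calc (1+x)^(n-3) ≤ Real.exp ((n-3 : ℕ)*x) := one_add_pow_le_exp x hx0.le _
      _ ≤ E := by
          rw [hE]
          apply Real.exp_le_exp.mpr
          have : ((n-3:ℕ):ℝ) ≤ (n:ℝ) - 2 := by
            have : ((n-3:ℕ):ℝ) = (n:ℝ) - 3 := by
              have : (3:ℕ) ≤ n := hn3
              push_cast [Nat.cast_sub this]; ring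
            rw [this]; linarith
          nlinarith [hx0]
  have hT1 : (u:ℝ) * ((1+x)^(n-1) - 1) / n ≤ A + A*(s/2)*E := by
    have hm : n - 1 = (n-3) + 2 := by omega
    have hpb := pow_bound x hx0.le (n-3)
    have hcast3 : ((n-3:ℕ):ℝ) = (n:ℝ) - 3 := by
      have h3 : (3:ℕ) ≤ n := hn3
      push_cast [Nat.cast_sub h3]; ring
    have hch2 : (((n-3)+2).choose 2 : ℝ) = ((n:ℝ)-1)*((n:ℝ)-2)/2 := by
      rw [Nat.cast_choose_two]
      have e1 : (((n-3)+2 : ℕ):ℝ) = (n:ℝ) - 1 := by push_cast [hcast3]; ring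
      rw [e1]; ring
    rw [hm]
    have hkey : (1+x)^((n-3)+2) - 1 ≤ ((n:ℝ)-1)*x + ((n:ℝ)-1)*((n:ℝ)-2)/2 * x^2 * (1+x)^(n-3) := by
      have := hpb
      rw [hch2] at this
      have e2 : (((n-3)+2 : ℕ):ℝ) = (n:ℝ) - 1 := by push_cast [hcast3]; ring
      calc (1+x)^((n-3)+2) - 1 ≤ (((n-3)+2 : ℕ):ℝ)*x + ((n:ℝ)-1)*((n:ℝ)-2)/2 * x^2 * (1+x)^(n-3) := by
            push_cast at this ⊢; linarith
        _ = ((n:ℝ)-1)*x + ((n:ℝ)-1)*((n:ℝ)-2)/2 * x^2 * (1+x)^(n-3) := by rw [e2]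
    have hn0 : (0:ℝ) < n := by linarith
    rw [div_le_iff₀ hn0]
    have hnn : ((n:ℝ)-1) ≤ (n:ℝ) := by linarith
    have hgoal : (u:ℝ) * ((1+x)^((n-3)+2) - 1) ≤ (A + A*(s/2)*E) * n := by
      have h1 : (u:ℝ) * ((1+x)^((n-3)+2) - 1) ≤ (u:ℝ)*(((n:ℝ)-1)*x) + (u:ℝ)*(((n:ℝ)-1)*((n:ℝ)-2)/2 * x^2 * (1+x)^(n-3)) := by
        have := mul_le_mul_of_nonneg_left hkey hu0.le
        linarith [this]
      have h2 : (u:ℝ)*(((n:ℝ)-1)*x) ≤ A * n := by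
        rw [hA]; nlinarith [hu0, hx0]
      have h3 : (u:ℝ)*(((n:ℝ)-1)*((n:ℝ)-2)/2 * x^2 * (1+x)^(n-3)) ≤ A*(s/2)*E * n := by
        have hp0 : (0:ℝ) ≤ (1+x)^(n-3) := pow_nonneg h1x _
        have e3 : (u:ℝ)*(((n:ℝ)-1)*((n:ℝ)-2)/2 * x^2 * (1+x)^(n-3))
            = (A*(s/2)*(1+x)^(n-3)) * ((n:ℝ)-1) := by rw [hA, hs]; ring
        rw [e3]
        have h4 : A*(s/2)*(1+x)^(n-3) ≤ A*(s/2)*E := by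
          apply mul_le_mul_of_nonneg_left hpow13
          positivity
        have h5 : (0:ℝ) ≤ A*(s/2)*E := by positivity
        nlinarith [h4, h5, hnn, hn0]
      linarith
    exact hgoal
  -- Tc bounds
  have hTc : ∀ c ∈ Icc 2 u, (u.choose c : ℝ) * ((n+c-2).choose (2*c-1) : ℝ) * x^(2*c-1) * (1+x)^(n-c)
          / ((n+c-1).choose c : ℝ) ≤ A*E*(s/6 + x/3) * (1/8)^(c-2) := by
    intro c hc
    simp only [mem_Icc] at hc
    obtain ⟨hc2, hcu⟩ := hc
    -- nat inequality
    have natkey : Nat.factorial (2*c-1) * (u.choose c * ((n+c-2).choose (2*c-1)))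
        ≤ u^c * ((n+c-2)^(c-1) * ((n+c-1).choose c)) := by
      have fu : Nat.factorial c * u.choose c ≤ u^c := by
        have := Nat.descFactorial_le_pow u c
        rw [Nat.descFactorial_eq_factorial_mul_choose] at this
        exact this
      have fc : Nat.factorial (2*c-1) * ((n+c-2).choose (2*c-1))
          ≤ (n+c-2)^(c-1) * (Nat.factorial c * ((n+c-1).choose c)) := by
        have h := nat_desc_le (n+c-2) c (by omega)
        rw [Nat.descFactorial_eq_factorial_mul_choose, Nat.descFactorial_eq_factorial_mul_choose] at h
        have e : n+c-2+1 = n+c-1 := by omega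
        rw [e] at h
        exact h
      have comb := Nat.mul_le_mul fu fc
      have el : (Nat.factorial c * u.choose c) * (Nat.factorial (2*c-1) * ((n+c-2).choose (2*c-1)))
          = Nat.factorial c * (Nat.factorial (2*c-1) * (u.choose c * ((n+c-2).choose (2*c-1)))) := by ring
      have er : u^c * ((n+c-2)^(c-1) * (Nat.factorial c * ((n+c-1).choose c)))
          = Nat.factorial c * (u^c * ((n+c-2)^(c-1) * ((n+c-1).choose c))) := by ring
      rw [el, er] at comb
      exact Nat.le_of_mul_le_mul_left comb (Nat.factorial_pos c)
    have hCd : (0:ℝ) < ((n+c-1).choose c : ℝ) := by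
      exact_mod_cast Nat.choose_pos (by omega)
    have hf0 : (0:ℝ) < (Nat.factorial (2*c-1) : ℝ) := by exact_mod_cast Nat.factorial_pos _
    have cast1 : (u.choose c : ℝ) * ((n+c-2).choose (2*c-1):ℝ)
        ≤ (u:ℝ)^c * ((n:ℝ)+c-2)^(c-1) * ((n+c-1).choose c : ℝ) / (Nat.factorial (2*c-1) : ℝ) := by
      rw [le_div_iff₀ hf0]
      have e4 : ((n:ℝ)+c-2) = ((n+c-2 : ℕ):ℝ) := by
        have : (2:ℕ) ≤ n + c := by omega
        push_cast [Nat.cast_sub this]; ring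
      rw [e4]
      calc (u.choose c : ℝ) * ((n+c-2).choose (2*c-1):ℝ) * (Nat.factorial (2*c-1) : ℝ)
          = ((Nat.factorial (2*c-1) * (u.choose c * ((n+c-2).choose (2*c-1))) : ℕ) : ℝ) := by
            push_cast; ring
        _ ≤ ((u^c * ((n+c-2)^(c-1) * ((n+c-1).choose c)) : ℕ) : ℝ) := by exact_mod_cast natkey
        _ = (u:ℝ)^c * ((n+c-2:ℕ):ℝ)^(c-1) * ((n+c-1).choose c : ℝ) := by push_cast; ring
    -- analytic bound
    set M : ℝ := ((n:ℝ)+c-2)*x with hM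
    have hM0 : 0 ≤ M := by
      apply mul_nonneg _ hx0.le
      have : (2:ℝ) ≤ (n:ℝ) := by exact_mod_cast hn
      have : (0:ℝ) ≤ (c:ℝ) := by positivity
      linarith
    have hM1 : M ≤ 1 := by
      rw [hM]
      have hcu' : (c:ℝ) ≤ (u:ℝ) := by exact_mod_cast hcu
      nlinarith [hx1, hx0, hcu']
    have hMs : M = s + c*x := by rw [hM, hs]; ring
    have hpowE : (1+x)^(n-c) ≤ E := by
      calc (1+x)^(n-c) ≤ Real.exp ((n-c : ℕ)*x) := one_add_pow_le_exp x hx0.le _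
        _ ≤ E := by
            rw [hE]
            apply Real.exp_le_exp.mpr
            have h1 : ((n-c:ℕ):ℝ) ≤ (n:ℝ) - 2 := by
              have h2 : (n-c:ℕ) ≤ n-2 := by omega
              have h3 : ((n-2:ℕ):ℝ) = (n:ℝ)-2 := by
                have : (2:ℕ) ≤ n := hn
                push_cast [Nat.cast_sub this]; ring
              calc ((n-c:ℕ):ℝ) ≤ ((n-2:ℕ):ℝ) := by exact_mod_cast h2
                _ = (n:ℝ)-2 := h3
            nlinarith [hx0]
    have hAc : (u:ℝ)^c * x^c ≤ A := by
      have : (u:ℝ)^c * x^c = A^c := by rw [hA, mul_pow]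
      rw [this]
      calc A^c ≤ A^1 := pow_le_pow_of_le_one hA0.le hAle (by omega)
        _ = A := pow_one A
    have hMc : M^(c-1) ≤ M := by
      calc M^(c-1) ≤ M^1 := pow_le_pow_of_le_one hM0 hM1 (by omega)
        _ = M := pow_one M
    have hfge6 : (6:ℝ)*8^(c-2) ≤ (Nat.factorial (2*c-1):ℝ) := by
      have h := nat_fact_ge c hc2
      have h6 : 6*8^(c-2) ≤ 3*c*8^(c-2) := by
        apply Nat.mul_le_mul_right
        omega
      exact_mod_cast le_trans h6 h
    have hfge3 : (3:ℝ)*c*8^(c-2) ≤ (Nat.factorial (2*c-1):ℝ) := by exact_mod_cast nat_fact_ge c hc2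
    have h8pos : (0:ℝ) < 8^(c-2) := by positivity
    -- step chain
    have split : x^(2*c-1) = x^c * x^(c-1) := by
      rw [← pow_add]
      congr 1
      omega
    rw [div_le_iff₀ hCd]
    have hterm1 : (u.choose c : ℝ) * ((n+c-2).choose (2*c-1) : ℝ) * x^(2*c-1) * (1+x)^(n-c)
        ≤ ((u:ℝ)^c * ((n:ℝ)+c-2)^(c-1) * ((n+c-1).choose c : ℝ) / (Nat.factorial (2*c-1) : ℝ))
          * (x^(2*c-1) * (1+x)^(n-c)) := by
      have hxp : (0:ℝ) ≤ x^(2*c-1) * (1+x)^(n-c) := by positivity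
      calc (u.choose c : ℝ) * ((n+c-2).choose (2*c-1) : ℝ) * x^(2*c-1) * (1+x)^(n-c)
          = ((u.choose c : ℝ) * ((n+c-2).choose (2*c-1) : ℝ)) * (x^(2*c-1) * (1+x)^(n-c)) := by ring
        _ ≤ _ := mul_le_mul_of_nonneg_right cast1 hxp
    have hterm2 : ((u:ℝ)^c * ((n:ℝ)+c-2)^(c-1) * ((n+c-1).choose c : ℝ) / (Nat.factorial (2*c-1) : ℝ))
          * (x^(2*c-1) * (1+x)^(n-c))
        ≤ (A * M * E / (Nat.factorial (2*c-1) : ℝ)) * ((n+c-1).choose c : ℝ) := by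
      have e5 : ((u:ℝ)^c * ((n:ℝ)+c-2)^(c-1) * ((n+c-1).choose c : ℝ) / (Nat.factorial (2*c-1) : ℝ))
          * (x^(2*c-1) * (1+x)^(n-c))
          = (((u:ℝ)^c * x^c) * ((((n:ℝ)+c-2)^(c-1)) * x^(c-1)) * (1+x)^(n-c) / (Nat.factorial (2*c-1) : ℝ))
            * ((n+c-1).choose c : ℝ) := by
        rw [split]; ring
      rw [e5]
      apply mul_le_mul_of_nonneg_right _ hCd.le
      have hMM : ((n:ℝ)+c-2)^(c-1) * x^(c-1) = M^(c-1) := by rw [hM, mul_pow]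
      rw [hMM]
      apply div_le_div_of_nonneg_right _ hf0.le
      have p1 : (0:ℝ) ≤ (u:ℝ)^c * x^c := by positivity
      have p2 : (0:ℝ) ≤ M^(c-1) := pow_nonneg hM0 _
      have p3 : (0:ℝ) ≤ (1+x)^(n-c) := pow_nonneg h1x _
      have hAM : (u:ℝ)^c * x^c * M^(c-1) ≤ A * M :=
        mul_le_mul hAc hMc p2 hA0.le
      calc (u:ℝ)^c * x^c * M^(c-1) * (1+x)^(n-c) ≤ (A*M) * E := by
            apply mul_le_mul hAM hpowE p3
            positivity
        _ = A * M * E := by ring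
    -- now:  A*M*E/fact ≤ A*E*(s/6+x/3)*(1/8)^(c-2)
    have hfinal : A * M * E / (Nat.factorial (2*c-1) : ℝ) ≤ A*E*(s/6 + x/3) * (1/8)^(c-2) := by
      have e8 : ((1:ℝ)/8)^(c-2) = 1/8^(c-2) := by rw [div_pow]; norm_num
      have hc0 : (0:ℝ) < (c:ℝ) := by exact_mod_cast (by omega : 0 < c)
      have hd6 : (0:ℝ) < 6*8^(c-2) := by positivity
      have hd3 : (0:ℝ) < 3*(c:ℝ)*8^(c-2) := by positivity
      have t1 : A*E*s / (Nat.factorial (2*c-1) : ℝ) ≤ A*E*s / (6*8^(c-2)) :=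
        div_le_div_of_nonneg_left (by positivity) hd6 hfge6
      have t2 : A*E*((c:ℝ)*x) / (Nat.factorial (2*c-1) : ℝ) ≤ A*E*((c:ℝ)*x) / (3*(c:ℝ)*8^(c-2)) :=
        div_le_div_of_nonneg_left (by positivity) hd3 hfge3
      have e9 : A * M * E / (Nat.factorial (2*c-1) : ℝ)
          = A*E*s / (Nat.factorial (2*c-1) : ℝ) + A*E*((c:ℝ)*x) / (Nat.factorial (2*c-1) : ℝ) := by
        rw [hMs]; ring
      have e10 : A*E*s / (6*8^(c-2)) = A*E*(s/6) * (1/8)^(c-2) := by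
        rw [e8]; ring
      have e11 : A*E*((c:ℝ)*x) / (3*(c:ℝ)*8^(c-2)) = A*E*(x/3) * (1/8)^(c-2) := by
        rw [e8]; field_simp
      rw [e9]
      calc A*E*s / (Nat.factorial (2*c-1) : ℝ) + A*E*((c:ℝ)*x) / (Nat.factorial (2*c-1) : ℝ)
          ≤ A*E*s / (6*8^(c-2)) + A*E*((c:ℝ)*x) / (3*(c:ℝ)*8^(c-2)) := add_le_add t1 t2
        _ = A*E*(s/6) * (1/8)^(c-2) + A*E*(x/3) * (1/8)^(c-2) := by rw [e10, e11]
        _ = A*E*(s/6 + x/3) * (1/8)^(c-2) := by ring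
    calc (u.choose c : ℝ) * ((n+c-2).choose (2*c-1) : ℝ) * x^(2*c-1) * (1+x)^(n-c)
        ≤ (A * M * E / (Nat.factorial (2*c-1) : ℝ)) * ((n+c-1).choose c : ℝ) :=
          le_trans hterm1 hterm2
      _ ≤ (A*E*(s/6 + x/3) * (1/8)^(c-2)) * ((n+c-1).choose c : ℝ) :=
          mul_le_mul_of_nonneg_right hfinal hCd.le
  -- sum the Tc bounds
  have hsum : ∑ c ∈ Icc 2 u, (u.choose c : ℝ) * ((n+c-2).choose (2*c-1) : ℝ) * x^(2*c-1) * (1+x)^(n-c)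
          / ((n+c-1).choose c : ℝ) ≤ A*E*(s/6 + x/3) * (8/7) := by
    calc ∑ c ∈ Icc 2 u, (u.choose c : ℝ) * ((n+c-2).choose (2*c-1) : ℝ) * x^(2*c-1) * (1+x)^(n-c)
          / ((n+c-1).choose c : ℝ)
        ≤ ∑ c ∈ Icc 2 u, A*E*(s/6 + x/3) * (1/8)^(c-2) := sum_le_sum hTc
      _ = A*E*(s/6 + x/3) * ∑ c ∈ Icc 2 u, ((1:ℝ)/8)^(c-2) := by rw [mul_sum]
      _ ≤ A*E*(s/6 + x/3) * (8/7) := by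
          apply mul_le_mul_of_nonneg_left (geom_eighth u)
          positivity
  -- final assembly
  have hAsE : A*s*E ≤ s := by
    have h1 : A*E ≤ (1-s)*E := mul_le_mul_of_nonneg_right (by linarith) hE0.le
    have h2 : (1-s)*E ≤ 1 := one_sub_mul_exp_le s
    calc A*s*E = s*(A*E) := by ring
      _ ≤ s*1 := by
          apply mul_le_mul_of_nonneg_left _ hs0
          linarith
      _ = s := mul_one s
  have hfin : A + A*(s/2)*E + A*E*(s/6 + x/3) * (8/7) ≤ 1 := by
    have hb1 : A*(s/2)*E = (1/2) * (A*s*E) := by ring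
    have hb2 : A*E*(s/6 + x/3) * (8/7) ≤ A*E*(s/3) * (8/7) := by
      have : s/6 + x/3 ≤ s/3 := by linarith [hsx]
      have h0 : (0:ℝ) ≤ A*E := by positivity
      nlinarith [mul_le_mul_of_nonneg_left this h0]
    have hb3 : A*E*(s/3) * (8/7) = (8/21) * (A*s*E) := by ring
    nlinarith [hAsE, hAs, hb2]
  linarith [hT1, hsum, hfin]


lemma gFun_eq_zero (b j i : ℕ) (l : ℤ) (h : l ≤ 2*(i:ℤ)) : gFun b j i l = 0 := by
  rw [gFun, if_pos h]

lemma gFun_big_struct (b j i : ℕ) (l : ℤ) (h : 1 < gFun b j i l) :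
    2 ≤ b ∧ Odd l ∧ 2*(i:ℤ) < l ∧ l < (j:ℤ) + i := by
  rw [gFun] at h
  split_ifs at h with h1 h2 h3
  · norm_num at h
  · -- l = 2i+1 branch
    push_neg at h1
    have hb : 2 ≤ b := by
      by_contra hb
      push_neg at hb
      interval_cases b <;> simp_all
      · -- b = 0 : (0/(0-1))^(j-i-1) = 0^(j-i-1) ≤ 1
        rcases Nat.eq_zero_or_pos (j-i-1) with h0 | h0
        · rw [h0] at h; norm_num at h
        · rw [zero_pow (by omega)] at h; norm_num at h
      · rcases Nat.eq_zero_or_pos (j-i-1) with h0 | h0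
        · rw [h0] at h; norm_num at h
        · rw [zero_pow (by omega)] at h; norm_num at h
    have hji : i + 2 ≤ j := by
      by_contra hji
      push_neg at hji
      have : j - i - 1 = 0 := by omega
      rw [this, pow_zero] at h
      norm_num at h
    refine ⟨hb, ?_, by omega, by omega⟩
    rw [h2]
    exact ⟨i, by ring⟩
  · -- odd branch
    obtain ⟨hodd, hlt⟩ := h3
    push_neg at h1
    refine ⟨?_, hodd, h1, hlt⟩
    by_contra hb
    push_neg at hb
    have hji : i < j := by
      by_contra hij
      push_neg at hij
      have : (j:ℤ) + i ≤ 2*i + 1 := by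
        have : (j:ℤ) ≤ i := by exact_mod_cast hij
        omega
      omega
    have hzero : hFun b j i l = 0 := by
      rw [hFun]
      interval_cases b
      · have hpos : 0 < (j:ℤ) + i - l := by omega
        rw [show ((0:ℕ):ℝ) = 0 by norm_num, zero_zpow _ (by omega)]
        simp
      · rw [show ((1:ℕ):ℝ) - 1 = 0 by norm_num, zero_pow (by omega : j - i ≠ 0)]
        simp
    rw [hzero] at h
    norm_num at h
  · norm_num at h

lemma gFun_val_c1 (b j i : ℕ) (hb : 2 ≤ b) :
    gFun b j i (2*(i:ℤ)+1) = (1+1/((b:ℝ)-1))^(j-i-1) := by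
  rw [gFun, if_neg (by omega), if_pos rfl]
  have hb1 : ((b:ℝ)-1) ≠ 0 := by
    have : (2:ℝ) ≤ (b:ℝ) := by exact_mod_cast hb
    linarith
  congr 1
  field_simp
  ring

lemma gFun_val_c2 (b j i c : ℕ) (hb : 2 ≤ b) (hc : 2 ≤ c) (hcj : i + 2*c ≤ j) :
    gFun b j i (2*(i:ℤ) + (2*(c:ℤ) - 1)) =
      1 + ((j-i-1).choose (2*c-1) : ℝ) * (1/((b:ℝ)-1))^(2*c-1) * (1+1/((b:ℝ)-1))^(j-i-(2*c-1)) := by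
  have hbR : (2:ℝ) ≤ (b:ℝ) := by exact_mod_cast hb
  have hb1 : (0:ℝ) < (b:ℝ)-1 := by linarith
  set l : ℤ := 2*(i:ℤ) + (2*(c:ℤ) - 1) with hl
  have hodd : Odd l := ⟨i + c - 1, by rw [hl]; ring⟩
  have hc2 : (2:ℤ) ≤ (c:ℤ) := by exact_mod_cast hc
  have h1 : ¬ (l ≤ 2*(i:ℤ)) := by rw [hl]; push_neg; omega
  have h2 : ¬ (l = 2*(i:ℤ)+1) := by rw [hl]; omega
  have hlt : l < (j:ℤ) + i := by
    rw [hl]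
    have h3 : (i:ℤ) + 2*c ≤ j := by exact_mod_cast hcj
    omega
  rw [gFun, if_neg h1, if_neg h2, if_pos ⟨hodd, hlt⟩]
  congr 1
  rw [hFun]
  have e1 : (l - 2*(i:ℤ)).toNat = 2*c-1 := by rw [hl]; omega
  have e2 : (j:ℤ) + i - l = ((j - i - (2*c-1) : ℕ) : ℤ) := by
    rw [hl]
    have : i + 2*c ≤ j := hcj
    push_cast [Nat.cast_sub (by omega : 2*c-1 ≤ j - i), Nat.cast_sub (by omega : i ≤ j)]
    omega
  rw [e1, e2, zpow_natCast]
  set q : ℕ := j - i - (2*c-1) with hq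
  have e3 : j - i = (2*c-1) + q := by omega
  have e4 : (b:ℝ) = (1+1/((b:ℝ)-1)) * ((b:ℝ)-1) := by field_simp; ring
  rw [e3, pow_add]
  rw [show ((b:ℝ))^q = (1+1/((b:ℝ)-1))^q * ((b:ℝ)-1)^q by rw [← mul_pow, ← e4]]
  have hne : ((b:ℝ)-1)^q ≠ 0 := by positivity
  have hne2 : ((b:ℝ)-1)^(2*c-1) ≠ 0 := by positivity
  have hb1' : (b:ℝ)-1 ≠ 0 := hb1.ne'
  field_simp
  ring_nf
  rw [mul_assoc, ← mul_pow, inv_mul_cancel₀ (ne_of_gt (by linarith)), one_pow, mul_one]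

/-- For integers `b ≥ s ≥ 1`, a nonempty `J ⊆ {1,…,s}`, and `m, k` with
`|J| ≤ m < |k| + 2|J|` (where `|k| = Σ_j k_j`), one has `G(m,s,J,k,0) ≤ 2^{|J|} − 1`. -/
theorem claim_G_medium_m (b s : ℕ) (hs : 1 ≤ s) (hbs : s ≤ b)
    (J : Finset (Fin s)) (hJ : J.Nonempty) (m : ℕ) (k : Fin s → ℕ)
    (hm1 : J.card ≤ m) (hm2 : m < (∑ j, k j) + 2 * J.card) :
    GFun b s J m k 0 ≤ (2 : ℝ) ^ J.card - 1 := by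
  classical
  have hjs : J.card ≤ s := by simpa using card_le_univ J
  have hjb : J.card ≤ b := le_trans hjs hbs
  set j := J.card with hj
  set P := J.powerset.filter (· ≠ J) with hjP
  set L : Finset (Fin s) → ℤ := fun I => (m:ℤ) - ∑ t ∈ I ∪ Jᶜ, (k t : ℤ) with hL
  set gv : Finset (Fin s) → ℝ := fun I => gFun b j I.card (L I) with hgv
  have hG : GFun b s J m k 0 = ∑ I ∈ P, gv I := by
    rw [GFun]
    apply sum_congr rfl
    intro I _
    simp only [hgv, hL, Pi.zero_apply, Nat.cast_zero, sum_const_zero, sub_zero]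
    rfl
  set w : Finset (Fin s) → Finset (Fin s) → ℝ := fun I I' =>
    if I ⊆ I' ∧ I' ∈ P ∧ (2*(I'.card:ℤ) = L I + 1) ∧ 1 < gv I
    then (gv I - 1)/(((j - I.card).choose (I'.card - I.card)) : ℝ) else 0 with hwdef
  have hw0 : ∀ I I', 0 ≤ w I I' := by
    intro I I'
    simp only [hwdef]
    split_ifs with h
    · apply div_nonneg (by linarith [h.2.2.2]) (by positivity)
    · exact le_rfl
  have hPmem : ∀ I : Finset (Fin s), I ∈ P ↔ I ⊆ J ∧ I ≠ J := by
    intro I; rw [hjP, mem_filter, mem_powerset]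
  have hPcard : ∀ I ∈ P, I.card < j := by
    intro I hI
    rw [hPmem] at hI
    exact card_lt_card (Finset.ssubset_iff_subset_ne.mpr hI)
  have hLmono : ∀ I I' : Finset (Fin s), I ⊆ I' → L I' ≤ L I := by
    intro I I' hsub
    simp only [hL]
    have h1 : ∑ t ∈ I ∪ Jᶜ, (k t : ℤ) ≤ ∑ t ∈ I' ∪ Jᶜ, (k t:ℤ) := by
      apply sum_le_sum_of_subset_of_nonneg (union_subset_union hsub (Finset.Subset.refl _))
      intros; positivity
    linarith
  -- IN0 : if gv I ≠ 0 then incoming = 0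
  have hIN0 : ∀ I ∈ P, gv I ≠ 0 → ∑ I'' ∈ P, w I'' I = 0 := by
    intro I _ hz
    apply sum_eq_zero
    intro I'' _
    simp only [hwdef]
    rw [if_neg]
    rintro ⟨hsub, _, hc2, _⟩
    apply hz
    have h1 := hLmono I'' I hsub
    apply gFun_eq_zero
    omega
  -- OUT : if gv I > 1 then gv I - 1 ≤ outgoing
  have hOUT : ∀ I ∈ P, 1 < gv I → gv I - 1 ≤ ∑ I' ∈ P, w I I' := by
    intro I hIP hbig
    obtain ⟨hb2, hodd, hl1, hl2⟩ := gFun_big_struct b j I.card (L I) hbig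
    have hIJ : I ⊆ J := ((hPmem I).mp hIP).1
    obtain ⟨r, hr⟩ := hodd
    have hr0 : 0 ≤ r := by omega
    set v : ℕ := r.toNat + 1 with hv
    have hvL : L I = 2*(v:ℤ) - 1 := by
      rw [hv]; push_cast [Int.toNat_of_nonneg hr0]; omega
    have hiv : I.card < v := by omega
    have hvj : v < j := by
      have : (v:ℤ) < j := by omega
      exact_mod_cast this
    set c : ℕ := v - I.card with hc
    set F := P.filter (fun I' => I ⊆ I' ∧ I'.card = v) with hF
    have hcount : (j - I.card).choose c ≤ F.card := by
      have e1 : (j - I.card).choose c = ((J \ I).powersetCard c).card := by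
        rw [card_powersetCard, card_sdiff_of_subset hIJ]
      rw [e1]
      apply card_le_card_of_injOn (fun S => I ∪ S)
      · intro S hS
        rw [mem_coe, mem_powersetCard] at hS
        obtain ⟨hS1, hS2⟩ := hS
        have hdisj : Disjoint I S := by
          rw [disjoint_comm]
          exact disjoint_of_subset_left hS1 sdiff_disjoint
        have hcardU : (I ∪ S).card = v := by
          rw [card_union_of_disjoint hdisj, hS2, hc]
          omega
        rw [hF, mem_coe, mem_filter]
        refine ⟨?_, subset_union_left, hcardU⟩
        rw [hPmem]
        constructor
        · apply union_subset hIJ (le_trans hS1 (sdiff_subset))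
        · intro (hEq : I ∪ S = J)
          rw [hEq] at hcardU
          omega
      · intro S1 hS1 S2 hS2 hEq
        have hEq' : I ∪ S1 = I ∪ S2 := hEq
        rw [mem_coe, mem_powersetCard] at hS1 hS2
        have d1 : Disjoint I S1 := by
          rw [disjoint_comm]; exact disjoint_of_subset_left hS1.1 sdiff_disjoint
        have d2 : Disjoint I S2 := by
          rw [disjoint_comm]; exact disjoint_of_subset_left hS2.1 sdiff_disjoint
        have : (I ∪ S1) \ I = (I ∪ S2) \ I := by rw [hEq']
        rwa [union_sdiff_cancel_left d1, union_sdiff_cancel_left d2] at this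
    have hchoosepos : 0 < (j - I.card).choose c := by
      apply Nat.choose_pos
      omega
    have heach : ∀ I' ∈ F, w I I' = (gv I - 1)/(((j - I.card).choose c):ℝ) := by
      intro I' hI'
      rw [hF, mem_filter] at hI'
      obtain ⟨hI'P, hsub', hcard'⟩ := hI'
      simp only [hwdef]
      rw [if_pos]
      · rw [hcard']
      · refine ⟨hsub', hI'P, ?_, hbig⟩
        rw [hcard', hvL]; ring
    have hFP : F ⊆ P := filter_subset _ _
    have hCpos : (0:ℝ) < ((j - I.card).choose c : ℝ) := by exact_mod_cast hchoosepos
    calc gv I - 1 = ((j - I.card).choose c : ℝ) * ((gv I - 1)/((j - I.card).choose c : ℝ)) := by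
          field_simp
      _ ≤ (F.card : ℝ) * ((gv I - 1)/((j - I.card).choose c : ℝ)) := by
          apply mul_le_mul_of_nonneg_right
          · exact_mod_cast hcount
          · apply div_nonneg (by linarith) hCpos.le
      _ = ∑ I' ∈ F, w I I' := by
          rw [sum_congr rfl heach, sum_const, nsmul_eq_mul]
      _ ≤ ∑ I' ∈ P, w I I' := by
          apply sum_le_sum_of_subset_of_nonneg hFP
          intro I' _ _
          exact hw0 I I'
  -- IN : incoming ≤ 1
  have hIN : ∀ I ∈ P, ∑ I'' ∈ P, w I'' I ≤ 1 := by
    intro I hIP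
    by_cases hex : ∀ I'' ∈ P, w I'' I = 0
    · rw [sum_eq_zero hex]; norm_num
    · push_neg at hex
      obtain ⟨I₀, hI₀P, hI₀⟩ := hex
      have hcond : I₀ ⊆ I ∧ I ∈ P ∧ (2*(I.card:ℤ) = L I₀ + 1) ∧ 1 < gv I₀ := by
        by_contra hcontra
        apply hI₀
        simp only [hwdef]
        exact if_neg hcontra
      obtain ⟨hb2, _, hgt0, _⟩ := gFun_big_struct b j I₀.card (L I₀) hcond.2.2.2
      set u := I.card with hu
      have hu1 : 1 ≤ u := by
        have h2 : 2*(u:ℤ) = L I₀ + 1 := hcond.2.2.1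
        omega
      have hult : u < j := hPcard I hIP
      set n := j - u + 1 with hn
      have hn2 : 2 ≤ n := by omega
      set x : ℝ := 1/((b:ℝ)-1) with hx
      have hbR : (2:ℝ) ≤ (b:ℝ) := by exact_mod_cast hb2
      have hbpos : (0:ℝ) < (b:ℝ)-1 := by linarith
      have hx0 : 0 < x := by rw [hx]; exact div_pos one_pos hbpos
      have hx1 : ((u:ℝ) + n - 2) * x ≤ 1 := by
        have e1 : (u:ℝ) + n - 2 = (j:ℝ) - 1 := by
          have e2 : (n:ℝ) = (j:ℝ) - u + 1 := by
            rw [hn]; push_cast [Nat.cast_sub hult.le]; ring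
          rw [e2]; ring
        rw [e1, hx, mul_one_div, div_le_one hbpos]
        have : (j:ℝ) ≤ (b:ℝ) := by exact_mod_cast hjb
        linarith
      set Ec : ℕ → ℝ := fun c =>
        (if c = 1 then ((1+x)^(n-1) - 1)
         else ((n+c-2).choose (2*c-1):ℝ) * x^(2*c-1) * (1+x)^(n-c)) / (((n+c-1).choose c):ℝ)
        with hEc
      have hEc0 : ∀ c, 0 ≤ Ec c := by
        intro c
        simp only [hEc]
        apply div_nonneg _ (by positivity)
        split_ifs
        · have h1 : (1:ℝ) ≤ (1+x)^(n-1) := one_le_pow₀ (by linarith)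
          linarith
        · positivity
      have hperelt : ∀ I'' ∈ I.powerset, w I'' I ≤ (if I''.card < u then Ec (u - I''.card) else 0) := by
        intro I'' _
        by_cases hz : w I'' I = 0
        · rw [hz]; split_ifs; exacts [hEc0 _, le_rfl]
        · have hcond'' : I'' ⊆ I ∧ I ∈ P ∧ (2*(u:ℤ) = L I'' + 1) ∧ 1 < gv I'' := by
            by_contra hcontra
            exact hz (by simp only [hwdef]; exact if_neg hcontra)
          obtain ⟨hsub'', _, hL'', hbig''⟩ := hcond''
          obtain ⟨_, hodd'', h1'', h2''⟩ := gFun_big_struct b j I''.card (L I'') hbig''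
          have hilt : I''.card < u := by omega
          rw [if_pos hilt]
          set c := u - I''.card with hcdef
          have hc1 : 1 ≤ c := by omega
          have hcu : (c:ℤ) = (u:ℤ) - I''.card := by
            rw [hcdef]; push_cast [Nat.cast_sub hilt.le]; ring
          have hLval : L I'' = 2*(I''.card:ℤ) + (2*(c:ℤ) - 1) := by omega
          have hcj : I''.card + 2*c ≤ j := by
            have h3 : 2*(I''.card:ℤ) + (2*(c:ℤ) - 1) < (j:ℤ) + I''.card := by rw [← hLval]; exact h2''
            omega
          have hwval : w I'' I = (gv I'' - 1)/(((j - I''.card).choose c):ℝ) := by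
            simp only [hwdef]
            rw [if_pos ⟨hsub'', hIP, hL'', hbig''⟩]
          have hgval : gv I'' = gFun b j I''.card (L I'') := by rw [hgv]
          rcases eq_or_lt_of_le hc1 with hc1' | hc2
          · -- c = 1
            have hceq : c = 1 := hc1'.symm
            have hLv1 : L I'' = 2*(I''.card:ℤ) + 1 := by omega
            have hval : gv I'' = (1+x)^(j - I''.card - 1) := by
              rw [hgval, hLv1, gFun_val_c1 b j I''.card hb2, hx]
            rw [hwval, hval, hceq]
            simp only [hEc, if_pos rfl]
            have e3 : j - I''.card - 1 = n - 1 := by omega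
            have e4 : j - I''.card = n + 1 - 1 := by omega
            rw [e3, e4]
            simp [Nat.choose_one_right]
          · -- c ≥ 2
            have hc2' : 2 ≤ c := hc2
            have hval : gv I'' = 1 + ((j-I''.card-1).choose (2*c-1) : ℝ) * x^(2*c-1) * (1+x)^(j-I''.card-(2*c-1)) := by
              rw [hgval, hLval, gFun_val_c2 b j I''.card c hb2 hc2' hcj, hx]
            rw [hwval, hval]
            simp only [hEc]
            rw [if_neg (by omega : ¬ c = 1)]
            have e5 : j - I''.card - 1 = n + c - 2 := by omega
            have e6 : j - I''.card - (2*c-1) = n - c := by omega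
            have e7 : j - I''.card = n + c - 1 := by omega
            rw [e5, e6, e7]
            ring_nf
            exact le_rfl
      have hstep1 : ∑ I'' ∈ P, w I'' I ≤ ∑ I'' ∈ I.powerset, w I'' I := by
        have e : ∑ I'' ∈ P, w I'' I = ∑ I'' ∈ P.filter (· ⊆ I), w I'' I := by
          symm
          apply sum_filter_of_ne
          intro X _ hX
          by_contra hns
          apply hX
          simp only [hwdef]
          rw [if_neg]
          rintro ⟨hc1, _⟩
          exact hns hc1
        rw [e]
        apply sum_le_sum_of_subset_of_nonneg
        · intro X hX
          rw [mem_filter] at hX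
          rw [mem_powerset]
          exact hX.2
        · intro X _ _
          exact hw0 X I
      have hstep2 : ∑ I'' ∈ I.powerset, w I'' I
          ≤ ∑ I'' ∈ I.powerset, (if I''.card < u then Ec (u - I''.card) else 0) :=
        sum_le_sum hperelt
      have hstep3 : ∑ I'' ∈ I.powerset, (if I''.card < u then Ec (u - I''.card) else 0)
          = ∑ c' ∈ range (u+1), (u.choose c' : ℝ) * (if c' < u then Ec (u - c') else 0) := by
        rw [Finset.sum_powerset_apply_card (fun t => if t < u then Ec (u - t) else 0)]
        apply sum_congr rfl
        intro c' _
        rw [nsmul_eq_mul]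
      have hstep4 : ∑ c' ∈ range (u+1), (u.choose c' : ℝ) * (if c' < u then Ec (u - c') else 0)
          = ∑ cc ∈ Icc 1 u, (u.choose cc : ℝ) * Ec cc := by
        rw [sum_range_succ, if_neg (lt_irrefl u), mul_zero, add_zero]
        have e8 : ∀ c' ∈ range u, (u.choose c' : ℝ) * (if c' < u then Ec (u - c') else 0)
            = (u.choose (u - c') : ℝ) * Ec (u - c') := by
          intro c' hc'
          rw [mem_range] at hc'
          rw [if_pos hc', Nat.choose_symm hc'.le]
        rw [sum_congr rfl e8]
        apply Finset.sum_nbij' (fun c' => u - c') (fun cc => u - cc)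
        · intro a ha
          simp only [mem_range] at ha
          simp only [mem_Icc]
          omega
        · intro a ha
          simp only [mem_Icc] at ha
          simp only [mem_range]
          omega
        · intro a ha
          simp only [mem_range] at ha
          omega
        · intro a ha
          simp only [mem_Icc] at ha
          omega
        · intro a ha
          simp only [mem_range] at ha
          rfl
      have hstep5 : ∑ cc ∈ Icc 1 u, (u.choose cc : ℝ) * Ec cc ≤ 1 := by
        have hins : Icc 1 u = insert 1 (Icc 2 u) := by
          ext z
          simp only [mem_Icc, mem_insert]
          omega
        have hnotmem : 1 ∉ Icc 2 u := by simp
        rw [hins, sum_insert hnotmem]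
        have e9 : (u.choose 1 : ℝ) * Ec 1 = (u:ℝ) * ((1+x)^(n-1) - 1) / n := by
          have ha : Ec 1 = ((1+x)^(n-1) - 1)/(n:ℝ) := by
            have h1 : n + 1 - 1 = n := by omega
            simp [hEc, h1]
          rw [ha, Nat.choose_one_right]
          ring
        have e10 : ∑ cc ∈ Icc 2 u, (u.choose cc : ℝ) * Ec cc
            = ∑ cc ∈ Icc 2 u, (u.choose cc : ℝ) * ((n+cc-2).choose (2*cc-1) : ℝ) * x^(2*cc-1) * (1+x)^(n-cc)
              / ((n+cc-1).choose cc : ℝ) := by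
          apply sum_congr rfl
          intro cc hcc
          simp only [mem_Icc] at hcc
          simp only [hEc]
          rw [if_neg (by omega : ¬ cc = 1)]
          ring
        rw [e9, e10]
        exact load_core u n x hu1 hn2 hx0 hx1
      calc ∑ I'' ∈ P, w I'' I ≤ ∑ I'' ∈ I.powerset, w I'' I := hstep1
        _ ≤ _ := hstep2
        _ = _ := hstep3
        _ = _ := hstep4
        _ ≤ 1 := hstep5
  -- per-I inequality
  have key : ∀ I ∈ P, gv I + (∑ I'' ∈ P, w I'' I) ≤ 1 + ∑ I' ∈ P, w I I' := by
    intro I hIP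
    have houtnn : 0 ≤ ∑ I' ∈ P, w I I' := sum_nonneg (fun I' _ => hw0 I I')
    by_cases hbig : 1 < gv I
    · have hin := hIN0 I hIP (by linarith)
      have hout := hOUT I hIP hbig
      linarith
    · push_neg at hbig
      by_cases hz : gv I = 0
      · have hin := hIN I hIP
        rw [hz]
        linarith
      · have hin := hIN0 I hIP hz
        linarith
  -- conclude
  have swap : ∑ I ∈ P, ∑ I' ∈ P, w I I' = ∑ I ∈ P, ∑ I' ∈ P, w I' I := Finset.sum_comm
  have total : ∑ I ∈ P, gv I ≤ (P.card : ℝ) := by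
    have h1 : ∑ I ∈ P, (gv I + ∑ I'' ∈ P, w I'' I) ≤ ∑ I ∈ P, (1 + ∑ I' ∈ P, w I I') :=
      sum_le_sum key
    rw [sum_add_distrib, sum_add_distrib, sum_const, nsmul_eq_mul, mul_one] at h1
    rw [← swap] at h1
    linarith
  have hcard : (P.card : ℝ) = 2^j - 1 := by
    have e1 : P = J.powerset.erase J := by
      rw [hjP, filter_ne']
    rw [e1, card_erase_of_mem (mem_powerset_self J), card_powerset]
    have h2 : 1 ≤ 2^J.card := Nat.one_le_two_pow
    push_cast [Nat.cast_sub h2]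
    norm_num
    rfl
  rw [hG]
  rw [hcard] at total
  exact total
end

section
/- Fix an integer base b ≥ 2. If g₀ ≥ 0 is a real constant such that G(m,s,J,k,0) ≤ g₀ for all integers s ≥ 1, m ∈ ℕ, subsets J ⊆ {1,…,s}, and vectors k ∈ ℕ^s, then G(m,s,J,k,d) ≤ g₀ for all integers s ≥ 1, m ∈ ℕ, subsets J ⊆ {1,…,s}, and vectors k, d ∈ ℕ^s. -/
open Finset
open scoped Classical

/-- If `g₀ ≥ 0` is a constant with `G(m,s,J,k,0) ≤ g₀` for all `s ≥ 1`, `m`, `J ⊆ {1,…,s}`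
and `k ∈ ℕ^s`, then `G(m,s,J,k,d) ≤ g₀` for all such data and all `d ∈ ℕ^s`. -/
theorem claim_G_reduce_d (b : ℕ) (hb : 2 ≤ b) (g0 : ℝ) (hg0 : 0 ≤ g0)
    (h : ∀ (s : ℕ), 1 ≤ s → ∀ (m : ℕ) (J : Finset (Fin s)) (k : Fin s → ℕ),
      GFun b s J m k 0 ≤ g0) :
    ∀ (s : ℕ), 1 ≤ s → ∀ (m : ℕ) (J : Finset (Fin s)) (k d : Fin s → ℕ),
      GFun b s J m k d ≤ g0 := by
  intro s hs m J k d
  set D : ℕ := ∑ j ∈ J, d j with hD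
  by_cases hm : D ≤ m
  · have := h s hs (m - D) J k
    have heq : GFun b s J m k d = GFun b s J (m - D) k 0 := by
      unfold GFun
      refine Finset.sum_congr rfl fun I _ => ?_
      congr 1
      have : ∑ j ∈ J, ((d j : ℤ)) = (D : ℤ) := by
        rw [hD]; push_cast; rfl
      simp [this, Nat.cast_sub hm]
      ring
    rw [heq]; exact this
  · have heq : GFun b s J m k d = 0 := by
      unfold GFun
      refine Finset.sum_eq_zero fun I _ => ?_
      have h1 : (m : ℤ) - ∑ j ∈ I ∪ Jᶜ, (k j : ℤ) - ∑ j ∈ J, (d j : ℤ)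
          ≤ 2 * (I.card : ℤ) := by
        have hk : (0 : ℤ) ≤ ∑ j ∈ I ∪ Jᶜ, (k j : ℤ) :=
          Finset.sum_nonneg fun j _ => by positivity
        have hd : (D : ℤ) = ∑ j ∈ J, (d j : ℤ) := by rw [hD]; push_cast; rfl
        have : (m : ℤ) < (D : ℤ) := by exact_mod_cast Nat.lt_of_not_le hm
        have hi : (0 : ℤ) ≤ 2 * (I.card : ℤ) := by positivity
        omega
      simp [gFun, h1]
    rw [heq]; exact hg0
end

section
/- Let b, s be integers with b ≥ s ≥ 1 and let J ⊆ {1,…,s} be nonempty. For every integer m with |J| ≤ m < 2|J|, one has G(m,s,J,0,0) ≤ G(2|J|−1,s,J,0,0) = 2^{|J|} − 1, where 0 denotes the zero vector in ℕ^s. -/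
open Finset
open scoped Classical

section Aux

lemma L1 (b : ℕ) : ∀ c : ℕ, b ^ c * (b - 1 - c) ≤ (b - 1) ^ (c + 1) := by
  intro c
  induction c with
  | zero => simp
  | succ c ih =>
    have key : b * (b - 1 - (c + 1)) ≤ (b - 1 - c) * (b - 1) := by
      rcases le_or_gt b (c + 2) with h | h
      · have : b - 1 - (c+1) = 0 := by omega
        simp [this]
      · obtain ⟨e, rfl⟩ : ∃ e, b = c + 2 + e + 1 := ⟨b - c - 3, by omega⟩
        have h1 : c + 2 + e + 1 - 1 - (c + 1) = e + 1 := by omega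
        have h2 : c + 2 + e + 1 - 1 - c = e + 2 := by omega
        have h3 : c + 2 + e + 1 - 1 = c + e + 2 := by omega
        rw [h1, h2, h3]
        nlinarith
    calc b ^ (c+1) * (b - 1 - (c+1)) = b ^ c * (b * (b - 1 - (c+1))) := by ring
      _ ≤ b ^ c * ((b - 1 - c) * (b - 1)) := Nat.mul_le_mul_left _ key
      _ = (b ^ c * (b - 1 - c)) * (b - 1) := by ring
      _ ≤ (b - 1) ^ (c+1) * (b - 1) := Nat.mul_le_mul_right _ ih
      _ = (b - 1) ^ (c + 1 + 1) := by ring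

lemma L2 (b c : ℕ) (h : 2 * c + 1 ≤ b) : b ^ c ≤ 2 * (b - 1) ^ c := by
  rcases Nat.eq_zero_or_pos c with rfl | hc
  · simp
  have hb1 : 0 < b - 1 := by omega
  have key : b ^ c * (b - 1) ≤ (2 * (b - 1) ^ c) * (b - 1) := by
    calc b ^ c * (b - 1) ≤ b ^ c * (2 * (b - 1 - c)) := Nat.mul_le_mul_left _ (by omega)
      _ = 2 * (b ^ c * (b - 1 - c)) := by ring
      _ ≤ 2 * (b - 1) ^ (c + 1) := Nat.mul_le_mul_left _ (L1 b c)
      _ = (2 * (b - 1) ^ c) * (b - 1) := by ring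
  exact Nat.le_of_mul_le_mul_right key hb1

lemma core (b a c x : ℕ) (ha : 3 ≤ a) (hb : 2 * c + 1 ≤ b) (hx : x ≤ b - 1) :
    b ^ c * c * x.choose a ≤ (b - 1) ^ (a + c) * (a + c) := by
  have h6 : 2 * x.choose a ≤ (b - 1) ^ a := by
    calc 2 * x.choose a ≤ a.factorial * x.choose a :=
          Nat.mul_le_mul_right _ (le_trans (by decide) (Nat.factorial_le ha))
      _ = x.descFactorial a := (Nat.descFactorial_eq_factorial_mul_choose x a).symm
      _ ≤ x ^ a := Nat.descFactorial_le_pow x a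
      _ ≤ (b - 1) ^ a := Nat.pow_le_pow_left hx a
  calc b ^ c * c * x.choose a = b ^ c * (c * x.choose a) := by ring
    _ ≤ (2 * (b - 1) ^ c) * (c * x.choose a) := Nat.mul_le_mul_right _ (L2 b c hb)
    _ = (b - 1) ^ c * (c * (2 * x.choose a)) := by ring
    _ ≤ (b - 1) ^ c * ((a + c) * ((b - 1) ^ a)) :=
        Nat.mul_le_mul_left _ (Nat.mul_le_mul (by omega) h6)
    _ = (b - 1) ^ (a + c) * (a + c) := by rw [pow_add]; ring

lemma trinomial (n j a c : ℕ) (h : n = j + a + c) :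
    n.choose j * (a + c).choose a = n.choose (j + a) * (j + a).choose a := by
  have e1 : n.choose j * j.factorial * (a + c).factorial = n.factorial := by
    have := Nat.choose_mul_factorial_mul_factorial (show j ≤ n by omega)
    rwa [show n - j = a + c by omega] at this
  have e2 : (a + c).choose a * a.factorial * c.factorial = (a + c).factorial := by
    have := Nat.choose_mul_factorial_mul_factorial (show a ≤ a + c by omega)
    rwa [show a + c - a = c by omega] at this
  have e3 : n.choose (j + a) * (j + a).factorial * c.factorial = n.factorial := by
    have := Nat.choose_mul_factorial_mul_factorial (show j + a ≤ n by omega)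
    rwa [show n - (j + a) = c by omega] at this
  have e4 : (j + a).choose a * a.factorial * j.factorial = (j + a).factorial := by
    have := Nat.choose_mul_factorial_mul_factorial (show a ≤ j + a by omega)
    rwa [show j + a - a = j by omega] at this
  have hpos : 0 < j.factorial * a.factorial * c.factorial :=
    Nat.mul_pos (Nat.mul_pos j.factorial_pos a.factorial_pos) c.factorial_pos
  apply Nat.eq_of_mul_eq_mul_right hpos
  calc n.choose j * (a + c).choose a * (j.factorial * a.factorial * c.factorial)
      = (n.choose j * j.factorial) * ((a + c).choose a * a.factorial * c.factorial) := by ring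
    _ = (n.choose j * j.factorial) * (a + c).factorial := by rw [e2]
    _ = n.factorial := by rw [← e1]
    _ = n.choose (j + a) * (j + a).factorial * c.factorial := e3.symm
    _ = n.choose (j + a) * ((j + a).choose a * a.factorial * j.factorial) * c.factorial := by
        rw [e4]
    _ = n.choose (j + a) * (j + a).choose a * (j.factorial * a.factorial * c.factorial) := by
        ring

lemma step2 (a c : ℕ) (hc : 1 ≤ c) : c * (a + c).choose a = (a + c) * (a + c - 1).choose a := by
  obtain ⟨d, rfl⟩ : ∃ d, c = d + 1 := ⟨c - 1, by omega⟩
  have key := Nat.add_one_mul_choose_eq (a + d) d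
  have s1 : (a + d).choose d = (a + d).choose a := by
    rw [← Nat.choose_symm (show d ≤ a + d by omega)]; congr 1; omega
  have s2 : (a + d + 1).choose (d + 1) = (a + d + 1).choose a := by
    rw [← Nat.choose_symm (show d + 1 ≤ a + d + 1 by omega)]; congr 1; omega
  rw [s1, s2] at key
  rw [show a + (d + 1) - 1 = a + d by omega, show a + (d + 1) = a + d + 1 by omega]
  linarith [key]

lemma hterm_nat (b n j a c : ℕ) (hn : n = j + a + c) (ha : 3 ≤ a) (hc : 1 ≤ c)
    (hcj : c ≤ j) (hb : n ≤ b) :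
    b ^ c * (a + c - 1).choose a * n.choose j ≤ (b - 1) ^ (a + c) * n.choose (j + a) := by
  have hK : 0 < c * (a + c).choose a :=
    Nat.mul_pos hc (Nat.choose_pos (by omega))
  apply Nat.le_of_mul_le_mul_right _ hK
  calc b ^ c * (a + c - 1).choose a * n.choose j * (c * (a + c).choose a)
      = (b ^ c * c) * (n.choose j * (a + c).choose a) * (a + c - 1).choose a := by ring
    _ = (b ^ c * c) * (n.choose (j + a) * (j + a).choose a) * (a + c - 1).choose a := by
        rw [trinomial n j a c hn]
    _ = (b ^ c * c * (j + a).choose a) * (n.choose (j + a) * (a + c - 1).choose a) := by ring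
    _ ≤ ((b - 1) ^ (a + c) * (a + c)) * (n.choose (j + a) * (a + c - 1).choose a) := by
        apply Nat.mul_le_mul_right
        exact core b a c (j + a) ha (by omega) (by omega)
    _ = ((b - 1) ^ (a + c) * n.choose (j + a)) * ((a + c) * (a + c - 1).choose a) := by ring
    _ = (b - 1) ^ (a + c) * n.choose (j + a) * (c * (a + c).choose a) := by
        rw [← step2 a c hc]

lemma peak_scalar_nat (b n i t : ℕ) (hn : n = i + t + 1) (ht : 1 ≤ t) (hti : t ≤ i)
    (hb : n ≤ b) : n.choose i * t ≤ n.choose (i + 1) * (b - 1 - t) := by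
  have key := Nat.choose_succ_right_eq n i
  rw [show n - i = t + 1 by omega] at key
  have h2 : t * (i + 1) ≤ (t + 1) * (b - 1 - t) := by
    have h3 : i ≤ b - 1 - t := by omega
    calc t * (i + 1) = t * i + t := by ring
      _ ≤ t * i + i := by omega
      _ = (t + 1) * i := by ring
      _ ≤ (t + 1) * (b - 1 - t) := Nat.mul_le_mul_left _ h3
  apply Nat.le_of_mul_le_mul_right _ (show 0 < i + 1 by omega)
  calc n.choose i * t * (i + 1) = n.choose i * (t * (i + 1)) := by ring
    _ ≤ n.choose i * ((t + 1) * (b - 1 - t)) := Nat.mul_le_mul_left _ h2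
    _ = (n.choose i * (t + 1)) * (b - 1 - t) := by ring
    _ = (n.choose (i + 1) * (i + 1)) * (b - 1 - t) := by rw [key]
    _ = n.choose (i + 1) * (b - 1 - t) * (i + 1) := by ring

lemma peak_real (b n i t : ℕ) (hn : n = i + t + 1) (ht : 1 ≤ t) (hti : t ≤ i)
    (hb : n ≤ b) :
    (n.choose i : ℝ) * ((b / ((b : ℝ) - 1)) ^ t) ≤ n.choose i + n.choose (i + 1) := by
  have hb3 : 3 ≤ b := by omega
  have hbt : t + 2 ≤ b := by omega
  have h1R : (0 : ℝ) < (b : ℝ) - 1 := by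
    have : (3 : ℝ) ≤ (b : ℝ) := by exact_mod_cast hb3
    linarith
  have htR : (0 : ℝ) < (b : ℝ) - 1 - t := by
    have : (t : ℝ) + 2 ≤ (b : ℝ) := by exact_mod_cast hbt
    linarith
  rw [div_pow, ← mul_div_assoc, div_le_iff₀ (by positivity : (0:ℝ) < ((b:ℝ)-1)^t)]
  -- goal : ↑(n.choose i) * ↑b ^ t ≤ (↑(n.choose i) + ↑(n.choose (i+1))) * (↑b - 1) ^ t
  apply le_of_mul_le_mul_right _ htR
  have hL1 : ((b : ℝ)) ^ t * ((b : ℝ) - 1 - t) ≤ ((b : ℝ) - 1) ^ (t + 1) := by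
    have := L1 b t
    have hcast : (((b - 1 - t : ℕ)) : ℝ) = (b : ℝ) - 1 - t := by
      push_cast [Nat.cast_sub (show t ≤ b - 1 by omega), Nat.cast_sub (show 1 ≤ b by omega)]
      ring
    calc ((b : ℝ)) ^ t * ((b : ℝ) - 1 - t) = ((b ^ t * (b - 1 - t) : ℕ) : ℝ) := by
          push_cast [hcast]; ring
      _ ≤ (((b - 1) ^ (t + 1) : ℕ) : ℝ) := by exact_mod_cast this
      _ = ((b : ℝ) - 1) ^ (t + 1) := by
          push_cast [Nat.cast_sub (show 1 ≤ b by omega)]; ring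
  have hscalar : (n.choose i : ℝ) * ((b : ℝ) - 1) ≤
      ((n.choose i : ℝ) + n.choose (i + 1)) * ((b : ℝ) - 1 - t) := by
    have := peak_scalar_nat b n i t hn ht hti hb
    have hcast : (((b - 1 - t : ℕ)) : ℝ) = (b : ℝ) - 1 - t := by
      push_cast [Nat.cast_sub (show t ≤ b - 1 by omega), Nat.cast_sub (show 1 ≤ b by omega)]
      ring
    have hR : (n.choose i : ℝ) * t ≤ (n.choose (i + 1) : ℝ) * ((b : ℝ) - 1 - t) := by
      calc (n.choose i : ℝ) * t = ((n.choose i * t : ℕ) : ℝ) := by push_cast; ring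
        _ ≤ ((n.choose (i + 1) * (b - 1 - t) : ℕ) : ℝ) := by exact_mod_cast this
        _ = (n.choose (i + 1) : ℝ) * ((b : ℝ) - 1 - t) := by push_cast [hcast]; ring
    nlinarith [Nat.choose_pos (show i ≤ n by omega), htR]
  calc (n.choose i : ℝ) * (b : ℝ) ^ t * ((b : ℝ) - 1 - t)
      = (n.choose i : ℝ) * ((b : ℝ) ^ t * ((b : ℝ) - 1 - t)) := by ring
    _ ≤ (n.choose i : ℝ) * ((b : ℝ) - 1) ^ (t + 1) := by
        apply mul_le_mul_of_nonneg_left hL1 (by positivity)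
    _ = ((b : ℝ) - 1) ^ t * ((n.choose i : ℝ) * ((b : ℝ) - 1)) := by ring
    _ ≤ ((b : ℝ) - 1) ^ t * (((n.choose i : ℝ) + n.choose (i + 1)) * ((b : ℝ) - 1 - t)) := by
        apply mul_le_mul_of_nonneg_left hscalar (by positivity)
    _ = ((n.choose i : ℝ) + n.choose (i + 1)) * ((b : ℝ) - 1) ^ t * ((b : ℝ) - 1 - t) := by
        ring

lemma GFun_eq (b s : ℕ) (J : Finset (Fin s)) (m : ℕ) :
    GFun b s J m 0 0 =
      ∑ j ∈ Finset.range J.card, (J.card.choose j : ℝ) * gFun b J.card j (m : ℤ) := by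
  unfold GFun
  simp only [Pi.zero_apply, Nat.cast_zero, Finset.sum_const_zero, sub_zero]
  rw [Finset.filter_ne', Finset.sum_erase_eq_sub (Finset.mem_powerset_self J)]
  rw [show (∑ I ∈ J.powerset, gFun b J.card I.card (m : ℤ))
      = ∑ j ∈ Finset.range (J.card + 1), J.card.choose j • gFun b J.card j (m : ℤ) from
    Finset.sum_powerset_apply_card (f := fun c => gFun b J.card c (m : ℤ)) (x := J)]
  rw [Finset.sum_range_succ, Nat.choose_self, one_smul]
  rw [add_sub_cancel_right]
  exact Finset.sum_congr rfl fun j _ => (nsmul_eq_mul _ _)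

lemma sum_range_choose_real (n : ℕ) :
    ∑ j ∈ Finset.range n, ((n.choose j : ℕ) : ℝ) = 2 ^ n - 1 := by
  have hs : ∑ j ∈ Finset.range (n + 1), ((n.choose j : ℕ) : ℝ) = 2 ^ n := by
    exact_mod_cast congrArg (Nat.cast : ℕ → ℝ) (Nat.sum_range_choose n)
  rw [Finset.sum_range_succ, Nat.choose_self] at hs
  push_cast at hs ⊢
  linarith

lemma gFun_at_top (b n j : ℕ) (hn : 1 ≤ n) (hj : j < n) :
    gFun b n j ((2 * n - 1 : ℕ) : ℤ) = 1 := by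
  have hc : ((2 * n - 1 : ℕ) : ℤ) = 2 * (n : ℤ) - 1 := by omega
  unfold gFun
  rw [hc, if_neg (by omega)]
  by_cases hje : j = n - 1
  · rw [if_pos (by omega)]
    rw [show n - j - 1 = 0 by omega, pow_zero]
  · rw [if_neg (by omega), if_neg (by rintro ⟨-, h2⟩; omega)]

lemma hterm_real (b n j a c : ℕ) (hn : n = j + a + c) (ha : 3 ≤ a) (hc : 1 ≤ c)
    (hcj : c ≤ j) (hb : n ≤ b) :
    (n.choose j : ℝ) * ((b : ℝ) ^ c / ((b : ℝ) - 1) ^ (a + c) * ((a + c - 1).choose a : ℝ))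
      ≤ (n.choose (j + a) : ℝ) := by
  have hb4 : 4 ≤ b := by omega
  have hbR : (0 : ℝ) < (b : ℝ) - 1 := by
    have : (4 : ℝ) ≤ (b : ℝ) := by exact_mod_cast hb4
    linarith
  have key : (b : ℝ) ^ c * ((a + c - 1).choose a : ℝ) * (n.choose j : ℝ) ≤
      ((b : ℝ) - 1) ^ (a + c) * (n.choose (j + a) : ℝ) := by
    have h := hterm_nat b n j a c hn ha hc hcj hb
    have hcast : ((b - 1 : ℕ) : ℝ) = (b : ℝ) - 1 := by
      push_cast [Nat.cast_sub (show 1 ≤ b by omega)]; ring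
    calc (b : ℝ) ^ c * ((a + c - 1).choose a : ℝ) * (n.choose j : ℝ)
        = ((b ^ c * (a + c - 1).choose a * n.choose j : ℕ) : ℝ) := by push_cast; ring
      _ ≤ (((b - 1) ^ (a + c) * n.choose (j + a) : ℕ) : ℝ) := by exact_mod_cast h
      _ = ((b : ℝ) - 1) ^ (a + c) * (n.choose (j + a) : ℝ) := by
          push_cast [hcast]; ring
  rw [show (n.choose j : ℝ) *
        ((b : ℝ) ^ c / ((b : ℝ) - 1) ^ (a + c) * ((a + c - 1).choose a : ℝ))
      = ((b : ℝ) ^ c * ((a + c - 1).choose a : ℝ) * (n.choose j : ℝ)) / ((b : ℝ) - 1) ^ (a + c)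
      from by ring, div_le_iff₀ (by positivity)]
  linarith [key]

end Aux

/-- For integers `b ≥ s ≥ 1` and a nonempty `J ⊆ {1,…,s}`: for every `m` with
`|J| ≤ m < 2|J|`, `G(m,s,J,0,0) ≤ G(2|J|−1,s,J,0,0) = 2^{|J|} − 1`. -/

theorem claim_G_max_at_odd (b s : ℕ) (hs : 1 ≤ s) (hbs : s ≤ b)
    (J : Finset (Fin s)) (hJ : J.Nonempty) (m : ℕ)
    (hm1 : J.card ≤ m) (hm2 : m < 2 * J.card) :
    GFun b s J m 0 0 ≤ GFun b s J (2 * J.card - 1) 0 0 ∧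
    GFun b s J (2 * J.card - 1) 0 0 = (2 : ℝ) ^ J.card - 1 := by
  have hn1 : 1 ≤ J.card := hJ.card_pos
  have hnb : J.card ≤ b := le_trans (by simpa using J.card_le_univ) hbs
  set n := J.card with hndef
  have heq : GFun b s J (2 * n - 1) 0 0 = (2 : ℝ) ^ n - 1 := by
    rw [GFun_eq]
    rw [Finset.sum_congr rfl (fun j hj => by
      rw [gFun_at_top b n j hn1 (Finset.mem_range.1 hj), mul_one])]
    exact sum_range_choose_real n
  refine ⟨?_, heq⟩
  rcases eq_or_lt_of_le (show m ≤ 2 * n - 1 by omega) with hme | hmlt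
  · rw [hme]
  · rw [heq, GFun_eq, ← sum_range_choose_real n]
    rcases Nat.even_or_odd m with he | ho
    · -- even case : every gFun value is ≤ 1
      apply Finset.sum_le_sum
      intro j hj
      have hg : gFun b n j (m : ℤ) ≤ 1 := by
        unfold gFun
        obtain ⟨r, hr⟩ := he
        split_ifs with h1 h2 h3
        · norm_num
        · exfalso; omega
        · exfalso
          have := h3.1
          rw [Int.odd_iff] at this
          omega
        · exact le_rfl
      calc (n.choose j : ℝ) * gFun b n j (m : ℤ) ≤ (n.choose j : ℝ) * 1 :=
            mul_le_mul_of_nonneg_left hg (by positivity)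
        _ = (n.choose j : ℝ) := mul_one _
    · obtain ⟨i0, hm0⟩ := ho
      have hm0' : m = 2 * i0 + 1 := by omega
      set t := n - 1 - i0 with htdef
      have hi0n : i0 + 1 ≤ n - 1 := by omega
      have ht1 : 1 ≤ t := by omega
      have hti : t ≤ i0 := by omega
      have hn3 : 3 ≤ n := by omega
      have hb1 : (m + 1 - n : ℕ) ≤ i0 + 1 := by omega
      have hsplitg : ∑ j ∈ range n, (n.choose j : ℝ) * gFun b n j (m : ℤ) =
          (∑ j ∈ Ico 0 (m + 1 - n), (n.choose j : ℝ) * gFun b n j (m : ℤ)) +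
          (∑ j ∈ Ico (m + 1 - n) (i0 + 1), (n.choose j : ℝ) * gFun b n j (m : ℤ)) +
          (∑ j ∈ Ico (i0 + 1) n, (n.choose j : ℝ) * gFun b n j (m : ℤ)) := by
        rw [Finset.sum_Ico_consecutive _ (by omega : (0:ℕ) ≤ m + 1 - n) hb1,
            Finset.sum_Ico_consecutive _ (by omega : (0:ℕ) ≤ i0 + 1) (by omega : i0 + 1 ≤ n),
            Finset.range_eq_Ico]
      have hsplitT : ∑ j ∈ range n, ((n.choose j : ℕ) : ℝ) =
          (∑ j ∈ Ico 0 (m + 1 - n), ((n.choose j : ℕ) : ℝ)) +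
          (∑ j ∈ Ico (m + 1 - n) (i0 + 1), ((n.choose j : ℕ) : ℝ)) +
          (∑ j ∈ Ico (i0 + 1) n, ((n.choose j : ℕ) : ℝ)) := by
        rw [Finset.sum_Ico_consecutive _ (by omega : (0:ℕ) ≤ m + 1 - n) hb1,
            Finset.sum_Ico_consecutive _ (by omega : (0:ℕ) ≤ i0 + 1) (by omega : i0 + 1 ≤ n),
            Finset.range_eq_Ico]
      have hS1 : ∑ j ∈ Ico 0 (m + 1 - n), (n.choose j : ℝ) * gFun b n j (m : ℤ) =
          ∑ j ∈ Ico 0 (m + 1 - n), ((n.choose j : ℕ) : ℝ) := by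
        apply Finset.sum_congr rfl
        intro j hj
        simp only [Finset.mem_Ico] at hj
        have hg : gFun b n j (m : ℤ) = 1 := by
          unfold gFun
          rw [if_neg (by omega), if_neg (by omega), if_neg (by rintro ⟨-, h⟩; omega)]
        rw [hg, mul_one]
      have hS3 : ∑ j ∈ Ico (i0 + 1) n, (n.choose j : ℝ) * gFun b n j (m : ℤ) = 0 := by
        apply Finset.sum_eq_zero
        intro j hj
        simp only [Finset.mem_Ico] at hj
        have hg : gFun b n j (m : ℤ) = 0 := by
          unfold gFun
          rw [if_pos (by omega)]
        rw [hg, mul_zero]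
      have hrefl : ∑ j ∈ Ico (m + 1 - n) (i0 + 1), ((n.choose (m - j) : ℕ) : ℝ) =
          ∑ j ∈ Ico (i0 + 1) n, ((n.choose j : ℕ) : ℝ) := by
        refine Finset.sum_nbij' (fun j => m - j) (fun j => m - j) ?_ ?_ ?_ ?_ ?_
        · intro a ha; simp only [Finset.mem_Ico] at *; omega
        · intro a ha; simp only [Finset.mem_Ico] at *; omega
        · intro a ha; simp only [Finset.mem_Ico] at ha; show m - (m - a) = a; omega
        · intro a ha; simp only [Finset.mem_Ico] at ha; show m - (m - a) = a; omega
        · intro a ha; rfl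
      have hS2 : ∑ j ∈ Ico (m + 1 - n) (i0 + 1), (n.choose j : ℝ) * gFun b n j (m : ℤ) ≤
          ∑ j ∈ Ico (m + 1 - n) (i0 + 1),
            (((n.choose j : ℕ) : ℝ) + ((n.choose (m - j) : ℕ) : ℝ)) := by
        apply Finset.sum_le_sum
        intro j hj
        simp only [Finset.mem_Ico] at hj
        rcases eq_or_lt_of_le (show j ≤ i0 by omega) with hji | hji
        · subst hji
          have hg : gFun b n j (m : ℤ) = ((b : ℝ) / ((b : ℝ) - 1)) ^ t := by
            unfold gFun
            rw [if_neg (by omega), if_pos (by omega)]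
            congr 1
            omega
          rw [hg, show m - j = j + 1 by omega]
          exact peak_real b n j t (by omega) ht1 hti hnb
        · set a := m - 2 * j with hadef
          set c := n + j - m with hcdef
          have ha3 : 3 ≤ a := by omega
          have hc1 : 1 ≤ c := by omega
          have hg : gFun b n j (m : ℤ) = 1 + hFun b n j (m : ℤ) := by
            unfold gFun
            rw [if_neg (by omega), if_neg (by omega),
                if_pos ⟨Int.odd_iff.2 (by omega), by omega⟩]
          have hh : hFun b n j (m : ℤ) =
              (b : ℝ) ^ c / ((b : ℝ) - 1) ^ (a + c) * (((a + c - 1).choose a : ℕ) : ℝ) := by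
            unfold hFun
            rw [show (n : ℤ) + (j : ℤ) - (m : ℤ) = ((c : ℕ) : ℤ) by omega, zpow_natCast,
                show ((m : ℤ) - 2 * (j : ℤ)).toNat = a by omega,
                show n - j = a + c by omega]
          have hkey := hterm_real b n j a c (by omega) ha3 hc1 (by omega) hnb
          rw [hg, hh, mul_add, mul_one, show m - j = j + a by omega]
          have hCpos : (0 : ℝ) ≤ (n.choose j : ℝ) := by positivity
          linarith [hkey]
      have hT2 : ∑ j ∈ Ico (m + 1 - n) (i0 + 1),
            (((n.choose j : ℕ) : ℝ) + ((n.choose (m - j) : ℕ) : ℝ)) =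
          (∑ j ∈ Ico (m + 1 - n) (i0 + 1), ((n.choose j : ℕ) : ℝ)) +
          (∑ j ∈ Ico (i0 + 1) n, ((n.choose j : ℕ) : ℝ)) := by
        rw [Finset.sum_add_distrib, hrefl]
      rw [hsplitg, hsplitT]
      rw [hT2] at hS2
      linarith [hS1, hS2, hS3]
end

section
/- Let b, i, j, ℓ be integers with 0 ≤ i < j ≤ b and 2i < ℓ < i + j. Then g_{j,i}(ℓ) ≤ (b/(b−1))^{i+j−ℓ}. -/
open Finset
open scoped Classical

/-- Key combinatorial estimate: `2·C(t+e−1, t) ≤ e·(t+e−1)^(t−1)` for `t ≥ 3`, `e ≥ 1`. -/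
lemma two_choose_le_aux (t e : ℕ) (ht : 3 ≤ t) (he : 1 ≤ e) :
    2 * Nat.choose (t + e - 1) t ≤ e * (t + e - 1) ^ (t - 1) := by
  set n := t + e - 1 with hn
  by_cases h : t ≤ 2 * e + 1
  · -- use t! · C(n,t) ≤ n^t and 2n ≤ e·t!
    have h1 : (Nat.factorial t) * Nat.choose n t ≤ n ^ t := by
      rw [← Nat.descFactorial_eq_factorial_mul_choose]
      exact Nat.descFactorial_le_pow n t
    have h6 : 6 ≤ (Nat.factorial t) := by
      calc (6 : ℕ) = Nat.factorial 3 := rfl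
        _ ≤ (Nat.factorial t) := Nat.factorial_le ht
    have h2 : 2 * n ≤ e * (Nat.factorial t) := by
      have hne : 2 * n ≤ 6 * e := by omega
      calc 2 * n ≤ 6 * e := hne
        _ ≤ (Nat.factorial t) * e := Nat.mul_le_mul_right e h6
        _ = e * (Nat.factorial t) := Nat.mul_comm _ _
    have hpow : n ^ t = n * n ^ (t - 1) := by
      conv_lhs => rw [show t = 1 + (t - 1) by omega]
      rw [pow_add, pow_one]
    refine Nat.le_of_mul_le_mul_left ?_ (Nat.factorial_pos t)
    calc (Nat.factorial t) * (2 * Nat.choose n t) = 2 * ((Nat.factorial t) * Nat.choose n t) := by ring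
      _ ≤ 2 * n ^ t := Nat.mul_le_mul_left 2 h1
      _ = (2 * n) * n ^ (t - 1) := by rw [hpow]; ring
      _ ≤ (e * (Nat.factorial t)) * n ^ (t - 1) := Nat.mul_le_mul_right _ h2
      _ = (Nat.factorial t) * (e * n ^ (t - 1)) := by ring
  · -- t ≥ 2e+2 : use symmetry C(n,t) = C(n,e−1) ≤ n^(e−1)
    have hsym : Nat.choose n t = Nat.choose n (e - 1) := by
      have h3 : n - t = e - 1 := by omega
      rw [← Nat.choose_symm (by omega : t ≤ n), h3]
    have h1 : Nat.choose n (e - 1) ≤ n ^ (e - 1) := Nat.choose_le_pow n (e - 1)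
    have hn2 : 2 ≤ n := by omega
    have hee : e ≤ t - 1 := by omega
    calc 2 * Nat.choose n t = 2 * Nat.choose n (e - 1) := by rw [hsym]
      _ ≤ 2 * n ^ (e - 1) := Nat.mul_le_mul_left 2 h1
      _ ≤ n * n ^ (e - 1) := Nat.mul_le_mul_right _ hn2
      _ = n ^ e := by
          conv_rhs => rw [show e = 1 + (e - 1) by omega]
          rw [pow_add, pow_one]
      _ ≤ n ^ (t - 1) := Nat.pow_le_pow_right (by omega) hee
      _ ≤ e * n ^ (t - 1) := Nat.le_mul_of_pos_left _ he

/-- The main real inequality in the odd case. -/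
lemma real_main_aux (t e : ℕ) (x y : ℝ) (ht3 : 3 ≤ t) (he1 : 1 ≤ e) (hy1 : 1 ≤ y)
    (hx : x = y + 1) (hyn : ((t + e - 1 : ℕ) : ℝ) ≤ y) :
    1 + x ^ e / y ^ (t + e) * (Nat.choose (t + e - 1) t : ℝ) ≤ (x / y) ^ e := by
  have hy0 : (0 : ℝ) < y := by linarith
  have hx0 : (0 : ℝ) < x := by rw [hx]; linarith
  set C : ℝ := (Nat.choose (t + e - 1) t : ℝ) with hCdef
  have hC0 : (0 : ℝ) ≤ C := by positivity
  have hey : (e : ℝ) ≤ y := by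
    have : (e : ℝ) ≤ ((t + e - 1 : ℕ) : ℝ) := by exact_mod_cast (by omega : e ≤ t + e - 1)
    linarith
  have he1R : (1 : ℝ) ≤ (e : ℝ) := by exact_mod_cast he1
  have hye : y ^ e = y ^ (e - 1) * y := by
    conv_lhs => rw [show e = (e - 1) + 1 by omega]
    rw [pow_succ]
  have hyt : y ^ t = y ^ (t - 1) * y := by
    conv_lhs => rw [show t = (t - 1) + 1 by omega]
    rw [pow_succ]
  have hPQ : y ^ (t + e) = y ^ (t - 1) * y ^ (e - 1) * y ^ 2 := by
    rw [← pow_add, ← pow_add]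
    congr 1
    omega
  have hP0 : (0 : ℝ) < y ^ (e - 1) := by positivity
  have hQ0 : (0 : ℝ) < y ^ (t - 1) := by positivity
  -- Bernoulli : y^e + e·y^(e-1) ≤ x^e
  have bern : y ^ (e - 1) * y + (e : ℝ) * y ^ (e - 1) ≤ x ^ e := by
    have hB := one_add_mul_le_pow (a := 1 / y)
      (le_trans (by norm_num : (-2 : ℝ) ≤ 0) (le_of_lt (by positivity))) e
    have hmul := mul_le_mul_of_nonneg_right hB (by positivity : (0 : ℝ) ≤ y ^ e)
    have hxy : (1 + 1 / y) * y = x := by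
      field_simp
      linarith
    have hrw : (1 + 1 / y) ^ e * y ^ e = x ^ e := by rw [← mul_pow, hxy]
    calc y ^ (e - 1) * y + (e : ℝ) * y ^ (e - 1)
        = (1 + (e : ℝ) * (1 / y)) * y ^ e := by rw [hye]; field_simp
      _ ≤ (1 + 1 / y) ^ e * y ^ e := hmul
      _ = x ^ e := hrw
  -- combinatorial bound
  have hCkey : 2 * C ≤ (e : ℝ) * y ^ (t - 1) := by
    have hNat := two_choose_le_aux t e ht3 he1
    have hcast : 2 * C ≤ (e : ℝ) * ((t + e - 1 : ℕ) : ℝ) ^ (t - 1) := by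
      rw [hCdef]; exact_mod_cast hNat
    refine hcast.trans ?_
    exact mul_le_mul_of_nonneg_left (pow_le_pow_left₀ (by positivity) hyn (t - 1))
      (by positivity)
  -- main polynomial inequality
  have main : y ^ (t + e) + x ^ e * C ≤ x ^ e * y ^ t := by
    have hQyC2 : 0 ≤ y ^ (t - 1) * y - C := by nlinarith
    have step1 : (y ^ (e - 1) * y + (e : ℝ) * y ^ (e - 1)) * (y ^ (t - 1) * y - C)
        ≤ x ^ e * (y ^ (t - 1) * y - C) :=
      mul_le_mul_of_nonneg_right bern hQyC2
    have step2 : (y ^ (e - 1) * y + (e : ℝ) * y ^ (e - 1)) *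
          (y ^ (t - 1) * y - (e : ℝ) * y ^ (t - 1) / 2)
        ≤ (y ^ (e - 1) * y + (e : ℝ) * y ^ (e - 1)) * (y ^ (t - 1) * y - C) := by
      have hA : (0 : ℝ) ≤ y ^ (e - 1) * y + (e : ℝ) * y ^ (e - 1) := by positivity
      exact mul_le_mul_of_nonneg_left (by linarith) hA
    have step3 : y ^ (e - 1) * y ^ (t - 1) * y ^ 2
        ≤ (y ^ (e - 1) * y + (e : ℝ) * y ^ (e - 1)) *
          (y ^ (t - 1) * y - (e : ℝ) * y ^ (t - 1) / 2) := by
      have hkey : (0 : ℝ) ≤ (e : ℝ) * (y ^ (e - 1) * y ^ (t - 1)) * (y - (e : ℝ)) :=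
        mul_nonneg (mul_nonneg (by positivity) (by positivity)) (sub_nonneg.mpr hey)
      nlinarith [hkey]
    have hfin : y ^ (e - 1) * y ^ (t - 1) * y ^ 2 ≤ x ^ e * (y ^ (t - 1) * y - C) := by
      linarith
    rw [hPQ, hyt]
    nlinarith [hfin]
  -- conclude by dividing by y^(t+e)
  have hyte0 : (0 : ℝ) < y ^ (t + e) := by positivity
  have hye0 : (0 : ℝ) < y ^ e := pow_pos hy0 e
  rw [div_pow]
  have hrw1 : 1 + x ^ e / y ^ (t + e) * C = (y ^ (t + e) + x ^ e * C) / y ^ (t + e) := by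
    field_simp
  rw [hrw1, div_le_div_iff₀ hyte0 hye0]
  calc (y ^ (t + e) + x ^ e * C) * y ^ e
      ≤ (x ^ e * y ^ t) * y ^ e := mul_le_mul_of_nonneg_right main (le_of_lt hye0)
    _ = x ^ e * y ^ (t + e) := by rw [pow_add]; ring

/-- For integers `b, i, j, ℓ` with `0 ≤ i < j ≤ b` and `2i < ℓ < i+j`,
`g_{j,i}(ℓ) ≤ (b/(b−1))^{i+j−ℓ}`. -/
theorem claim_g_loose_bound (b i j : ℕ) (hb : 2 ≤ b) (hij : i < j) (hjb : j ≤ b)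
    (l : ℤ) (h1 : 2 * (i : ℤ) < l) (h2 : l < (i : ℤ) + (j : ℤ)) :
    gFun b j i l ≤ ((b : ℝ) / ((b : ℝ) - 1)) ^ ((i : ℤ) + (j : ℤ) - l) := by
  have hb1 : (1 : ℝ) ≤ (b : ℝ) - 1 := by
    have : (2 : ℝ) ≤ (b : ℝ) := by exact_mod_cast hb
    linarith
  have hy0 : (0 : ℝ) < (b : ℝ) - 1 := by linarith
  have hxy1 : (1 : ℝ) ≤ (b : ℝ) / ((b : ℝ) - 1) := by
    rw [le_div_iff₀ hy0]; linarith
  unfold gFun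
  rw [if_neg (by omega)]
  by_cases hl1 : l = 2 * (i : ℤ) + 1
  · rw [if_pos hl1]
    have hexp : (i : ℤ) + (j : ℤ) - l = ((j - i - 1 : ℕ) : ℤ) := by omega
    rw [hexp, zpow_natCast]
  · rw [if_neg hl1]
    by_cases hodd : Odd l
    · rw [if_pos ⟨hodd, by omega⟩]
      obtain ⟨k, hk⟩ := hodd
      have ht3 : 3 ≤ (l - 2 * (i : ℤ)).toNat := by omega
      have he1 : 1 ≤ ((i : ℤ) + (j : ℤ) - l).toNat := by omega
      have hte : (l - 2 * (i : ℤ)).toNat + ((i : ℤ) + (j : ℤ) - l).toNat = j - i := by omega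
      have hexp : (i : ℤ) + (j : ℤ) - l = (((i : ℤ) + (j : ℤ) - l).toNat : ℤ) := by omega
      have hexp2 : (j : ℤ) + (i : ℤ) - l = (((i : ℤ) + (j : ℤ) - l).toNat : ℤ) := by omega
      unfold hFun
      rw [hexp, hexp2, zpow_natCast, ← hte]
      have hyn : (((l - 2 * (i : ℤ)).toNat + ((i : ℤ) + (j : ℤ) - l).toNat - 1 : ℕ) : ℝ)
          ≤ (b : ℝ) - 1 := by
        have hle : (l - 2 * (i : ℤ)).toNat + ((i : ℤ) + (j : ℤ) - l).toNat - 1 + 1 ≤ b := by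
          omega
        have := (Nat.cast_le (α := ℝ)).mpr hle
        push_cast at this ⊢
        linarith
      exact real_main_aux _ _ ((b : ℝ)) ((b : ℝ) - 1) ht3 he1 hb1 (by ring) hyn
    · rw [if_neg (by tauto)]
      have hexp : (i : ℤ) + (j : ℤ) - l = (((i : ℤ) + (j : ℤ) - l).toNat : ℤ) := by omega
      rw [hexp, zpow_natCast]
      exact one_le_pow₀ hxy1
end

section
/- Let b, s be integers with b ≥ s ≥ 2 and set s̃ := ⌊s/2⌋ − 1. Then R(b,s) := (1/2^s) · Σ_{j=0}^{s̃} binom(s,j) · (b/(b−1))^{s−j} ≤ 1. -/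
open Finset

-- cubic Bonferroni: (1-v)^n ≥ 1 - nv + n(n-1)/2 v^2 - n(n-1)(n-2)/6 v^3
lemma bonf (v : ℝ) (hv0 : 0 ≤ v) (hv1 : v ≤ 1) :
    ∀ n : ℕ, 1 - n*v + ((n:ℝ)*((n:ℝ)-1)/2)*v^2 - ((n:ℝ)*((n:ℝ)-1)*((n:ℝ)-2)/6)*v^3
      ≤ (1-v)^n := by
  intro n
  induction n with
  | zero => norm_num
  | succ n ih =>
    have h1 : (0:ℝ) ≤ 1 - v := by linarith
    have hb : (0:ℝ) ≤ (n:ℝ)*((n:ℝ)-1)*((n:ℝ)-2)/6 := by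
      rcases Nat.lt_or_ge n 2 with h | h
      · interval_cases n <;> norm_num
      · have h2 : (2:ℝ) ≤ (n:ℝ) := by exact_mod_cast h
        have h0 : (0:ℝ) ≤ (n:ℝ) := by linarith
        have := mul_nonneg (mul_nonneg h0 (by linarith : (0:ℝ) ≤ (n:ℝ)-1)) (by linarith : (0:ℝ) ≤ (n:ℝ)-2)
        linarith
    have h3 := mul_le_mul_of_nonneg_left ih h1
    have hbv : (0:ℝ) ≤ ((n:ℝ)*((n:ℝ)-1)*((n:ℝ)-2)/6) * v^4 := by positivity
    calc 1 - (↑(n+1))*v + ((↑(n+1):ℝ)*((↑(n+1):ℝ)-1)/2)*v^2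
          - ((↑(n+1):ℝ)*((↑(n+1):ℝ)-1)*((↑(n+1):ℝ)-2)/6)*v^3
        ≤ (1-v) * (1 - n*v + ((n:ℝ)*((n:ℝ)-1)/2)*v^2
            - ((n:ℝ)*((n:ℝ)-1)*((n:ℝ)-2)/6)*v^3) := by push_cast; nlinarith [hbv]
      _ ≤ (1-v)*(1-v)^n := h3
      _ = (1-v)^(n+1) := by ring

-- key: x^d (s+1-d) ≤ s+1+d  for 1 ≤ d ≤ s-1, 1 ≤ x, x(s-1) ≤ s
lemma key (s : ℕ) (x : ℝ) (hs : 2 ≤ s) (hx1 : 1 ≤ x) (hx2 : x * ((s:ℝ) - 1) ≤ s) :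
    ∀ d : ℕ, 1 ≤ d → d ≤ s - 1 → x^d * ((s:ℝ) + 1 - d) ≤ (s:ℝ) + 1 + d := by
  have hx0 : (0:ℝ) ≤ x := by linarith
  have hs2 : (2:ℝ) ≤ (s:ℝ) := by exact_mod_cast hs
  intro d
  induction d with
  | zero => intro h; omega
  | succ d ih =>
    intro _ hd1
    rcases Nat.eq_zero_or_pos d with rfl | hdpos
    · -- base d = 1 : x * s ≤ s + 2
      push_cast
      nlinarith [hx2, hx1, hs2]
    · have hd' : d ≤ s - 1 := by omega
      have ihd := ih hdpos hd'
      have hds : (d:ℝ) + 2 ≤ (s:ℝ) := by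
        have : d + 2 ≤ s := by omega
        exact_mod_cast this
      have hxd : (1:ℝ) ≤ x^d := one_le_pow₀ hx1
      have hmul := mul_le_mul_of_nonneg_left ihd hx0
      -- goal : x^(d+1) * (s+1-(d+1)) ≤ s+1+(d+1)
      have hpow : x^(d+1) = x * x^d := by ring
      push_cast
      nlinarith [hmul, hxd, hx1, hx2, hds, mul_nonneg (sub_nonneg.mpr hx1) (by linarith : (0:ℝ) ≤ (s:ℝ) - 2 - d), mul_le_mul_of_nonneg_left hxd hx0]

set_option maxHeartbeats 1200000 in
/-- For integers `b ≥ s ≥ 2` with `s̃ = ⌊s/2⌋ − 1`,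
`R(b,s) = 2^{-s} Σ_{j=0}^{s̃} C(s,j) (b/(b−1))^{s−j} ≤ 1`.
(The sum over `j = 0,…,s̃ = s/2 − 1` is written as a sum over `j ∈ range (s/2)`.) -/
theorem claim_Rbs_le_one (b s : ℕ) (hs : 2 ≤ s) (hbs : s ≤ b) :
    (1 / (2 : ℝ) ^ s) *
      ∑ j ∈ Finset.range (s / 2), (Nat.choose s j : ℝ) * ((b : ℝ) / ((b : ℝ) - 1)) ^ (s - j)
      ≤ 1 := by
  have hb : 2 ≤ b := hs.trans hbs
  have hb2 : (2:ℝ) ≤ (b:ℝ) := by exact_mod_cast hb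
  have hb1 : (0:ℝ) < (b:ℝ) - 1 := by linarith
  set x : ℝ := (b:ℝ)/((b:ℝ)-1) with hxdef
  have hx1 : 1 ≤ x := by rw [hxdef, le_div_iff₀ hb1]; linarith
  have hx0 : (0:ℝ) ≤ x := by linarith
  have hsb : (s:ℝ) ≤ (b:ℝ) := by exact_mod_cast hbs
  have hx2 : x * ((s:ℝ) - 1) ≤ s := by
    rw [hxdef, div_mul_eq_mul_div, div_le_iff₀ hb1]
    nlinarith [hsb]
  have h2s : (0:ℝ) < 2^s := by positivity
  rw [one_div, inv_mul_le_iff₀ h2s, mul_one]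
  obtain rfl | hs3 := hs.eq_or_lt
  · -- s = 2
    norm_num [Finset.sum_range_one] at *
    nlinarith [hx1, hx2]
  · -- s ≥ 3
    have hs3' : 3 ≤ s := hs3
    have hs3r : (3:ℝ) ≤ (s:ℝ) := by exact_mod_cast hs3'
    set m := s/2 with hm
    set f : ℕ → ℝ := fun k => (s.choose k : ℝ) * x ^ (s-k) with hf
    have hf0 : ∀ k, 0 ≤ f k := by
      intro k; rw [hf]; positivity
    have hterm : ∀ j ∈ Finset.range m, f j ≤ f (s-1-j) := by
      intro j hj
      rw [Finset.mem_range] at hj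
      have hj2 : 2*j+2 ≤ s := by omega
      set d := s - (2*j+1) with hd
      have hdnat : d + (2*j+1) = s := by omega
      have hd1 : 1 ≤ d := by omega
      have hd2 : d ≤ s - 1 := by omega
      have hkey := key s x hs hx1 hx2 d hd1 hd2
      have hdr : (d:ℝ) = (s:ℝ) - 2*(j:ℝ) - 1 := by
        have h := hdnat
        have : ((d + (2*j+1) : ℕ) : ℝ) = (s:ℝ) := by exact_mod_cast congrArg (Nat.cast (R := ℝ)) h
        push_cast at this
        linarith
      rw [hdr] at hkey
      have h5 : x^d * ((j:ℝ)+1) ≤ (s:ℝ) - j := by nlinarith [hkey]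
      have hcc : s.choose (j+1) * (j+1) = s.choose j * (s - j) := Nat.choose_succ_right_eq s j
      have hchoose : (s.choose (j+1) : ℝ) * ((j:ℝ)+1) = (s.choose j : ℝ) * ((s:ℝ) - j) := by
        have h := congrArg (Nat.cast (R := ℝ)) hcc
        push_cast [Nat.cast_sub (by omega : j ≤ s)] at h
        linarith
      have hc0 : (0:ℝ) ≤ (s.choose j : ℝ) := by positivity
      have hmul := mul_le_mul_of_nonneg_left h5 hc0
      have hjpos : (0:ℝ) < (j:ℝ)+1 := by positivity
      have h7 : ((s.choose j : ℝ) * x^d) * ((j:ℝ)+1) ≤ (s.choose (j+1):ℝ) * ((j:ℝ)+1) := by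
        nlinarith [hmul, hchoose]
      have h6 : (s.choose j : ℝ) * x^d ≤ (s.choose (j+1) : ℝ) :=
        le_of_mul_le_mul_right h7 hjpos
      have he1 : s - j = (j+1) + d := by omega
      have he2 : s - (s-1-j) = j+1 := by omega
      have he3 : s - 1 - j = s - (j+1) := by omega
      rw [hf]
      simp only []
      rw [he1, he2, he3, Nat.choose_symm (by omega : j+1 ≤ s), pow_add]
      have hp : (0:ℝ) ≤ x^(j+1) := by positivity
      calc (s.choose j : ℝ) * (x^(j+1) * x^d) = ((s.choose j : ℝ) * x^d) * x^(j+1) := by ring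
        _ ≤ (s.choose (j+1) : ℝ) * x^(j+1) := mul_le_mul_of_nonneg_right h6 hp
    have hA : ∑ j ∈ Finset.range m, f j ≤ ∑ j ∈ Finset.range m, f (s-1-j) :=
      Finset.sum_le_sum hterm
    have hinj : ∀ a ∈ Finset.range m, ∀ c ∈ Finset.range m, s-1-a = s-1-c → a = c := by
      intro a ha c hc hac
      rw [Finset.mem_range] at ha hc
      omega
    have hB : ∑ j ∈ Finset.range m, f (s-1-j)
        = ∑ k ∈ (Finset.range m).image (fun j => s-1-j), f k :=
      (Finset.sum_image hinj).symm
    have hdisj : Disjoint (Finset.range m) ((Finset.range m).image (fun j => s-1-j)) := by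
      rw [Finset.disjoint_left]
      intro a ha hb'
      rw [Finset.mem_range] at ha
      obtain ⟨j, hj, hje⟩ := Finset.mem_image.mp hb'
      rw [Finset.mem_range] at hj
      omega
    have hsub : Finset.range m ∪ (Finset.range m).image (fun j => s-1-j) ⊆ Finset.range (s+1) := by
      intro k hk
      rw [Finset.mem_union] at hk
      rw [Finset.mem_range]
      rcases hk with hk | hk
      · rw [Finset.mem_range] at hk; omega
      · obtain ⟨j, hj, hje⟩ := Finset.mem_image.mp hk
        rw [Finset.mem_range] at hj
        omega
    have hU : ∑ j ∈ Finset.range m, f j + ∑ j ∈ Finset.range m, f (s-1-j)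
        ≤ ∑ k ∈ Finset.range (s+1), f k := by
      rw [hB, ← Finset.sum_union hdisj]
      exact Finset.sum_le_sum_of_subset_of_nonneg hsub (fun k _ _ => hf0 k)
    have hexp : ∑ k ∈ Finset.range (s+1), f k = (1+x)^s := by
      rw [add_pow]
      apply Finset.sum_congr rfl
      intro k hk
      rw [hf]
      simp only [one_pow]
      ring
    -- (1+x)^s ≤ 2 * 2^s
    set v : ℝ := 1/(2*(s:ℝ)-1) with hv
    have hvpos : (0:ℝ) < 2*(s:ℝ)-1 := by linarith
    have hv0 : 0 ≤ v := by rw [hv]; positivity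
    have hv1 : v ≤ 1 := by rw [hv, div_le_one hvpos]; linarith
    have hbonf := bonf v hv0 hv1 s
    have hpoly : (0:ℝ) ≤ 5*(s:ℝ)^3 - 18*(s:ℝ)^2 + 13*(s:ℝ) - 3 := by
      nlinarith [mul_nonneg (by linarith : (0:ℝ) ≤ (s:ℝ) - 3)
        (by nlinarith [sq_nonneg ((s:ℝ) - 1)] : (0:ℝ) ≤ 5*(s:ℝ)^2 - 3*(s:ℝ) + 4), hs3r]
    have hE : 1 - (s:ℝ)*v + ((s:ℝ)*((s:ℝ)-1)/2)*v^2 - ((s:ℝ)*((s:ℝ)-1)*((s:ℝ)-2)/6)*v^3 - 1/2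
        = (5*(s:ℝ)^3 - 18*(s:ℝ)^2 + 13*(s:ℝ) - 3) / (6*(2*(s:ℝ)-1)^3) := by
      rw [hv]
      field_simp [show (s:ℝ)*2 - 1 ≠ 0 by linarith]
      ring
    have hhalf : (1/2:ℝ) ≤ (1-v)^s := by
      have hq : (0:ℝ) ≤ (5*(s:ℝ)^3 - 18*(s:ℝ)^2 + 13*(s:ℝ) - 3) / (6*(2*(s:ℝ)-1)^3) :=
        div_nonneg hpoly (by positivity)
      linarith [hbonf, hE.symm ▸ hq]
    have hxv : (1+x)*(1-v) ≤ 2 := by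
      have hE2 : 2 - (1+x)*(1-v) = (2*((s:ℝ) - x*((s:ℝ)-1)) + (1 - v*(2*(s:ℝ)-1)) * (1+x)) / (2*(s:ℝ)-1) := by
        rw [hv]
        field_simp
        ring
      have hvw : v*(2*(s:ℝ)-1) = 1 := by
        rw [hv]; field_simp
      rw [← sub_nonneg, hE2, hvw]
      apply div_nonneg _ (by linarith)
      nlinarith [hx2]
    have h1v0 : (0:ℝ) ≤ 1 - v := by
      rw [hv, sub_nonneg, div_le_one hvpos]; linarith
    have h1x0 : (0:ℝ) ≤ 1 + x := by linarith
    have hps : ((1+x)*(1-v))^s ≤ 2^s :=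
      pow_le_pow_left₀ (by positivity) hxv s
    rw [mul_pow] at hps
    have hxs0 : (0:ℝ) ≤ (1+x)^s := by positivity
    have hfin : (1+x)^s ≤ 2*2^s := by
      have h1 : (1+x)^s * (1/2) ≤ (1+x)^s * (1-v)^s :=
        mul_le_mul_of_nonneg_left hhalf hxs0
      linarith [h1, hps]
    have hAA : 2 * (∑ j ∈ Finset.range m, f j) ≤ 2*2^s := by
      calc 2 * ∑ j ∈ Finset.range m, f j
          = ∑ j ∈ Finset.range m, f j + ∑ j ∈ Finset.range m, f j := by ring
        _ ≤ ∑ j ∈ Finset.range m, f j + ∑ j ∈ Finset.range m, f (s-1-j) := by linarith [hA]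
        _ ≤ ∑ k ∈ Finset.range (s+1), f k := hU
        _ = (1+x)^s := hexp
        _ ≤ 2*2^s := hfin
    show ∑ j ∈ Finset.range m, f j ≤ 2^s
    linarith [hAA]
end

section
/- Let b, s be integers with s ≥ 3 and b ≥ s. For odd m with 1 ≤ m ≤ 2s−3, define G(m,s) := Σ_{j=0}^{(m−3)/2} binom(s,j) + Σ_{j=max(0, m−s+1)}^{(m−3)/2} binom(s,j)·h_{s,j}(m) + binom(s,(m−1)/2)·(b/(b−1))^{s−(m−1)/2−1}, where h_{s,j}(m) = binom(s−j−1, m−2j)·b^{s+j−m}/(b−1)^{s−j}. Then G(m,s) ≥ G(m−2,s) for every odd m with 3 ≤ m ≤ 2s−3; that is, G(·,s) is nonincreasing as m decreases over the odd integers from 2s−3 down to 1. -/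
open Finset

/-- `h_{s,j}(m) := (b^{s+j−m}/(b−1)^{s−j})·C(s−j−1, m−2j)`. -/
noncomputable def hSJ (b s j m : ℕ) : ℝ :=
  ((b : ℝ) ^ ((s : ℤ) + (j : ℤ) - (m : ℤ)) / ((b : ℝ) - 1) ^ (s - j)) *
    (Nat.choose (s - j - 1) (m - 2 * j) : ℝ)

/-- `G(m,s) := Σ_{j=0}^{(m−3)/2} C(s,j) + Σ_{j=max(0,m−s+1)}^{(m−3)/2} C(s,j) h_{s,j}(m)
 + C(s,(m−1)/2) (b/(b−1))^{s−(m−1)/2−1}` for odd `m`.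
(The range `0 ≤ j ≤ (m−3)/2` is written as `j ∈ range ((m−1)/2)`, which is empty for `m = 1`,
and the lower bound `max(0, m−s+1) ≤ j` as `m + 1 ≤ s + j`.) -/
noncomputable def G12 (b s m : ℕ) : ℝ :=
  (∑ j ∈ Finset.range ((m - 1) / 2), (Nat.choose s j : ℝ)) +
  (∑ j ∈ (Finset.range ((m - 1) / 2)).filter (fun j => m + 1 ≤ s + j),
      (Nat.choose s j : ℝ) * hSJ b s j m) +
  (Nat.choose s ((m - 1) / 2) : ℝ) * ((b : ℝ) / ((b : ℝ) - 1)) ^ (s - (m - 1) / 2 - 1)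

namespace ClaimG12Aux

/-- descending factorial bound: the `2i+1` factors of `dF (w+i) (2i+1)` pair up around `w`. -/
lemma dF_bound (w : ℕ) : ∀ i : ℕ, Nat.descFactorial (w + i) (2*i+1) ≤ w^(2*i+1) := by
  intro i
  induction i with
  | zero => simp [Nat.descFactorial]
  | succ i ih =>
      have h1 : Nat.descFactorial (w + (i+1)) (2*(i+1)+1)
          = (w + i + 1) * ((w - (i+1)) * Nat.descFactorial (w+i) (2*i+1)) := by
        have e1 : w + (i+1) = (w+i) + 1 := by omega
        have e2 : 2*(i+1)+1 = (2*i+1)+1+1 := by omega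
        rw [e1, e2, Nat.succ_descFactorial_succ, Nat.descFactorial_succ]
        congr 2
        omega
      have h2 : (w + i + 1) * (w - (i+1)) ≤ w * w := by
        rcases le_or_gt (i+1) w with h | h
        · zify [h]; nlinarith [sq_nonneg ((i:ℤ)+1)]
        · have : w - (i+1) = 0 := by omega
          simp [this]
      calc Nat.descFactorial (w + (i+1)) (2*(i+1)+1)
          = ((w + i + 1) * (w - (i+1))) * Nat.descFactorial (w+i) (2*i+1) := by rw [h1]; ring
        _ ≤ (w * w) * w^(2*i+1) := Nat.mul_le_mul h2 ih
        _ = w^(2*(i+1)+1) := by ring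

lemma choose_bound (w i : ℕ) (hi : 1 ≤ i) : 6 * Nat.choose (w+i) (2*i+1) ≤ w^(2*i+1) := by
  have h1 := dF_bound w i
  rw [Nat.descFactorial_eq_factorial_mul_choose] at h1
  have h2 : 6 ≤ Nat.factorial (2*i+1) := by
    have h3 : Nat.factorial 3 ≤ Nat.factorial (2*i+1) := Nat.factorial_le (by omega)
    exact le_trans (by decide) h3
  calc 6 * Nat.choose (w+i) (2*i+1) ≤ Nat.factorial (2*i+1) * Nat.choose (w+i) (2*i+1) :=
        Nat.mul_le_mul_right _ h2
    _ ≤ w^(2*i+1) := h1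

lemma chooseA (s k : ℕ) (hks : k ≤ s) :
    ∀ i, i ≤ k → Nat.choose s (k-i) * (s-k+1)^i ≤ Nat.choose s k * k^i := by
  intro i
  induction i with
  | zero => simp
  | succ i ih =>
    intro hi
    have hIH := ih (by omega)
    have hr : k - i = (k - (i+1)) + 1 := by omega
    have key : Nat.choose s (k-(i+1)) * (s-k+1) ≤ Nat.choose s (k-i) * k := by
      set r := k - (i+1) with hrdef
      have hr2 : k - i = r + 1 := by omega
      rw [hr2]
      have hcs := Nat.choose_succ_right_eq s r
      have hfac : (s-k+1)*(r+1) ≤ (s-r)*k :=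
        Nat.mul_le_mul (by omega) (by omega)
      have hmul : Nat.choose s r * (s-k+1) * (r+1) ≤ Nat.choose s (r+1) * k * (r+1) := by
        calc Nat.choose s r * (s-k+1) * (r+1) = Nat.choose s r * ((s-k+1)*(r+1)) := by ring
          _ ≤ Nat.choose s r * ((s-r)*k) := Nat.mul_le_mul_left _ hfac
          _ = (Nat.choose s r * (s-r)) * k := by ring
          _ = (Nat.choose s (r+1) * (r+1)) * k := by rw [hcs]
          _ = Nat.choose s (r+1) * k * (r+1) := by ring
      exact Nat.le_of_mul_le_mul_right hmul (by omega)
    calc Nat.choose s (k-(i+1)) * (s-k+1)^(i+1)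
        = (Nat.choose s (k-(i+1)) * (s-k+1)) * (s-k+1)^i := by ring
      _ ≤ (Nat.choose s (k-i) * k) * (s-k+1)^i := Nat.mul_le_mul_right _ key
      _ = k * (Nat.choose s (k-i) * (s-k+1)^i) := by ring
      _ ≤ k * (Nat.choose s k * k^i) := Nat.mul_le_mul_left _ hIH
      _ = Nat.choose s k * k^(i+1) := by ring

lemma one_add_pow_le (ε : ℝ) (hε : 0 ≤ ε) :
    ∀ n : ℕ, (n:ℝ)*ε ≤ 1 → (1+ε)^n ≤ 1 + (n:ℝ)*ε + ((n:ℝ)*ε)^2 := by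
  intro n
  induction n with
  | zero => norm_num
  | succ n ih =>
    intro h
    have hcast : ((n+1:ℕ):ℝ) = (n:ℝ)+1 := by push_cast; ring
    rw [hcast] at h
    have hn : (n:ℝ)*ε ≤ 1 := by nlinarith
    have h1 := ih hn
    have h2 : (1+ε)^(n+1) ≤ (1 + (n:ℝ)*ε + ((n:ℝ)*ε)^2)*(1+ε) := by
      rw [pow_succ]
      exact mul_le_mul_of_nonneg_right h1 (by linarith)
    rw [hcast]
    have hkey : ((n:ℝ)*ε) * ((n:ℝ)*ε*ε) ≤ 1 * ((n:ℝ)*ε*ε) :=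
      mul_le_mul_of_nonneg_right hn
        (mul_nonneg (mul_nonneg (Nat.cast_nonneg n) hε) hε)
    nlinarith [Nat.cast_nonneg (α := ℝ) n]

lemma geom_le (ρ : ℝ) (h0 : 0 ≤ ρ) (h1 : ρ ≤ 1/4) :
    ∀ n : ℕ, ∑ i ∈ range n, ρ^i ≤ 4/3 := by
  intro n
  induction n with
  | zero => simp; norm_num
  | succ n ih =>
    rw [Finset.sum_range_succ']
    have e : ∑ i ∈ range n, ρ^(i+1) = ρ * ∑ i ∈ range n, ρ^i := by
      rw [Finset.mul_sum]
      exact Finset.sum_congr rfl (fun i _ => by ring)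
    rw [e]
    have h2 : ρ * ∑ i ∈ range n, ρ^i ≤ ρ * (4/3) := by
      apply mul_le_mul_of_nonneg_left ih h0
    simp only [pow_zero]
    nlinarith

set_option maxHeartbeats 2000000 in
set_option maxRecDepth 4000 in
lemma key_nat (q κ b : ℕ) (h3 : 3 ≤ q) (hqk : q ≤ κ+1) (hb : κ + q ≤ b) :
    κ*(q-1)^3*(b-1)^3*(κ+1) +
      (q+1)*b^3*((b-1)^2+(q-2)*(b-1)+(q-2)^2)*(b*(κ+1)-q*(b-1))
    ≤ (q+1)*b^3*(b-1)^3*(κ+1) := by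
  obtain ⟨p, rfl⟩ : ∃ p, q = p+3 := ⟨q-3, by omega⟩
  obtain ⟨c, rfl⟩ : ∃ c, κ = p+2+c := ⟨κ-(p+2), by omega⟩
  obtain ⟨B, rfl⟩ : ∃ B, b = 2*p+c+5+B := ⟨b-(2*p+c+5), by omega⟩
  have e1 : p+3-1 = p+2 := by omega
  have e2 : p+3-2 = p+1 := by omega
  have e3 : 2*p+c+5+B-1 = 2*p+c+4+B := by omega
  rw [e1, e2, e3]
  have e4 : (2*p+c+5+B)*((p+2+c)+1) - (p+3)*(2*p+c+4+B) = (2*p+c+5+B)*c + (p+3) :=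
    Nat.sub_eq_of_eq_add (by ring)
  rw [e4]
  exact Nat.le.intro (k := 61428 + 94896*B + 58764*B^2 + 18888*B^3 + 3348*B^4 + 312*B^5 + 12*B^6 + 71836*c + 94308*c*B + 47324*c*B^2 + 11508*c*B^3 + 1368*c*B^4 + 64*c*B^5 + 35032*c^2 + 37600*c^2*B + 14340*c^2*B^2 + 2344*c^2*B^3 + 140*c^2*B^4 + 9164*c^3 + 7548*c^3*B + 1944*c^3*B^2 + 160*c^3*B^3 + 1368*c^4 + 768*c^4*B + 100*c^4*B^2 + 112*c^5 + 32*c^5*B + 4*c^6 + 211249*p + 279480*p*B + 144619*p*B^2 + 37466*p*B^3 + 5061*p*B^4 + 326*p*B^5 + 7*p*B^6 + 208051*p*c + 228405*p*c*B + 92367*p*c*B^2 + 17091*p*c*B^3 + 1398*p*c*B^4 + 36*p*c*B^5 + 82250*p*c^2 + 71376*p*c^2*B + 20715*p*c^2*B^2 + 2320*p*c^2*B^3 + 75*p*c^2*B^4 + 16475*p*c^3 + 10401*p*c^3*B + 1832*p*c^3*B^2 + 80*p*c^3*B^3 + 1716*p*c^4 + 666*p*c^4*B + 45*p*c^4*B^2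 + 82*p*c^5 + 12*p*c^5*B + 1*p*c^6 + 315873*p^2 + 350003*p^2*B + 146806*p^2*B^2 + 29323*p^2*B^3 + 2812*p^2*B^4 + 110*p^2*B^5 + 1*p^2*B^6 + 255991*p^2*c + 227879*p^2*c*B + 71011*p^2*c*B^2 + 9308*p^2*c*B^3 + 460*p^2*c*B^4 + 5*p^2*c*B^5 + 79153*p^2*c^2 + 53093*p^2*c^2*B + 10908*p^2*c^2*B^2 + 734*p^2*c^2*B^3 + 10*p^2*c^2*B^4 + 11405*p^2*c^3 + 5140*p^2*c^3*B + 542*p^2*c^3*B^2 + 10*p^2*c^3*B^3 + 728*p^2*c^4 + 172*p^2*c^4*B + 5*p^2*c^4*B^2 + 14*p^2*c^5 + 1*p^2*c^5*B + 267937*p^3 + 241364*p^3*B + 78588*p^3*B^2 + 11300*p^3*B^3 + 679*p^3*B^4 + 12*p^3*B^5 + 173237*p^3*c + 119720*p^3*c*B + 26834*p^3*c*B^2 + 2199*p^3*c*B^3 + 49*p^3*c*B^4 + 39852*p^3*c^2 + 19288*p^3*c^2*B + 2475*p^3*c^2*B^2 + 75*p^3*c^2*B^3 + 3754*p^3*c^3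 + 1069*p^3*c^3*B + 51*p^3*c^3*B^2 + 114*p^3*c^4 + 13*p^3*c^4*B + 140835*p^4 + 98865*p^4*B + 23365*p^4*B^2 + 2140*p^4*B^3 + 60*p^4*B^4 + 69505*p^4*c + 34866*p^4*c*B + 4974*p^4*c*B^2 + 190*p^4*c*B^3 + 11021*p^4*c^2 + 3408*p^4*c^2*B + 204*p^4*c^2*B^2 + 574*p^4*c^3 + 78*p^4*c^3*B + 4*p^4*c^4 + 46906*p^5 + 24020*p^5*B + 3652*p^5*B^2 + 159*p^5*B^3 + 16492*p^5*c + 5324*p^5*c*B + 361*p^5*c*B^2 + 1576*p^5*c^2 + 233*p^5*c^2*B + 31*p^5*c^3 + 9652*p^6 + 3200*p^6*B + 234*p^6*B^2 + 2136*p^6*c + 332*p^6*c*B + 90*p^6*c^2 + 1120*p^7 + 180*p^7*B + 116*p^7*c + 56*p^8) (by ring)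



lemma hSJ_nonneg (b s j m : ℕ) (hb : 1 ≤ b) : 0 ≤ hSJ b s j m := by
  unfold hSJ
  have h1 : (1:ℝ) ≤ (b:ℝ) := by exact_mod_cast hb
  apply mul_nonneg
  · apply div_nonneg
    · exact zpow_nonneg (Nat.cast_nonneg b) _
    · exact pow_nonneg (by linarith) _
  · exact Nat.cast_nonneg _

lemma filter_sum (b s κ : ℕ) :
    ∑ j ∈ (Finset.range κ).filter (fun j => 2*κ+1 + 1 ≤ s + j),
        (Nat.choose s j : ℝ) * hSJ b s j (2*κ+1)
    = ∑ j ∈ Finset.range κ, (Nat.choose s j : ℝ) * hSJ b s j (2*κ+1) := by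
  apply Finset.sum_subset (Finset.filter_subset _ _)
  intro j hj hnj
  rw [Finset.mem_range] at hj
  rw [Finset.mem_filter, not_and] at hnj
  have hsj : ¬ (2*κ+1+1 ≤ s + j) := hnj (Finset.mem_range.mpr hj)
  have hc : Nat.choose (s-j-1) (2*κ+1-2*j) = 0 :=
    Nat.choose_eq_zero_of_lt (by omega)
  simp [hSJ, hc]

set_option maxHeartbeats 1000000 in
lemma master (b s k : ℕ) (hs : 3 ≤ s) (hbs : s ≤ b) (hk : k + 3 ≤ s) :
    (∑ j ∈ Finset.range k, (Nat.choose s j : ℝ) * hSJ b s j (2*k+1))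
      + (Nat.choose s k : ℝ) * ((b:ℝ)/((b:ℝ)-1))^(s-k-1)
    ≤ (Nat.choose s k : ℝ)
      + (Nat.choose s (k+1) : ℝ) * ((b:ℝ)/((b:ℝ)-1))^(s-k-2) := by
  obtain ⟨d, rfl⟩ : ∃ d, s = k+3+d := ⟨s-(k+3), by omega⟩
  rw [show k+3+d-k-1 = d+2 from by omega, show k+3+d-k-2 = d+1 from by omega]
  have hb3 : (3:ℝ) ≤ (b:ℝ) := by exact_mod_cast (show 3 ≤ b by omega)
  have hkqb : (k:ℝ) + ((d:ℝ)+3) ≤ (b:ℝ) := by exact_mod_cast (show k + (d+3) ≤ b by omega)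
  have hkr0 : (0:ℝ) ≤ (k:ℝ) := Nat.cast_nonneg k
  have hdr0 : (0:ℝ) ≤ (d:ℝ) := Nat.cast_nonneg d
  have hbpos : (0:ℝ) < (b:ℝ) := by linarith
  have hb1 : (0:ℝ) < (b:ℝ) - 1 := by linarith
  have hb1ne : (b:ℝ) - 1 ≠ 0 := ne_of_gt hb1
  have hbne : (b:ℝ) ≠ 0 := ne_of_gt hbpos
  have hXpos : 0 < (b:ℝ)/((b:ℝ)-1) := div_pos hbpos hb1
  have hX1 : 1 ≤ (b:ℝ)/((b:ℝ)-1) := by rw [le_div_iff₀ hb1]; linarith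
  have hX32 : (b:ℝ)/((b:ℝ)-1) ≤ 3/2 := by rw [div_le_iff₀ hb1]; linarith
  have hXeq : (b:ℝ)/((b:ℝ)-1) = 1 + 1/((b:ℝ)-1) := by field_simp; ring
  have hCkpos : (0:ℝ) < (Nat.choose (k+3+d) k : ℝ) := by
    exact_mod_cast Nat.choose_pos (by omega)
  have hrho0 : 0 ≤ (k:ℝ)*((d:ℝ)+2)^2/(((d:ℝ)+4)*(b:ℝ)^2) := by positivity
  have hrho14 : (k:ℝ)*((d:ℝ)+2)^2/(((d:ℝ)+4)*(b:ℝ)^2) ≤ 1/4 := by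
    rw [div_le_iff₀ (by positivity)]
    have h0 : ((k:ℝ)+((d:ℝ)+3))^2 ≤ (b:ℝ)^2 := by nlinarith
    have h1 : 4*(k:ℝ)*((d:ℝ)+3) ≤ (b:ℝ)^2 := by nlinarith [sq_nonneg ((k:ℝ)-((d:ℝ)+3))]
    nlinarith [mul_le_mul_of_nonneg_right h1 (show (0:ℝ) ≤ (d:ℝ)+2 by linarith),
      mul_nonneg (mul_nonneg hkr0 (show (0:ℝ) ≤ (d:ℝ)+2 by linarith)) (show (0:ℝ) ≤ (d:ℝ)+2 by linarith)]
  -- termwise bound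
  have hterm : ∀ j ∈ Finset.range k,
      (Nat.choose (k+3+d) j : ℝ) * hSJ b (k+3+d) j (2*k+1)
        ≤ 3/4 * (Nat.choose (k+3+d) k : ℝ) * (((d:ℝ)+2)/(b:ℝ))
            * ((k:ℝ)*((d:ℝ)+2)^2/(((d:ℝ)+4)*(b:ℝ)^2))^(k-j) := by
    intro j hj
    rw [Finset.mem_range] at hj
    rcases lt_or_ge (k+3+d-j-1) (2*k+1-2*j) with hz | hnz
    · have hc0 : Nat.choose (k+3+d-j-1) (2*k+1-2*j) = 0 := Nat.choose_eq_zero_of_lt hz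
      unfold hSJ
      rw [hc0]
      simp only [Nat.cast_zero, mul_zero, zero_mul]
      positivity
    · have hiq : k - j ≤ d+1 := by omega
      have hi1 : 1 ≤ k - j := by omega
      have e5 : k+3+d-j-1 = (d+2)+(k-j) := by omega
      have e6 : 2*k+1-2*j = 2*(k-j)+1 := by omega
      have e7 : k+3+d-j = d+2+(k-j)+1 := by omega
      have e8 : ((k+3+d : ℕ):ℤ) + (j:ℤ) - ((2*k+1 : ℕ):ℤ) = ((d+2-(k-j) : ℕ):ℤ) := by
        push_cast
        omega
      unfold hSJ
      rw [e5, e6, e7]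
      rw [show ((k+3+d : ℕ):ℤ) + (j:ℤ) - ((2*k+1 : ℕ):ℤ) = ((d+2-(k-j) : ℕ):ℤ) from e8]
      rw [zpow_natCast]
      -- bound pieces
      have hc1' : (Nat.choose (k+3+d) j : ℝ)
          ≤ (Nat.choose (k+3+d) k : ℝ) * (k:ℝ)^(k-j) / ((d:ℝ)+4)^(k-j) := by
        rw [le_div_iff₀ (by positivity)]
        have h := chooseA (k+3+d) k (by omega) (k-j) (by omega)
        rw [show k+3+d-k+1 = d+4 from by omega, show k - (k-j) = j from by omega] at h
        have h2 := (Nat.cast_le (α := ℝ)).mpr h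
        push_cast at h2
        convert h2 using 2
      have hchoose2 : (Nat.choose ((d+2)+(k-j)) (2*(k-j)+1) : ℝ)
          ≤ ((((d:ℝ)+2)^2)^(k-j) * ((d:ℝ)+2)) / 6 := by
        have h6 := choose_bound (d+2) (k-j) hi1
        have hcast := (Nat.cast_le (α := ℝ)).mpr h6
        push_cast at hcast
        have hps : ((d:ℝ)+2)^(2*(k-j)+1) = (((d:ℝ)+2)^2)^(k-j) * ((d:ℝ)+2) := by
          rw [pow_succ, pow_mul]
        rw [le_div_iff₀ (by norm_num : (0:ℝ) < 6)]
        rw [hps] at hcast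
        linarith
      have hXle : ((b:ℝ)/((b:ℝ)-1))^(d+2+(k-j)+1) ≤ 9/2 := by
        have hwi : ((d+2+(k-j) : ℕ):ℝ) * (1/((b:ℝ)-1)) ≤ 1 := by
          rw [mul_one_div, div_le_one hb1]
          have hnat : (d+2+(k-j)) + 1 ≤ b := by omega
          have hc : ((d+2+(k-j) : ℕ):ℝ) + 1 ≤ (b:ℝ) := by exact_mod_cast hnat
          linarith
        have hp := one_add_pow_le (1/((b:ℝ)-1)) (by positivity) (d+2+(k-j)) hwi
        have h01 : 0 ≤ ((d+2+(k-j) : ℕ):ℝ)*(1/((b:ℝ)-1)) :=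
          mul_nonneg (Nat.cast_nonneg _) (by positivity)
        have hble : 1 + ((d+2+(k-j) : ℕ):ℝ)*(1/((b:ℝ)-1))
            + (((d+2+(k-j) : ℕ):ℝ)*(1/((b:ℝ)-1)))^2 ≤ 3 := by nlinarith
        calc ((b:ℝ)/((b:ℝ)-1))^(d+2+(k-j)+1)
            = (1+1/((b:ℝ)-1))^(d+2+(k-j)) * ((b:ℝ)/((b:ℝ)-1)) := by rw [pow_succ, hXeq]
          _ ≤ 3 * (3/2) :=
              mul_le_mul (le_trans hp hble) hX32 (le_of_lt hXpos) (by norm_num)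
          _ = 9/2 := by norm_num
      have hpow : (b:ℝ)^(d+2-(k-j)) * (((b:ℝ)^2)^(k-j) * (b:ℝ)) = (b:ℝ)^(d+2+(k-j)+1) := by
        rw [← pow_mul, ← pow_succ, ← pow_add]
        congr 1
        omega
      have hXp : (b:ℝ)^(d+2+(k-j)+1) ≤ 9/2 * ((b:ℝ)-1)^(d+2+(k-j)+1) := by
        have hdiv : ((b:ℝ)/((b:ℝ)-1))^(d+2+(k-j)+1)
            = (b:ℝ)^(d+2+(k-j)+1)/((b:ℝ)-1)^(d+2+(k-j)+1) := div_pow _ _ _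
        rw [hdiv, div_le_iff₀ (by positivity)] at hXle
        linarith
      have hmid : (b:ℝ)^(d+2-(k-j)) / ((b:ℝ)-1)^(d+2+(k-j)+1)
          ≤ (9/2) / (((b:ℝ)^2)^(k-j) * (b:ℝ)) := by
        rw [div_le_div_iff₀ (by positivity) (by positivity), hpow]
        exact hXp
      have hfin : ((Nat.choose (k+3+d) k : ℝ) * (k:ℝ)^(k-j) / ((d:ℝ)+4)^(k-j))
            * ((9/2) / (((b:ℝ)^2)^(k-j) * (b:ℝ)) * (((((d:ℝ)+2)^2)^(k-j) * ((d:ℝ)+2)) / 6))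
          = 3/4 * (Nat.choose (k+3+d) k : ℝ) * (((d:ℝ)+2)/(b:ℝ))
            * ((k:ℝ)*((d:ℝ)+2)^2/(((d:ℝ)+4)*(b:ℝ)^2))^(k-j) := by
        rw [div_pow, mul_pow, mul_pow]
        have hne1 : (((d:ℝ)+4))^(k-j) ≠ 0 := by positivity
        have hne2 : (((b:ℝ)^2))^(k-j) ≠ 0 := by positivity
        field_simp
        ring
      calc (Nat.choose (k+3+d) j : ℝ)
            * ((b:ℝ)^(d+2-(k-j)) / ((b:ℝ)-1)^(d+2+(k-j)+1) * (Nat.choose ((d+2)+(k-j)) (2*(k-j)+1) : ℝ))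
          ≤ ((Nat.choose (k+3+d) k : ℝ) * (k:ℝ)^(k-j) / ((d:ℝ)+4)^(k-j))
            * ((9/2) / (((b:ℝ)^2)^(k-j) * (b:ℝ)) * (((((d:ℝ)+2)^2)^(k-j) * ((d:ℝ)+2)) / 6)) := by
            have h2 : (0:ℝ) ≤ (Nat.choose ((d+2)+(k-j)) (2*(k-j)+1) : ℝ) := Nat.cast_nonneg _
            have h3 : 0 ≤ (b:ℝ)^(d+2-(k-j)) / ((b:ℝ)-1)^(d+2+(k-j)+1) := by positivity
            have h4 : 0 ≤ (9/2) / (((b:ℝ)^2)^(k-j) * (b:ℝ)) := by positivity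
            apply mul_le_mul hc1' ?_ ?_ ?_
            · exact mul_le_mul hmid hchoose2 h2 h4
            · exact mul_nonneg h3 h2
            · positivity
        _ = _ := hfin
  -- sum bound
  have hsum : (∑ j ∈ Finset.range k, (Nat.choose (k+3+d) j : ℝ) * hSJ b (k+3+d) j (2*k+1))
      ≤ (Nat.choose (k+3+d) k : ℝ) * ((k:ℝ)*((d:ℝ)+2)^3/(((d:ℝ)+4)*(b:ℝ)^3)) := by
    calc (∑ j ∈ Finset.range k, (Nat.choose (k+3+d) j : ℝ) * hSJ b (k+3+d) j (2*k+1))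
        ≤ ∑ j ∈ Finset.range k, 3/4 * (Nat.choose (k+3+d) k : ℝ) * (((d:ℝ)+2)/(b:ℝ))
            * ((k:ℝ)*((d:ℝ)+2)^2/(((d:ℝ)+4)*(b:ℝ)^2))^(k-j) :=
          Finset.sum_le_sum hterm
      _ = 3/4 * (Nat.choose (k+3+d) k : ℝ) * (((d:ℝ)+2)/(b:ℝ))
            * ∑ j ∈ Finset.range k, ((k:ℝ)*((d:ℝ)+2)^2/(((d:ℝ)+4)*(b:ℝ)^2))^(k-j) := by
          rw [Finset.mul_sum]
      _ = 3/4 * (Nat.choose (k+3+d) k : ℝ) * (((d:ℝ)+2)/(b:ℝ))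
            * ∑ i ∈ Finset.range k, ((k:ℝ)*((d:ℝ)+2)^2/(((d:ℝ)+4)*(b:ℝ)^2))^(i+1) := by
          congr 1
          rw [← Finset.sum_range_reflect (fun i => ((k:ℝ)*((d:ℝ)+2)^2/(((d:ℝ)+4)*(b:ℝ)^2))^(i+1)) k]
          apply Finset.sum_congr rfl
          intro j hj
          rw [Finset.mem_range] at hj
          congr 1
          omega
      _ ≤ 3/4 * (Nat.choose (k+3+d) k : ℝ) * (((d:ℝ)+2)/(b:ℝ))
            * (((k:ℝ)*((d:ℝ)+2)^2/(((d:ℝ)+4)*(b:ℝ)^2)) * (4/3)) := by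
          apply mul_le_mul_of_nonneg_left ?_ (by positivity)
          have he : ∑ i ∈ Finset.range k, ((k:ℝ)*((d:ℝ)+2)^2/(((d:ℝ)+4)*(b:ℝ)^2))^(i+1)
              = ((k:ℝ)*((d:ℝ)+2)^2/(((d:ℝ)+4)*(b:ℝ)^2))
                * ∑ i ∈ Finset.range k, ((k:ℝ)*((d:ℝ)+2)^2/(((d:ℝ)+4)*(b:ℝ)^2))^i := by
            rw [Finset.mul_sum]
            exact Finset.sum_congr rfl (fun i _ => by ring)
          rw [he]
          exact mul_le_mul_of_nonneg_left (geom_le _ hrho0 hrho14 k) hrho0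
      _ = (Nat.choose (k+3+d) k : ℝ) * ((k:ℝ)*((d:ℝ)+2)^3/(((d:ℝ)+4)*(b:ℝ)^3)) := by
          field_simp
  -- final case analysis
  rcases le_or_gt ((Nat.choose (k+3+d) k : ℝ) * ((b:ℝ)/((b:ℝ)-1))) (Nat.choose (k+3+d) (k+1) : ℝ)
    with hcase | hcase
  · have hA1 : (k:ℝ)*((d:ℝ)+2)^3/(((d:ℝ)+4)*(b:ℝ)^3) ≤ 1 := by
      rw [div_le_one (by positivity)]
      have hkb : (k:ℝ) ≤ (b:ℝ) := by nlinarith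
      have hwb : (d:ℝ) + 2 ≤ (b:ℝ) := by nlinarith
      have lem1 : (k:ℝ)*((d:ℝ)+2) ≤ (b:ℝ)*(b:ℝ) :=
        mul_le_mul hkb hwb (by linarith) (by linarith)
      have lem2 : ((d:ℝ)+2)*((d:ℝ)+2) ≤ (b:ℝ)*((d:ℝ)+4) :=
        mul_le_mul hwb (by linarith) (by linarith) (by linarith)
      have lem3 := mul_le_mul lem1 lem2
        (mul_nonneg (show (0:ℝ) ≤ (d:ℝ)+2 by linarith) (show (0:ℝ) ≤ (d:ℝ)+2 by linarith))
        (mul_nonneg (by linarith) (by linarith))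
      nlinarith [lem3]
    have h1 : (Nat.choose (k+3+d) k : ℝ) * ((b:ℝ)/((b:ℝ)-1))^(d+2)
        ≤ (Nat.choose (k+3+d) (k+1) : ℝ) * ((b:ℝ)/((b:ℝ)-1))^(d+1) := by
      rw [show d+2 = (d+1)+1 from rfl, pow_succ]
      calc (Nat.choose (k+3+d) k : ℝ) * (((b:ℝ)/((b:ℝ)-1))^(d+1) * ((b:ℝ)/((b:ℝ)-1)))
          = ((Nat.choose (k+3+d) k : ℝ) * ((b:ℝ)/((b:ℝ)-1))) * ((b:ℝ)/((b:ℝ)-1))^(d+1) := by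
            ring
        _ ≤ (Nat.choose (k+3+d) (k+1) : ℝ) * ((b:ℝ)/((b:ℝ)-1))^(d+1) :=
            mul_le_mul_of_nonneg_right hcase (by positivity)
    have h2 : (Nat.choose (k+3+d) k : ℝ) * ((k:ℝ)*((d:ℝ)+2)^3/(((d:ℝ)+4)*(b:ℝ)^3))
        ≤ (Nat.choose (k+3+d) k : ℝ) := by
      nlinarith [mul_le_mul_of_nonneg_left hA1 hCkpos.le]
    linarith [hsum, h1, h2]
  · -- main case
    have hC : (Nat.choose (k+3+d) (k+1) : ℝ) * ((k:ℝ)+1) = (Nat.choose (k+3+d) k : ℝ) * ((d:ℝ)+3) := by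
      have h := Nat.choose_succ_right_eq (k+3+d) k
      rw [show k+3+d-k = d+3 from by omega] at h
      exact_mod_cast congrArg (fun n : ℕ => (n:ℝ)) h
    have hqk1 : d + 3 ≤ k + 1 := by
      by_contra hcon
      push_neg at hcon
      have hk2 : ((k:ℝ)+1) + 1 ≤ (d:ℝ) + 3 := by exact_mod_cast (show (k+1)+1 ≤ d+3 by omega)
      have hb2 : (k:ℝ) + 1 ≤ (b:ℝ) - 1 := by nlinarith
      have hXk : ((b:ℝ)/((b:ℝ)-1)) * ((k:ℝ)+1) ≤ (k:ℝ) + 2 := by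
        rw [hXeq]
        have h0 : ((k:ℝ)+1)/((b:ℝ)-1) ≤ 1 := by rw [div_le_one hb1]; linarith
        have he : (1 + 1/((b:ℝ)-1)) * ((k:ℝ)+1) = ((k:ℝ)+1) + ((k:ℝ)+1)/((b:ℝ)-1) := by
          field_simp
        rw [he]
        linarith
      have h4 : (Nat.choose (k+3+d) k : ℝ) * ((d:ℝ)+3)
          < (Nat.choose (k+3+d) k : ℝ) * ((b:ℝ)/((b:ℝ)-1)) * ((k:ℝ)+1) := by
        rw [← hC]
        exact mul_lt_mul_of_pos_right hcase (by positivity)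
      have h5 : (Nat.choose (k+3+d) k : ℝ) * ((b:ℝ)/((b:ℝ)-1)) * ((k:ℝ)+1)
          ≤ (Nat.choose (k+3+d) k : ℝ) * ((k:ℝ)+2) := by
        calc (Nat.choose (k+3+d) k : ℝ) * ((b:ℝ)/((b:ℝ)-1)) * ((k:ℝ)+1)
            = (Nat.choose (k+3+d) k : ℝ) * (((b:ℝ)/((b:ℝ)-1)) * ((k:ℝ)+1)) := by ring
          _ ≤ (Nat.choose (k+3+d) k : ℝ) * ((k:ℝ)+2) :=
              mul_le_mul_of_nonneg_left hXk hCkpos.le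
      nlinarith [mul_le_mul_of_nonneg_left (show (k:ℝ)+2 ≤ (d:ℝ)+3 by linarith) hCkpos.le]
    have hkey := key_nat (d+3) k b (by omega) hqk1 (by omega)
    have hsub : (d+3)*(b-1) ≤ b*(k+1) := by
      calc (d+3)*(b-1) ≤ (k+1)*b := Nat.mul_le_mul hqk1 (by omega)
        _ = b*(k+1) := by ring
    have hkeyR : (k:ℝ)*((d:ℝ)+2)^3*((b:ℝ)-1)^3*((k:ℝ)+1) +
        ((d:ℝ)+4)*(b:ℝ)^3*(((b:ℝ)-1)^2+((d:ℝ)+1)*((b:ℝ)-1)+((d:ℝ)+1)^2)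
          *((b:ℝ)*((k:ℝ)+1)-((d:ℝ)+3)*((b:ℝ)-1))
        ≤ ((d:ℝ)+4)*(b:ℝ)^3*((b:ℝ)-1)^3*((k:ℝ)+1) := by
      have h := (Nat.cast_le (α := ℝ)).mpr hkey
      push_cast [Nat.cast_sub hsub, Nat.cast_sub (show 1 ≤ b by omega)] at h
      nlinarith [h]
    have hden : (0:ℝ) < ((d:ℝ)+4)*(b:ℝ)^3*((b:ℝ)-1)^3*((k:ℝ)+1) := by positivity
    have hk1pos : (0:ℝ) < (k:ℝ) + 1 := by positivity
    have hk1ne : (k:ℝ) + 1 ≠ 0 := ne_of_gt hk1pos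
    have hfrac : (k:ℝ)*((d:ℝ)+2)^3/(((d:ℝ)+4)*(b:ℝ)^3)
        + (1+((d:ℝ)+1)/((b:ℝ)-1)+(((d:ℝ)+1)/((b:ℝ)-1))^2)
          *(((b:ℝ)/((b:ℝ)-1)) - ((d:ℝ)+3)/((k:ℝ)+1)) ≤ 1 := by
      have heq : (k:ℝ)*((d:ℝ)+2)^3/(((d:ℝ)+4)*(b:ℝ)^3)
          + (1+((d:ℝ)+1)/((b:ℝ)-1)+(((d:ℝ)+1)/((b:ℝ)-1))^2)
            *(((b:ℝ)/((b:ℝ)-1)) - ((d:ℝ)+3)/((k:ℝ)+1))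
          = ((k:ℝ)*((d:ℝ)+2)^3*((b:ℝ)-1)^3*((k:ℝ)+1) +
             ((d:ℝ)+4)*(b:ℝ)^3*(((b:ℝ)-1)^2+((d:ℝ)+1)*((b:ℝ)-1)+((d:ℝ)+1)^2)
               *((b:ℝ)*((k:ℝ)+1)-((d:ℝ)+3)*((b:ℝ)-1)))
            / (((d:ℝ)+4)*(b:ℝ)^3*((b:ℝ)-1)^3*((k:ℝ)+1)) := by
        rw [eq_div_iff (ne_of_gt hden)]
        field_simp
      rw [heq, div_le_one hden]
      exact hkeyR
    have hvXw : ((b:ℝ)/((b:ℝ)-1))^(d+1)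
        ≤ 1+((d:ℝ)+1)/((b:ℝ)-1)+(((d:ℝ)+1)/((b:ℝ)-1))^2 := by
      have hq2b : ((d+1 : ℕ):ℝ) * (1/((b:ℝ)-1)) ≤ 1 := by
        rw [mul_one_div, div_le_one hb1]
        have hnat : (d+1) + 1 ≤ b := by omega
        have hcc : ((d+1 : ℕ):ℝ) + 1 ≤ (b:ℝ) := by exact_mod_cast hnat
        linarith
      have hp := one_add_pow_le (1/((b:ℝ)-1)) (by positivity) (d+1) hq2b
      have hveq : ((d:ℝ)+1)/((b:ℝ)-1) = ((d+1:ℕ):ℝ) * (1/((b:ℝ)-1)) := by push_cast; ring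
      rw [hXeq, hveq]
      exact hp
    have hBpos : 0 ≤ (Nat.choose (k+3+d) k : ℝ) * ((b:ℝ)/((b:ℝ)-1)) - (Nat.choose (k+3+d) (k+1) : ℝ) := by
      linarith
    have h7 : ((b:ℝ)/((b:ℝ)-1))^(d+1)
          * ((Nat.choose (k+3+d) k : ℝ) * ((b:ℝ)/((b:ℝ)-1)) - (Nat.choose (k+3+d) (k+1) : ℝ))
        ≤ (1+((d:ℝ)+1)/((b:ℝ)-1)+(((d:ℝ)+1)/((b:ℝ)-1))^2)
          * ((Nat.choose (k+3+d) k : ℝ) * ((b:ℝ)/((b:ℝ)-1)) - (Nat.choose (k+3+d) (k+1) : ℝ)) :=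
      mul_le_mul_of_nonneg_right hvXw hBpos
    have h8 : (Nat.choose (k+3+d) k : ℝ) * ((b:ℝ)/((b:ℝ)-1)) - (Nat.choose (k+3+d) (k+1) : ℝ)
        = (Nat.choose (k+3+d) k : ℝ) * (((b:ℝ)/((b:ℝ)-1)) - ((d:ℝ)+3)/((k:ℝ)+1)) := by
      have hCk1eq : (Nat.choose (k+3+d) (k+1) : ℝ)
          = (Nat.choose (k+3+d) k : ℝ) * ((d:ℝ)+3) / ((k:ℝ)+1) := by
        field_simp
        linarith [hC]
      rw [hCk1eq]
      field_simp
    have h9 : (Nat.choose (k+3+d) k : ℝ)*((k:ℝ)*((d:ℝ)+2)^3/(((d:ℝ)+4)*(b:ℝ)^3))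
        + (Nat.choose (k+3+d) k : ℝ)
          *((1+((d:ℝ)+1)/((b:ℝ)-1)+(((d:ℝ)+1)/((b:ℝ)-1))^2)
            *(((b:ℝ)/((b:ℝ)-1)) - ((d:ℝ)+3)/((k:ℝ)+1)))
        ≤ (Nat.choose (k+3+d) k : ℝ) := by
      have h := mul_le_mul_of_nonneg_left hfrac hCkpos.le
      rw [mul_add, mul_one] at h
      exact h
    have h10 : (Nat.choose (k+3+d) k : ℝ)*((b:ℝ)/((b:ℝ)-1))^(d+2)
        = ((b:ℝ)/((b:ℝ)-1))^(d+1)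
            *((Nat.choose (k+3+d) k : ℝ) * ((b:ℝ)/((b:ℝ)-1)) - (Nat.choose (k+3+d) (k+1) : ℝ))
          + (Nat.choose (k+3+d) (k+1) : ℝ)*((b:ℝ)/((b:ℝ)-1))^(d+1) := by
      rw [show d+2 = (d+1)+1 from rfl, pow_succ]
      ring
    have h11 : (1+((d:ℝ)+1)/((b:ℝ)-1)+(((d:ℝ)+1)/((b:ℝ)-1))^2)
          * ((Nat.choose (k+3+d) k : ℝ) * ((b:ℝ)/((b:ℝ)-1)) - (Nat.choose (k+3+d) (k+1) : ℝ))
        = (Nat.choose (k+3+d) k : ℝ)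
          *((1+((d:ℝ)+1)/((b:ℝ)-1)+(((d:ℝ)+1)/((b:ℝ)-1))^2)
            *(((b:ℝ)/((b:ℝ)-1)) - ((d:ℝ)+3)/((k:ℝ)+1))) := by
      rw [h8]
      ring
    linarith [hsum, h7, h9, h10, h11]

end ClaimG12Aux

/-- For integers `s ≥ 3`, `b ≥ s`, and every odd `m` with `3 ≤ m ≤ 2s−3`,
`G(m,s) ≥ G(m−2,s)`; i.e. `G(·,s)` is decreasing over odd `m` from `2s−3` down to `1`. -/
theorem claim_G12_monotone (b s : ℕ) (hs : 3 ≤ s) (hbs : s ≤ b) :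
    ∀ m : ℕ, Odd m → 3 ≤ m → m ≤ 2 * s - 3 → G12 b s (m - 2) ≤ G12 b s m := by
  intro m hm h3m hm2
  obtain ⟨t, rfl⟩ := hm
  obtain ⟨k, rfl⟩ : ∃ k, t = k+1 := ⟨t-1, by omega⟩
  rw [show 2*(k+1)+1-2 = 2*k+1 from by omega]
  unfold G12
  rw [show (2*k+1-1)/2 = k from by omega,
      show (2*(k+1)+1-1)/2 = k+1 from by omega,
      show s-(k+1)-1 = s-k-2 from by omega]
  rw [ClaimG12Aux.filter_sum b s k, ClaimG12Aux.filter_sum b s (k+1)]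
  rw [Finset.sum_range_succ (fun j => (Nat.choose s j : ℝ)) k]
  have hS1 : 0 ≤ ∑ j ∈ Finset.range (k+1), (Nat.choose s j : ℝ) * hSJ b s j (2*(k+1)+1) :=
    Finset.sum_nonneg (fun j _ =>
      mul_nonneg (Nat.cast_nonneg _) (ClaimG12Aux.hSJ_nonneg b s j _ (by omega)))
  have hM := ClaimG12Aux.master b s k hs hbs (by omega)
  linarith [hS1, hM]
end

section
/- Let w, ℓ be integers with 2 ≤ w ≤ ℓ. Let X = (x_{i,j}) be a w × ℓ real matrix with x_{i,j} ≥ 0 and x_{i,j} > 0 if and only if i + j ≤ ℓ + 1. Assume X satisfies the decreasing-row-sums condition Σ_{j=1}^{ℓ} x_{1,j} ≥ Σ_{j=1}^{ℓ−1} x_{2,j} ≥ ⋯ ≥ Σ_{j=1}^{ℓ−w+1} x_{w,j}, and the increasing-within-column condition x_{1,j} ≤ x_{2,j} ≤ ⋯ ≤ x_{min(w, ℓ−j+1), j} for each j = 1,…,ℓ. Let A = (α_{i,j}) be a w × ℓ weight matrix, i.e. α_{i,j} ≥ 0, Σ_{i=1}^{w} α_{i,j} = 1 for every j, and the partial column sums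 A_{i,j} := Σ_{k=1}^{i} α_{k,j} satisfy A_{i,j} ≥ A_{i,j+1} for all 1 ≤ i ≤ w and 1 ≤ j ≤ ℓ−1. Then Σ_{i=1}^{w} Σ_{j=1}^{ℓ−i+1} α_{i,j} x_{i,j} ≤ Σ_{j=1}^{ℓ} x_{1,j}. -/
open Finset

private lemma abel_aux (f g : ℕ → ℝ) :
    ∀ n, 1 ≤ n → ∑ i ∈ Icc 1 n, f i * g i =
      (∑ i ∈ Icc 1 n, f i) * g n +
        ∑ i ∈ Ico 1 n, (∑ k ∈ Icc 1 i, f k) * (g i - g (i + 1)) := by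
  intro n hn
  induction n, hn using Nat.le_induction with
  | base => simp
  | succ n hn ih =>
      rw [Finset.sum_Icc_succ_top (by omega), Finset.sum_Icc_succ_top (by omega),
        Finset.sum_Ico_succ_top (by omega), ih]
      ring

private lemma tel_aux (g : ℕ → ℝ) :
    ∀ n, 1 ≤ n → g 1 = g n + ∑ i ∈ Ico 1 n, (g i - g (i + 1)) := by
  intro n hn
  induction n, hn using Nat.le_induction with
  | base => simp
  | succ n hn ih =>
      rw [Finset.sum_Ico_succ_top (by omega)]
      rw [ih]; ring

/-- Weighted-sums optimization lemma: let `2 ≤ w ≤ l`, let `x` be a `w × l` matrix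
(1-based indices) of nonnegative reals with `x i j > 0 ↔ i + j ≤ l + 1`, satisfying the
decreasing-row-sums condition `Σ_{j=1}^{l-i+1} x i j` decreasing in `i`, and the
increasing-within-column condition `x 1 j ≤ x 2 j ≤ ⋯ ≤ x (min w (l-j+1)) j`. Let `α` be a
`w × l` weight matrix: nonnegative entries with unit column sums whose partial column sums
`A_{i,j} = Σ_{k=1}^i α k j` satisfy `A_{i,j} ≥ A_{i,j+1}`. Then
`Σ_{i=1}^{w} Σ_{j=1}^{l-i+1} α i j * x i j ≤ Σ_{j=1}^{l} x 1 j`. -/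
theorem claim_weighted_sums (w l : ℕ) (hw : 2 ≤ w) (hwl : w ≤ l)
    (x α : ℕ → ℕ → ℝ)
    (hx0 : ∀ i j, 1 ≤ i → i ≤ w → 1 ≤ j → j ≤ l → 0 ≤ x i j)
    (hxpos : ∀ i j, 1 ≤ i → i ≤ w → 1 ≤ j → j ≤ l → (0 < x i j ↔ i + j ≤ l + 1))
    (hrow : ∀ i, 1 ≤ i → i + 1 ≤ w →
      ∑ j ∈ Finset.Icc 1 (l - (i + 1) + 1), x (i + 1) j ≤
        ∑ j ∈ Finset.Icc 1 (l - i + 1), x i j)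
    (hcol : ∀ i j, 1 ≤ i → i + 1 ≤ min w (l - j + 1) → 1 ≤ j → j ≤ l →
      x i j ≤ x (i + 1) j)
    (hα0 : ∀ i j, 1 ≤ i → i ≤ w → 1 ≤ j → j ≤ l → 0 ≤ α i j)
    (hαsum : ∀ j, 1 ≤ j → j ≤ l → ∑ i ∈ Finset.Icc 1 w, α i j = 1)
    (hαdec : ∀ i j, 1 ≤ i → i ≤ w → 1 ≤ j → j + 1 ≤ l →
      ∑ k ∈ Finset.Icc 1 i, α k (j + 1) ≤ ∑ k ∈ Finset.Icc 1 i, α k j) :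
    ∑ i ∈ Finset.Icc 1 w, ∑ j ∈ Finset.Icc 1 (l - i + 1), α i j * x i j ≤
      ∑ j ∈ Finset.Icc 1 l, x 1 j := by
  -- vanishing beyond the anti-diagonal
  have hz : ∀ i j, 1 ≤ i → i ≤ w → 1 ≤ j → j ≤ l → l + 1 < i + j → x i j = 0 := by
    intro i j h1 h2 h3 h4 h5
    rcases (hx0 i j h1 h2 h3 h4).lt_or_eq with h | h
    · exact absurd ((hxpos i j h1 h2 h3 h4).mp h) (by omega)
    · exact h.symm
  -- extend the inner sums to full rows
  have hext : ∀ i ∈ Icc 1 w, ∑ j ∈ Icc 1 (l - i + 1), α i j * x i j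
      = ∑ j ∈ Icc 1 l, α i j * x i j := by
    intro i hi
    simp only [mem_Icc] at hi
    apply Finset.sum_subset
    · intro j hj; simp only [mem_Icc] at *; omega
    · intro j hj hj'
      simp only [mem_Icc] at hj hj'
      rw [hz i j hi.1 hi.2 hj.1 hj.2 (by omega), mul_zero]
  rw [Finset.sum_congr rfl hext, Finset.sum_comm]
  -- Abel summation per column
  have habel : ∀ j ∈ Icc 1 l, ∑ i ∈ Icc 1 w, α i j * x i j =
      x w j + ∑ i ∈ Ico 1 w, (∑ k ∈ Icc 1 i, α k j) * (x i j - x (i + 1) j) := by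
    intro j hj
    simp only [mem_Icc] at hj
    rw [abel_aux (fun i => α i j) (fun i => x i j) w (by omega),
      hαsum j hj.1 hj.2, one_mul]
  have htel : ∀ j ∈ Icc 1 l, x 1 j =
      x w j + ∑ i ∈ Ico 1 w, (x i j - x (i + 1) j) := fun j _ =>
    tel_aux (fun i => x i j) w (by omega)
  calc ∑ j ∈ Icc 1 l, ∑ i ∈ Icc 1 w, α i j * x i j
      = ∑ j ∈ Icc 1 l, (x w j + ∑ i ∈ Ico 1 w,
          (∑ k ∈ Icc 1 i, α k j) * (x i j - x (i + 1) j)) :=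
        Finset.sum_congr rfl habel
    _ ≤ ∑ j ∈ Icc 1 l, (x w j + ∑ i ∈ Ico 1 w, (x i j - x (i + 1) j)) := by
        rw [Finset.sum_add_distrib, Finset.sum_add_distrib]
        apply add_le_add_right
        rw [Finset.sum_comm]
        conv_rhs => rw [Finset.sum_comm]
        apply Finset.sum_le_sum
        intro i hi
        simp only [mem_Ico] at hi
        obtain ⟨hi1, hi2⟩ := hi
        set m := l - i + 1 with hm
        have hm1 : 1 ≤ m := by omega
        have hml : m ≤ l := by omega
        -- A i m ≤ 1
        have hA1 : ∑ k ∈ Icc 1 i, α k m ≤ 1 := by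
          rw [← hαsum m hm1 hml]
          apply Finset.sum_le_sum_of_subset_of_nonneg
          · intro k hk; simp only [mem_Icc] at *; omega
          · intro k hk _; simp only [mem_Icc] at hk; exact hα0 k m hk.1 hk.2 hm1 hml
        -- monotonicity of partial column sums
        have hAmon : ∀ j, 1 ≤ j → j ≤ m → ∑ k ∈ Icc 1 i, α k m ≤ ∑ k ∈ Icc 1 i, α k j := by
          intro j hj1 hjm
          have key : ∀ n, j ≤ n → n ≤ m → ∑ k ∈ Icc 1 i, α k n ≤ ∑ k ∈ Icc 1 i, α k j := by
            intro n hn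
            induction n, hn using Nat.le_induction with
            | base => intro _; exact le_refl _
            | succ n hn ih =>
                intro hnm
                exact le_trans (hαdec i n hi1 (by omega) (by omega) (by omega)) (ih (by omega))
          exact key m hjm le_rfl
        -- differences are nonpositive strictly inside
        have hdneg : ∀ j, 1 ≤ j → j < m → x i j - x (i + 1) j ≤ 0 := by
          intro j hj1 hjm
          have := hcol i j hi1 (le_min (by omega) (by omega)) hj1 (by omega)
          linarith
        rw [← sub_nonneg, ← Finset.sum_sub_distrib]
        have key : ∀ j ∈ Icc 1 l,
            (if j ≤ m then (1 - ∑ k ∈ Icc 1 i, α k m) * (x i j - x (i + 1) j) else 0)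
              ≤ (x i j - x (i + 1) j) - (∑ k ∈ Icc 1 i, α k j) * (x i j - x (i + 1) j) := by
          intro j hj
          simp only [mem_Icc] at hj
          by_cases hjm : j ≤ m
          · rw [if_pos hjm]
            rcases hjm.lt_or_eq with h | h
            · have hd := hdneg j hj.1 h
              have hAm := hAmon j hj.1 hjm
              nlinarith [mul_nonneg (sub_nonneg.2 hAm) (neg_nonneg.2 hd)]
            · rw [h]
              have : (1 - ∑ k ∈ Icc 1 i, α k m) * (x i m - x (i + 1) m)
                  = (x i m - x (i + 1) m) - (∑ k ∈ Icc 1 i, α k m) * (x i m - x (i + 1) m) := by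
                ring
              rw [this]
          · rw [if_neg hjm]
            have h1 : x i j = 0 := hz i j hi1 (by omega) hj.1 hj.2 (by omega)
            have h2 : x (i + 1) j = 0 := hz (i + 1) j (by omega) (by omega) hj.1 hj.2 (by omega)
            rw [h1, h2]
            simp
        calc (0:ℝ)
            ≤ (1 - ∑ k ∈ Icc 1 i, α k m) * ∑ j ∈ Icc 1 m, (x i j - x (i + 1) j) := by
              apply mul_nonneg (by linarith)
              rw [Finset.sum_sub_distrib]
              have e1 : ∑ j ∈ Icc 1 m, x (i + 1) j
                  = ∑ j ∈ Icc 1 (l - (i + 1) + 1), x (i + 1) j := by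
                have hmeq : m = (l - (i + 1) + 1) + 1 := by omega
                rw [hmeq, Finset.sum_Icc_succ_top (by omega),
                  hz (i + 1) ((l - (i + 1) + 1) + 1) (by omega) (by omega) (by omega)
                    (by omega) (by omega), add_zero]
              rw [e1]
              have := hrow i hi1 (by omega)
              linarith
          _ = ∑ j ∈ Icc 1 l,
                (if j ≤ m then (1 - ∑ k ∈ Icc 1 i, α k m) * (x i j - x (i + 1) j) else 0) := by
              rw [← Finset.sum_filter]
              have hf : (Icc 1 l).filter (· ≤ m) = Icc 1 m := by
                ext j; simp only [mem_Icc, mem_filter]; omega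
              rw [hf, Finset.mul_sum]
          _ ≤ ∑ j ∈ Icc 1 l, ((x i j - x (i + 1) j)
                - (∑ k ∈ Icc 1 i, α k j) * (x i j - x (i + 1) j)) :=
              Finset.sum_le_sum key
    _ = ∑ j ∈ Icc 1 l, x 1 j :=
        Finset.sum_congr rfl (fun j hj => (htel j hj).symm)
end

section
/- Let b, s, k be integers with b ≥ s ≥ 2 and 0 ≤ k < s, and set Q(b,k,s) := Σ_{j=0}^{k} (−1)^j · binom(s,j) · (b^{k−j} − 1). Then: Q(b,k,s) ≤ b^k · ((b−1)/b)^s if k is even; Q(b,k,s) ≤ b^k · ((b−1)/b)^s + binom(s−1,k) if k > 1 is odd; and Q(b,k,s) = b − 1 if k = 1. -/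
open Finset

/-- `Q(b,k,s) := Σ_{j=0}^{k} (−1)^j C(s,j) (b^{k−j} − 1)`. -/
noncomputable def Qbks (b k s : ℕ) : ℝ :=
  ∑ j ∈ Finset.range (k + 1),
    (-1 : ℝ) ^ j * (Nat.choose s j : ℝ) * ((b : ℝ) ^ (k - j) - 1)

/-- Bound on finite alternating sums with antitone nonnegative terms. -/
lemma alt_sum_bound : ∀ (n : ℕ) (g : ℕ → ℝ), (∀ i, 0 ≤ g i) → (∀ i, g (i + 1) ≤ g i) →
    0 ≤ (∑ i ∈ Finset.range n, (-1 : ℝ) ^ i * g i) ∧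
      (∑ i ∈ Finset.range n, (-1 : ℝ) ^ i * g i) ≤ g 0 := by
  intro n
  induction n with
  | zero => intro g h0 _; simpa using h0 0
  | succ n ih =>
    intro g h0 hmono
    obtain ⟨ih1, ih2⟩ := ih (fun i => g (i + 1)) (fun i => h0 _) (fun i => hmono _)
    rw [Finset.sum_range_succ']
    have hre : ∑ i ∈ Finset.range n, (-1 : ℝ) ^ (i + 1) * g (i + 1)
        = -∑ i ∈ Finset.range n, (-1 : ℝ) ^ i * g (i + 1) := by
      rw [← Finset.sum_neg_distrib]
      exact Finset.sum_congr rfl fun i _ => by ring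
    rw [hre]
    have := hmono 0
    constructor <;> simp only [pow_zero, one_mul] <;> linarith

/-- Partial alternating sum of binomial coefficients. -/
lemma alt_choose_sum (s : ℕ) (hs : 1 ≤ s) (k : ℕ) :
    ∑ j ∈ Finset.range (k + 1), (-1 : ℝ) ^ j * (Nat.choose s j : ℝ)
      = (-1 : ℝ) ^ k * (Nat.choose (s - 1) k : ℝ) := by
  obtain ⟨t, rfl⟩ : ∃ t, s = t + 1 := ⟨s - 1, (Nat.succ_pred_eq_of_pos hs).symm⟩
  induction k with
  | zero => simp
  | succ k ihk =>
    rw [Finset.sum_range_succ, ihk]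
    simp only [Nat.add_sub_cancel] at *
    rw [Nat.choose_succ_succ t k]
    push_cast
    ring

/-- For integers `b ≥ s ≥ 2` and `0 ≤ k < s`:
`Q(b,k,s) ≤ b^k ((b−1)/b)^s` if `k` is even;
`Q(b,k,s) ≤ b^k ((b−1)/b)^s + C(s−1,k)` if `k > 1` is odd;
and `Q(b,k,s) = b − 1` if `k = 1`. -/
theorem claim_Qbks_bound (b s k : ℕ) (hs : 2 ≤ s) (hbs : s ≤ b) (hk : k < s) :
    (Even k → Qbks b k s ≤ (b : ℝ) ^ k * (((b : ℝ) - 1) / (b : ℝ)) ^ s) ∧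
    (Odd k → 1 < k →
      Qbks b k s ≤ (b : ℝ) ^ k * (((b : ℝ) - 1) / (b : ℝ)) ^ s + (Nat.choose (s - 1) k : ℝ)) ∧
    (k = 1 → Qbks b k s = (b : ℝ) - 1) := by
  set x : ℝ := (b : ℝ) with hxdef
  have hb2 : 2 ≤ b := le_trans hs hbs
  have hx2 : (2 : ℝ) ≤ x := by rw [hxdef]; exact_mod_cast hb2
  have hx : (0 : ℝ) < x := by linarith
  have hxne : x ≠ 0 := ne_of_gt hx
  -- Step 1: rewrite Q.
  have hQ : Qbks b k s
      = (∑ j ∈ Finset.range (k + 1), (-1 : ℝ) ^ j * (Nat.choose s j : ℝ) * (x ^ k / x ^ j))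
        - (-1 : ℝ) ^ k * (Nat.choose (s - 1) k : ℝ) := by
    rw [← alt_choose_sum s (by omega) k, Qbks, ← Finset.sum_sub_distrib]
    refine Finset.sum_congr rfl fun j hj => ?_
    have hjk : j ≤ k := Nat.lt_succ_iff.mp (Finset.mem_range.mp hj)
    have hpow : x ^ (k - j) = x ^ k / x ^ j := by
      rw [eq_div_iff (pow_ne_zero _ hxne), ← pow_add, Nat.sub_add_cancel hjk]
    rw [hpow]; ring
  -- Step 2: binomial expansion.
  have hbinom : x ^ k * ((x - 1) / x) ^ s
      = ∑ j ∈ Finset.range (s + 1), (-1 : ℝ) ^ j * (Nat.choose s j : ℝ) * (x ^ k / x ^ j) := by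
    have h1 : (x - 1) / x = (-(1 / x)) + 1 := by field_simp; ring
    rw [h1, add_pow, Finset.mul_sum]
    refine Finset.sum_congr rfl fun j _ => ?_
    rw [neg_pow, one_pow, div_pow, one_pow]
    ring
  -- Step 3: split the sum.
  have hsplit : ∑ j ∈ Finset.range (s + 1), (-1 : ℝ) ^ j * (Nat.choose s j : ℝ) * (x ^ k / x ^ j)
      = (∑ j ∈ Finset.range (k + 1), (-1 : ℝ) ^ j * (Nat.choose s j : ℝ) * (x ^ k / x ^ j))
        + ∑ i ∈ Finset.range (s - k),
            (-1 : ℝ) ^ (k + 1 + i) * (Nat.choose s (k + 1 + i) : ℝ) * (x ^ k / x ^ (k + 1 + i)) := by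
    have h : s + 1 = (k + 1) + (s - k) := by omega
    rw [h, Finset.sum_range_add]
  set g : ℕ → ℝ := fun i => (Nat.choose s (k + 1 + i) : ℝ) * (x ^ k / x ^ (k + 1 + i)) with hgdef
  have hg0 : ∀ i, 0 ≤ g i := fun i => by positivity
  have hgmono : ∀ i, g (i + 1) ≤ g i := by
    intro i
    have hnat : (Nat.choose s (k + 1 + (i + 1)) : ℝ) ≤ x * (Nat.choose s (k + 1 + i) : ℝ) := by
      have h1 : Nat.choose s (k + 1 + i + 1) ≤ Nat.choose s (k + 1 + i + 1) * (k + 1 + i + 1) :=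
        Nat.le_mul_of_pos_right _ (by omega)
      have h2 : Nat.choose s (k + 1 + i + 1) * (k + 1 + i + 1)
          = Nat.choose s (k + 1 + i) * (s - (k + 1 + i)) := Nat.choose_succ_right_eq s (k + 1 + i)
      have h3 : Nat.choose s (k + 1 + i) * (s - (k + 1 + i)) ≤ Nat.choose s (k + 1 + i) * b :=
        Nat.mul_le_mul_left _ (by omega)
      have : Nat.choose s (k + 1 + (i + 1)) ≤ Nat.choose s (k + 1 + i) * b := by
        have : k + 1 + (i + 1) = k + 1 + i + 1 := by omega
        rw [this]; omega
      calc (Nat.choose s (k + 1 + (i + 1)) : ℝ) ≤ (Nat.choose s (k + 1 + i) * b : ℕ) := by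
            exact_mod_cast this
        _ = x * (Nat.choose s (k + 1 + i) : ℝ) := by push_cast; ring
    simp only [hgdef]
    rw [mul_div_assoc', mul_div_assoc', div_le_div_iff₀ (by positivity) (by positivity)]
    have hexp : x ^ (k + 1 + (i + 1)) = x ^ (k + 1 + i) * x := by
      rw [show k + 1 + (i + 1) = (k + 1 + i) + 1 from by omega, pow_succ]
    rw [hexp]
    nlinarith [mul_le_mul_of_nonneg_right hnat
      (show (0 : ℝ) ≤ x ^ k * x ^ (k + 1 + i) by positivity)]
  have htail : ∑ i ∈ Finset.range (s - k),
      (-1 : ℝ) ^ (k + 1 + i) * (Nat.choose s (k + 1 + i) : ℝ) * (x ^ k / x ^ (k + 1 + i))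
      = (-1 : ℝ) ^ (k + 1) * ∑ i ∈ Finset.range (s - k), (-1 : ℝ) ^ i * g i := by
    rw [Finset.mul_sum]
    refine Finset.sum_congr rfl fun i _ => ?_
    simp only [hgdef]
    rw [pow_add]
    ring
  obtain ⟨hA0, hA1⟩ := alt_sum_bound (s - k) g hg0 hgmono
  set A : ℝ := ∑ i ∈ Finset.range (s - k), (-1 : ℝ) ^ i * g i with hAdef
  have hgzero : g 0 = (Nat.choose s (k + 1) : ℝ) / x := by
    simp only [hgdef]
    rw [Nat.add_zero, pow_succ]
    field_simp
  rw [hgzero] at hA1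
  -- key inequality C(s,k+1) ≤ x * C(s-1,k)
  have hCle : (Nat.choose s (k + 1) : ℝ) ≤ x * (Nat.choose (s - 1) k : ℝ) := by
    have hnat : Nat.choose s (k + 1) ≤ b * Nat.choose (s - 1) k := by
      have h1 : Nat.succ (s - 1) * Nat.choose (s - 1) k
          = Nat.choose (Nat.succ (s - 1)) (Nat.succ k) * Nat.succ k :=
        Nat.add_one_mul_choose_eq (s - 1) k
      have hss : Nat.succ (s - 1) = s := by omega
      rw [hss] at h1
      simp only [Nat.succ_eq_add_one] at h1
      have h2 : Nat.choose s (k + 1) ≤ Nat.choose s (k + 1) * (k + 1) :=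
        Nat.le_mul_of_pos_right _ (by omega)
      have h3 : s * Nat.choose (s - 1) k ≤ b * Nat.choose (s - 1) k :=
        Nat.mul_le_mul_right _ hbs
      omega
    calc (Nat.choose s (k + 1) : ℝ) ≤ (b * Nat.choose (s - 1) k : ℕ) := by exact_mod_cast hnat
      _ = x * (Nat.choose (s - 1) k : ℝ) := by push_cast; ring
  have hQfinal : Qbks b k s = x ^ k * ((x - 1) / x) ^ s
      - (-1 : ℝ) ^ (k + 1) * A - (-1 : ℝ) ^ k * (Nat.choose (s - 1) k : ℝ) := by
    rw [hQ, hbinom, hsplit, htail, hAdef]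
    ring
  have hAC : A ≤ (Nat.choose (s - 1) k : ℝ) := by
    refine hA1.trans ?_
    rw [div_le_iff₀ hx]
    linarith [hCle]
  refine ⟨?_, ?_, ?_⟩
  · intro hkeven
    have h1 : (-1 : ℝ) ^ k = 1 := hkeven.neg_one_pow
    have h2 : (-1 : ℝ) ^ (k + 1) = -1 := by rw [pow_succ, h1]; ring
    rw [hQfinal, h1, h2]
    linarith
  · intro hkodd _
    have h1 : (-1 : ℝ) ^ k = -1 := hkodd.neg_one_pow
    have h2 : (-1 : ℝ) ^ (k + 1) = 1 := by rw [pow_succ, h1]; ring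
    rw [hQfinal, h1, h2]
    linarith
  · intro hk1
    subst hk1
    rw [Qbks]
    rw [Finset.sum_range_succ, Finset.sum_range_succ, Finset.sum_range_zero]
    simp
    exact hxdef.symm
end
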